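/- arXiv:1607.03698 — 7 statements merged into one kernel-verified Lean document; each statement's English description precedes it below -/
import Mathlib

section
/- For every b ≥ 0, the random vector V(b) = (V_1(b), …, V_n(b)) of leave-one-out estimates lies almost surely in the scaled regular permutohedron Π_n; equivalently, with probability one the vector V(b) is contained in the convex hull of all permutations of the vector (1, (n−2)/(n−1), (n−3)/(n−1), …, 1/(n−1), 0). -/
open MeasureTheory ProbabilityTheory

/-- The permutohedron `P_m(x)`: the convex hull of all vectors obtained from `x`
by permuting its coordinates. -/
noncomputable def permutohedron (m : ℕ) (x : Fin m → ℝ) : Set (Fin m → ℝ) :=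
  convexHull ℝ {y | ∃ σ : Equiv.Perm (Fin m), ∀ i, y i = x (σ i)}

/-- `K_b`: scaled kernel distribution function, with `K_0(z) = 1{z ≥ 0}`. -/
noncomputable def scaledKernelDF (K : ℝ → ℝ) (b : ℝ) (z : ℝ) : ℝ :=
  if 0 < b then K (z / b) else if 0 ≤ z then 1 else 0

open Finset in
lemma mem_perm_core {n : ℕ} (hn : 2 ≤ n) (a : Fin n → Fin n → ℝ)
    (h0 : ∀ i j, 0 ≤ a i j) (hsum : ∀ i j, i ≠ j → a i j + a j i = 1) :
    (fun i : Fin n => ((n : ℝ) - 1)⁻¹ * ∑ j ∈ Finset.univ.erase i, a i j)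
      ∈ permutohedron n (fun i => ((n : ℝ) - 1 - (i : ℕ)) / ((n : ℝ) - 1)) := by
  classical
  set x : Fin n → ℝ := fun i => ((n : ℝ) - 1 - (i : ℕ)) / ((n : ℝ) - 1) with hx
  set y : Fin n → ℝ := fun i => ((n : ℝ) - 1)⁻¹ * ∑ j ∈ Finset.univ.erase i, a i j with hy
  have hn1 : (0 : ℝ) < (n : ℝ) - 1 := by
    have : (2 : ℝ) ≤ (n : ℝ) := by exact_mod_cast hn
    linarith
  set S : Set (Fin n → ℝ) := {z | ∃ σ : Equiv.Perm (Fin n), ∀ i, z i = x (σ i)} with hS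
  have hSeq : S = Set.range (fun σ : Equiv.Perm (Fin n) => fun i => x (σ i)) := by
    ext z
    simp only [hS, Set.mem_setOf_eq, Set.mem_range]
    constructor
    · rintro ⟨σ, h⟩; exact ⟨σ, by ext i; exact (h i).symm⟩
    · rintro ⟨σ, h⟩; exact ⟨σ, fun i => by rw [← h]⟩
  have hSfin : S.Finite := by rw [hSeq]; exact Set.finite_range _
  by_contra hcon
  obtain ⟨F, u, hFs, hFy⟩ := geometric_hahn_banach_closed_point
    (convex_convexHull ℝ S) (hSfin.isClosed_convexHull (𝕜 := ℝ)) hcon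
  set c : Fin n → ℝ := fun i => F (fun j => if i = j then (1:ℝ) else 0) with hc
  have hFlin : ∀ z : Fin n → ℝ, F z = ∑ i, z i * c i := by
    intro z
    conv_lhs => rw [pi_eq_sum_univ z]
    simp [map_sum, smul_eq_mul, hc]
  -- sorting permutation
  set π : Equiv.Perm (Fin n) := (Tuple.sort c)⁻¹ with hπ
  have hmono : ∀ i j : Fin n, π i < π j → c i ≤ c j := by
    intro i j hij
    have := Tuple.monotone_sort c (le_of_lt hij)
    simpa [hπ, Function.comp] using this
  -- the double sum
  set A : ℝ := ∑ i, ∑ j ∈ Finset.univ.erase i, c i * a i j with hA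
  have hFy' : F y = ((n : ℝ) - 1)⁻¹ * A := by
    rw [hFlin, hA, Finset.mul_sum]
    refine Finset.sum_congr rfl fun i _ => ?_
    simp only [hy, Finset.mul_sum, Finset.sum_mul]
    exact Finset.sum_congr rfl fun j _ => by ring
  -- rewrite A as a sum over the product
  set g : Fin n × Fin n → ℝ := fun p => if p.1 ≠ p.2 then c p.1 * a p.1 p.2 else 0 with hg
  have hA2 : A = ∑ p ∈ Finset.univ ×ˢ Finset.univ, g p := by
    rw [Finset.sum_product, hA]
    refine Finset.sum_congr rfl fun i _ => ?_
    rw [← Finset.filter_ne' Finset.univ i, Finset.sum_filter]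
    refine Finset.sum_congr rfl fun j _ => ?_
    simp [hg, ne_comm]
  set T : Finset (Fin n × Fin n) :=
    (Finset.univ ×ˢ Finset.univ).filter (fun p => π p.1 < π p.2) with hT
  have hA3 : A = ∑ p ∈ T, (g p + g p.swap) := by
    rw [hA2, ← Finset.sum_filter_add_sum_filter_not (Finset.univ ×ˢ Finset.univ)
      (fun p => π p.1 < π p.2) g, Finset.sum_add_distrib]
    congr 1
    have h1 : (Finset.univ ×ˢ Finset.univ).filter (fun p => ¬ π p.1 < π p.2)
        = ((Finset.univ ×ˢ Finset.univ).filter (fun p => π p.2 < π p.1)) ∪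
          ((Finset.univ ×ˢ Finset.univ).filter (fun p => p.1 = p.2)) := by
      ext p
      simp only [Finset.mem_filter, Finset.mem_union]
      constructor
      · rintro ⟨hp, h⟩
        rcases lt_trichotomy (π p.1) (π p.2) with h' | h' | h'
        · exact absurd h' h
        · exact Or.inr ⟨hp, π.injective (Fin.ext (Fin.val_eq_of_eq h'))⟩
        · exact Or.inl ⟨hp, h'⟩
      · rintro (⟨hp, h⟩ | ⟨hp, h⟩)
        · exact ⟨hp, not_lt_of_gt h⟩
        · exact ⟨hp, by simp [h]⟩
    rw [h1, Finset.sum_union]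
    · have h2 : ∑ p ∈ (Finset.univ ×ˢ Finset.univ).filter (fun p => p.1 = p.2), g p = 0 := by
        refine Finset.sum_eq_zero fun p hp => ?_
        simp only [Finset.mem_filter] at hp
        simp [hg, hp.2]
      rw [h2, add_zero]
      refine Finset.sum_nbij' (i := Prod.swap) (j := Prod.swap) ?_ ?_ ?_ ?_ ?_
      · intro p hp; simp only [Finset.mem_filter, hT] at hp ⊢; exact ⟨by simp, hp.2⟩
      · intro p hp; simp only [Finset.mem_filter, hT] at hp ⊢; exact ⟨by simp, hp.2⟩
      · intro p _; simp
      · intro p _; simp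
      · intro p _; rfl
    · rw [Finset.disjoint_filter]
      intro p _ h h2
      rw [h2] at h
      exact lt_irrefl _ h
  have hbound : A ≤ ∑ p ∈ T, c p.2 := by
    rw [hA3]
    refine Finset.sum_le_sum fun p hp => ?_
    simp only [hT, Finset.mem_filter] at hp
    have hne : p.1 ≠ p.2 := fun h => absurd (congrArg π h) (ne_of_lt hp.2)
    have hc12 : c p.1 ≤ c p.2 := hmono _ _ hp.2
    have hs := hsum p.1 p.2 hne
    have h01 := h0 p.1 p.2
    have h02 := h0 p.2 p.1
    simp only [hg, hne, Ne.symm hne, if_true, ne_eq, not_false_eq_true, Prod.fst_swap,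
      Prod.snd_swap]
    have key : c p.1 * a p.1 p.2 + c p.2 * a p.2 p.1
        = c p.2 - a p.1 p.2 * (c p.2 - c p.1) := by
      have h21 : a p.2 p.1 = 1 - a p.1 p.2 := by linarith
      rw [h21]; ring
    rw [key]
    have := mul_nonneg h01 (sub_nonneg.mpr hc12)
    linarith
  -- compute the bound
  have hcard : ∀ j : Fin n, (Finset.univ.filter (fun i => π i < π j)).card = (π j : ℕ) := by
    intro j
    have : Finset.univ.filter (fun i => π i < π j) = (Finset.Iio (π j)).image π.symm := by
      ext i
      simp only [Finset.mem_filter, Finset.mem_univ, true_and, Finset.mem_image,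
        Finset.mem_Iio]
      constructor
      · intro h; exact ⟨π i, h, by simp⟩
      · rintro ⟨m, hm, rfl⟩; simpa using hm
    rw [this, Finset.card_image_of_injective _ π.symm.injective, Fin.card_Iio]
  have hBval : ∑ p ∈ T, c p.2 = ∑ j, ((π j : ℕ) : ℝ) * c j := by
    rw [hT, Finset.sum_filter, Finset.sum_product, Finset.sum_comm]
    refine Finset.sum_congr rfl fun j _ => ?_
    rw [← Finset.sum_filter]
    have h5 : ∑ _i ∈ Finset.univ.filter (fun i => π i < π j), c j = ((π j : ℕ) : ℝ) * c j := by
      rw [Finset.sum_const, nsmul_eq_mul, hcard]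
    exact h5
  -- the permutation vector
  set w : Fin n → ℝ := fun i => x ((π.trans (Fin.revPerm)) i) with hw
  have hwS : w ∈ S := ⟨π.trans Fin.revPerm, fun i => rfl⟩
  have hFw : F w = ((n : ℝ) - 1)⁻¹ * ∑ j, ((π j : ℕ) : ℝ) * c j := by
    rw [hFlin, Finset.mul_sum]
    refine Finset.sum_congr rfl fun i _ => ?_
    have hval : (((π i).rev : ℕ) : ℝ) = (n : ℝ) - 1 - ((π i : ℕ) : ℝ) := by
      rw [Fin.val_rev]
      have h1 : (π i : ℕ) + 1 ≤ n := (π i).isLt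
      push_cast [Nat.cast_sub (by omega : (π i : ℕ) + 1 ≤ n)]
      ring
    simp only [hw, hx, Equiv.trans_apply, Fin.revPerm_apply, hval]
    field_simp
    ring
  have hle : F y ≤ F w := by
    rw [hFy', hFw, ← hBval]
    have := inv_nonneg.mpr (le_of_lt hn1)
    exact mul_le_mul_of_nonneg_left hbound this
  have h1 := hFs w (subset_convexHull ℝ S hwS)
  linarith [hFy, h1, hle]

/-- for i.i.d. observations `X_1, …, X_n` (`n ≥ 2`) with an absolutely
continuous distribution (bounded density `f`), a kernel `k` as in Assumption 2(a)
with `K(x) = ∫_{-∞}^x k`, and any `b ≥ 0`, the vector of leave-one-out estimates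
`V(b) = (V_1(b), …, V_n(b))`, `V_i(b) = (n-1)⁻¹ ∑_{j ≠ i} K_b(X_i - X_j)`, lies
almost surely in the scaled regular permutohedron
`Π_n = P_n(1, (n-2)/(n-1), …, 1/(n-1), 0)`. -/
theorem stmt0 {Ω : Type*} [MeasurableSpace Ω] (μ : Measure Ω) [IsProbabilityMeasure μ]
    (n : ℕ) (hn : 2 ≤ n) (X : Fin n → Ω → ℝ) (hXm : ∀ i, Measurable (X i))
    (hindep : iIndepFun X μ)
    (f : ℝ → ℝ) (hf0 : ∀ x, 0 ≤ f x) (hfbd : ∃ M, ∀ x, f x ≤ M)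
    (hfX : ∀ i, μ.map (X i) = volume.withDensity fun x => ENNReal.ofReal (f x))
    (k : ℝ → ℝ) (hkm : Measurable k) (hk0 : ∀ x, 0 ≤ k x)
    (hkbd : ∃ M, ∀ x, k x ≤ M) (hksym : ∀ x, k (-x) = k x) (hk1 : ∫ x, k x = 1)
    (b : ℝ) (hb : 0 ≤ b) :
    ∀ᵐ ω ∂μ,
      (fun i : Fin n => ((n : ℝ) - 1)⁻¹ *
          ∑ j ∈ Finset.univ.erase i,
            scaledKernelDF (fun x => ∫ t in Set.Iio x, k t) b (X i ω - X j ω))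
        ∈ permutohedron n (fun i => ((n : ℝ) - 1 - (i : ℕ)) / ((n : ℝ) - 1)) := by
  classical
  set K : ℝ → ℝ := fun x => ∫ t in Set.Iio x, k t with hK
  have hkint : Integrable k := by
    by_contra h
    rw [integral_undef h] at hk1
    norm_num at hk1
  have hK0 : ∀ z, 0 ≤ K z := fun z =>
    setIntegral_nonneg measurableSet_Iio fun x _ => hk0 x
  have hK1 : ∀ z, K z ≤ 1 := by
    intro z
    rw [← hk1]
    exact setIntegral_le_integral hkint (Filter.Eventually.of_forall hk0)
  have hKsum : ∀ z : ℝ, K z + K (-z) = 1 := by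
    intro z
    have h2 : K (-z) = ∫ t in Set.Ioi z, k t := by
      have e1 : K (-z) = ∫ t in Set.Iic (-z), k t :=
        setIntegral_congr_set Iio_ae_eq_Iic
      rw [e1, ← integral_comp_neg_Ioi]
      simp only [hksym]
    have h3 : K z = ∫ t in Set.Iic z, k t := setIntegral_congr_set Iio_ae_eq_Iic
    rw [h2, h3, ← hk1]
    exact intervalIntegral.integral_Iic_add_Ioi hkint.integrableOn hkint.integrableOn
  have hS0 : ∀ z, 0 ≤ scaledKernelDF K b z := by
    intro z
    unfold scaledKernelDF
    split_ifs with h1 h2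
    · exact hK0 _
    · norm_num
    · norm_num
  have hSsum : ∀ z : ℝ, z ≠ 0 →
      scaledKernelDF K b z + scaledKernelDF K b (-z) = 1 := by
    intro z hz
    unfold scaledKernelDF
    by_cases hbpos : 0 < b
    · rw [if_pos hbpos, if_pos hbpos, neg_div]
      exact hKsum (z / b)
    · rw [if_neg hbpos, if_neg hbpos]
      rcases lt_or_gt_of_ne hz with hlt | hgt
      · rw [if_neg (not_le.mpr hlt), if_pos (by linarith : (0:ℝ) ≤ -z)]
        norm_num
      · rw [if_pos (le_of_lt hgt), if_neg (by simp; linarith : ¬ (0:ℝ) ≤ -z)]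
        norm_num
  -- a.s. distinctness
  have hdist : ∀ i j : Fin n, i ≠ j → μ {ω | X i ω = X j ω} = 0 := by
    intro i j hij
    haveI hXi : IsProbabilityMeasure (μ.map (X i)) :=
      Measure.isProbabilityMeasure_map (hXm i).aemeasurable
    haveI hXj : IsProbabilityMeasure (μ.map (X j)) :=
      Measure.isProbabilityMeasure_map (hXm j).aemeasurable
    have hindij : IndepFun (X i) (X j) μ := hindep.indepFun hij
    have hmap : μ.map (fun ω => (X i ω, X j ω)) = (μ.map (X i)).prod (μ.map (X j)) :=
      (indepFun_iff_map_prod_eq_prod_map_map (hXm i).aemeasurable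
        (hXm j).aemeasurable).mp hindij
    have hdiag : MeasurableSet {p : ℝ × ℝ | p.1 = p.2} :=
      measurableSet_eq_fun measurable_fst measurable_snd
    have heq : μ {ω | X i ω = X j ω}
        = (μ.map (fun ω => (X i ω, X j ω))) {p : ℝ × ℝ | p.1 = p.2} := by
      rw [Measure.map_apply ((hXm i).prodMk (hXm j)) hdiag]
      rfl
    rw [heq, hmap, Measure.prod_apply hdiag]
    have hnull : ∀ x : ℝ, (μ.map (X j)) (Prod.mk x ⁻¹' {p : ℝ × ℝ | p.1 = p.2}) = 0 := by
      intro x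
      have e : Prod.mk x ⁻¹' {p : ℝ × ℝ | p.1 = p.2} = {x} := by
        ext t; simp [eq_comm]
      rw [e, hfX j]
      exact (withDensity_absolutelyContinuous volume _) (measure_singleton x)
    simp only [hnull, lintegral_zero]
  have hae : ∀ᵐ ω ∂μ, ∀ i j : Fin n, i ≠ j → X i ω ≠ X j ω := by
    rw [MeasureTheory.ae_all_iff]
    intro i
    rw [MeasureTheory.ae_all_iff]
    intro j
    by_cases hij : i = j
    · filter_upwards with ω h
      exact absurd hij h
    · rw [ae_iff]
      refine measure_mono_null ?_ (hdist i j hij)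
      intro ω hω
      simp only [Set.mem_setOf_eq] at hω ⊢
      push_neg at hω
      exact hω.2
  filter_upwards [hae] with ω hω
  refine mem_perm_core hn (fun i j => scaledKernelDF K b (X i ω - X j ω))
    (fun i j => hS0 _) (fun i j hij => ?_)
  have hz : X i ω - X j ω ≠ 0 := sub_ne_zero.mpr (hω i j hij)
  have := hSsum (X i ω - X j ω) hz
  rwa [neg_sub] at this
end

section
/- Let n ≥ 2, let X_1, …, X_n be i.i.d. real random variables with absolutely continuous distribution function, let K be the distribution function of a symmetric kernel so that K(−z) = 1 − K(z), and let V_i(b) = (n−1)^{−1} Σ_{j≠i} K_b(X_i − X_j). If 0 < Var(V_1(b)) < ∞, then for every i ≠ j the correlation of V_i(b) and V_j(b) equals −1/(n−1). -/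
open MeasureTheory ProbabilityTheory

/-- CDF of the kernel. -/
noncomputable def auxK (k : ℝ → ℝ) (u : ℝ) : ℝ := ∫ t in Set.Iio u, k t

lemma auxK_apply (k : ℝ → ℝ) (u : ℝ) : auxK k u = ∫ t in Set.Iio u, k t := rfl

/-- The leave-one-out estimate as a function of the sample vector. -/
noncomputable def auxG (n : ℕ) (k : ℝ → ℝ) (b : ℝ) (i : Fin n) (x : Fin n → ℝ) : ℝ :=
  ((n : ℝ) - 1)⁻¹ * ∑ j ∈ Finset.univ.erase i, auxK k ((x i - x j) / b)

lemma auxG_apply (n : ℕ) (k : ℝ → ℝ) (b : ℝ) (i : Fin n) (x : Fin n → ℝ) :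
    auxG n k b i x = ((n : ℝ) - 1)⁻¹ * ∑ j ∈ Finset.univ.erase i, auxK k ((x i - x j) / b) := rfl

/-- let `X_1, …, X_n` (`n ≥ 2`) be i.i.d. with an absolutely continuous
distribution (bounded density `f`), let `K` be the distribution function of a
symmetric kernel `k` (so that `K(-z) = 1 - K(z)`), and let
`V_i(b) = (n-1)⁻¹ ∑_{j ≠ i} K_b(X_i - X_j)`. If `0 < Var(V_1(b)) < ∞`, then for
every `i ≠ j`, `corr(V_i(b), V_j(b)) = -1/(n-1)`. -/
theorem stmt3 {Ω : Type*} [MeasurableSpace Ω] (μ : Measure Ω) [IsProbabilityMeasure μ]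
    (n : ℕ) (hn : 2 ≤ n) (X : Fin n → Ω → ℝ) (hXm : ∀ i, Measurable (X i))
    (hindep : iIndepFun X μ)
    (f : ℝ → ℝ) (hf0 : ∀ x, 0 ≤ f x) (hfbd : ∃ M, ∀ x, f x ≤ M)
    (hfX : ∀ i, μ.map (X i) = volume.withDensity fun x => ENNReal.ofReal (f x))
    (k : ℝ → ℝ) (hkm : Measurable k) (hk0 : ∀ x, 0 ≤ k x)
    (hkbd : ∃ M, ∀ x, k x ≤ M) (hksym : ∀ x, k (-x) = k x) (hk1 : ∫ x, k x = 1)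
    (b : ℝ) (hb : 0 < b)
    (V : Fin n → Ω → ℝ)
    (hV : ∀ i ω, V i ω = ((n : ℝ) - 1)⁻¹ *
        ∑ j ∈ Finset.univ.erase i, (∫ t in Set.Iio ((X i ω - X j ω) / b), k t))
    (hvar_fin : MemLp (V ⟨0, by omega⟩) 2 μ) (hvar_pos : 0 < variance (V ⟨0, by omega⟩) μ) :
    ∀ i j : Fin n, i ≠ j →
      (∫ ω, (V i ω - ∫ ω', V i ω' ∂μ) * (V j ω - ∫ ω', V j ω' ∂μ) ∂μ) /
          (Real.sqrt (variance (V i) μ) * Real.sqrt (variance (V j) μ))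
        = -(1 / ((n : ℝ) - 1)) := by
  classical
  have hn2 : (2:ℝ) ≤ (n:ℝ) := by exact_mod_cast hn
  have hn1 : (0:ℝ) < (n:ℝ) - 1 := by linarith
  have hne : ((n:ℝ) - 1) ≠ 0 := ne_of_gt hn1
  have hn0 : ((n:ℝ)) ≠ 0 := by positivity
  -- kernel facts
  have hki : Integrable k := by
    by_contra h
    rw [integral_undef h] at hk1
    norm_num at hk1
  have Kmono : Monotone (auxK k) := by
    intro u v huv
    exact setIntegral_mono_set hki.integrableOn (ae_of_all _ hk0)
      (HasSubset.Subset.eventuallyLE (Set.Iio_subset_Iio huv))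
  have Kmeas : Measurable (auxK k) := Kmono.measurable
  have K0 : ∀ u, 0 ≤ auxK k u := fun u =>
    setIntegral_nonneg measurableSet_Iio fun x _ => hk0 x
  have K1 : ∀ u, auxK k u ≤ 1 := fun u =>
    hk1 ▸ setIntegral_le_integral hki (ae_of_all _ hk0)
  have Ksum : ∀ u, auxK k u + auxK k (-u) = 1 := by
    intro u
    have h1 : auxK k (-u) = ∫ t in Set.Ioi u, k t := by
      rw [auxK_apply, ← integral_Iic_eq_integral_Iio, ← integral_comp_neg_Ioi]
      simp only [hksym]
    rw [h1, auxK_apply, ← integral_Iic_eq_integral_Iio,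
      intervalIntegral.integral_Iic_add_Ioi hki.integrableOn hki.integrableOn, hk1]
  have Kflip : ∀ x y : ℝ, auxK k ((x - y)/b) + auxK k ((y - x)/b) = 1 := by
    intro x y
    have h := Ksum ((x - y)/b)
    rw [show -((x - y)/b) = (y - x)/b by ring] at h
    exact h
  -- convenient forms
  have hV' : ∀ i ω, V i ω = ((n:ℝ)-1)⁻¹ *
      ∑ j ∈ Finset.univ.erase i, auxK k ((X i ω - X j ω)/b) := fun i ω => hV i ω
  have hVG : ∀ i ω, V i ω = auxG n k b i (fun l => X l ω) := fun i ω => hV i ω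
  have hGmeas : ∀ i, Measurable (auxG n k b i) := by
    intro i
    apply Measurable.const_mul
    exact Finset.measurable_sum _ fun j _ =>
      Kmeas.comp (by fun_prop : Measurable fun x : Fin n → ℝ => (x i - x j) / b)
  have hVmeas : ∀ i, Measurable (V i) := by
    intro i
    have h : V i = fun ω => auxG n k b i (fun l => X l ω) := funext fun ω => hVG i ω
    rw [h]
    exact (hGmeas i).comp (measurable_pi_lambda _ hXm)
  -- bounds
  have hVbd : ∀ i ω, 0 ≤ V i ω ∧ V i ω ≤ 1 := by
    intro i ω
    rw [hV' i ω]
    have hcard' : ((Finset.univ.erase i).card : ℝ) = (n:ℝ) - 1 := by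
      rw [Finset.card_erase_of_mem (Finset.mem_univ i), Finset.card_univ, Fintype.card_fin,
        Nat.cast_sub (by omega : 1 ≤ n)]
      simp
    have h0 : 0 ≤ ∑ j ∈ Finset.univ.erase i, auxK k ((X i ω - X j ω)/b) :=
      Finset.sum_nonneg fun j _ => K0 _
    have h1 : ∑ j ∈ Finset.univ.erase i, auxK k ((X i ω - X j ω)/b) ≤ (n:ℝ) - 1 := by
      calc ∑ j ∈ Finset.univ.erase i, auxK k ((X i ω - X j ω)/b)
          ≤ ∑ _j ∈ Finset.univ.erase i, (1:ℝ) := Finset.sum_le_sum fun j _ => K1 _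
        _ = ((Finset.univ.erase i).card : ℝ) := by simp
        _ = (n:ℝ) - 1 := hcard'
    refine ⟨mul_nonneg (inv_nonneg.mpr hn1.le) h0, ?_⟩
    calc ((n:ℝ)-1)⁻¹ * ∑ j ∈ Finset.univ.erase i, auxK k ((X i ω - X j ω)/b)
        ≤ ((n:ℝ)-1)⁻¹ * ((n:ℝ)-1) := mul_le_mul_of_nonneg_left h1 (inv_nonneg.mpr hn1.le)
      _ = 1 := inv_mul_cancel₀ hne
  have habs : ∀ i ω, |V i ω| ≤ 1 := fun i ω =>
    abs_le.mpr ⟨by linarith [(hVbd i ω).1], (hVbd i ω).2⟩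
  have hVL2 : ∀ i, MemLp (V i) 2 μ := fun i =>
    MemLp.of_bound (hVmeas i).aestronglyMeasurable 1
      (ae_of_all _ fun ω => by rw [Real.norm_eq_abs]; exact habs i ω)
  have hVint : ∀ i, Integrable (V i) μ := fun i => (hVL2 i).integrable one_le_two
  have hVVint : ∀ i j, Integrable (fun ω => V i ω * V j ω) μ := by
    intro i j
    refine (integrable_const (1:ℝ)).mono'
      (((hVmeas i).mul (hVmeas j)).aestronglyMeasurable) (ae_of_all _ fun ω => ?_)
    calc ‖V i ω * V j ω‖ = |V i ω| * |V j ω| := by rw [Real.norm_eq_abs, abs_mul]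
      _ ≤ 1 * 1 := mul_le_mul (habs i ω) (habs j ω) (abs_nonneg _) zero_le_one
      _ = 1 := one_mul 1
  -- pointwise sum is constant
  have hsum : ∀ ω, ∑ i, V i ω = (n:ℝ)/2 := by
    intro ω
    have haa : ∀ i j : Fin n, auxK k ((X i ω - X j ω)/b) + auxK k ((X j ω - X i ω)/b) = 1 :=
      fun i j => Kflip _ _
    have hdiag : ∀ i : Fin n, auxK k ((X i ω - X i ω)/b) = 1/2 := fun i => by
      have := haa i i; linarith
    have hsw : (∑ i, ∑ j, auxK k ((X j ω - X i ω)/b))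
        = ∑ i, ∑ j, auxK k ((X i ω - X j ω)/b) := Finset.sum_comm
    have h2 : (∑ i, ∑ j, auxK k ((X i ω - X j ω)/b))
        + (∑ i, ∑ j, auxK k ((X j ω - X i ω)/b)) = (n:ℝ)^2 := by
      rw [← Finset.sum_add_distrib]
      simp_rw [← Finset.sum_add_distrib, haa]
      simp [Finset.card_univ, sq]
    have hfull : ∑ i, ∑ j, auxK k ((X i ω - X j ω)/b) = (n:ℝ)^2/2 := by linarith
    have hrow : ∀ i : Fin n, ∑ j ∈ Finset.univ.erase i, auxK k ((X i ω - X j ω)/b)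
        = (∑ j, auxK k ((X i ω - X j ω)/b)) - 1/2 := by
      intro i
      rw [Finset.sum_erase_eq_sub (Finset.mem_univ i), hdiag]
    calc ∑ i, V i ω
        = ∑ i, ((n:ℝ)-1)⁻¹ * ((∑ j, auxK k ((X i ω - X j ω)/b)) - 1/2) := by
          refine Finset.sum_congr rfl fun i _ => ?_
          rw [hV' i ω, hrow i]
      _ = ((n:ℝ)-1)⁻¹ * ((∑ i, ∑ j, auxK k ((X i ω - X j ω)/b)) - (n:ℝ) * (1/2)) := by
          rw [← Finset.mul_sum]
          congr 1
          rw [Finset.sum_sub_distrib]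
          simp [Finset.card_univ, mul_comm]
      _ = (n:ℝ)/2 := by
          rw [hfull]
          field_simp
  -- joint distribution
  set i0 : Fin n := ⟨0, by omega⟩ with hi0def
  set i1 : Fin n := ⟨1, by omega⟩ with hi1def
  have hi01 : i0 ≠ i1 := by simp [hi0def, hi1def, Fin.ext_iff]
  set D : Measure ℝ := volume.withDensity (fun x => ENNReal.ofReal (f x)) with hDdef
  have hDprob : IsProbabilityMeasure D := by
    rw [← hfX i0]
    exact Measure.isProbabilityMeasure_map (hXm i0).aemeasurable
  set Pm : Measure (Fin n → ℝ) := Measure.pi (fun _ => D) with hPmdef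
  have hΦm : Measurable (fun ω (l : Fin n) => X l ω) := measurable_pi_lambda _ hXm
  have hmap : μ.map (fun ω (l : Fin n) => X l ω) = Pm := by
    rw [hPmdef]
    refine (Measure.pi_eq fun s hs => ?_).symm
    rw [Measure.map_apply hΦm (MeasurableSet.univ_pi hs)]
    have hpre : (fun ω (l : Fin n) => X l ω) ⁻¹' Set.pi Set.univ s = ⋂ i, X i ⁻¹' s i := by
      ext ω
      simp [Set.mem_pi]
    rw [hpre]
    have hI := hindep.measure_inter_preimage_eq_mul Finset.univ (fun i _ => hs i)
    rw [show (⋂ i, X i ⁻¹' s i) = ⋂ i ∈ Finset.univ, X i ⁻¹' s i by simp, hI]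
    refine Finset.prod_congr rfl fun i _ => ?_
    rw [← Measure.map_apply (hXm i) (hs i), hfX i]
  -- permutation invariance
  have hperm : ∀ (σ : Equiv.Perm (Fin n)) (g : (Fin n → ℝ) → ℝ),
      ∫ x, g (fun j => x (σ j)) ∂Pm = ∫ x, g x ∂Pm := by
    intro σ g
    have hmp : MeasurePreserving
        (MeasurableEquiv.piCongrLeft (fun _ : Fin n => ℝ) σ.symm) Pm Pm := by
      rw [hPmdef]
      exact measurePreserving_piCongrLeft (fun _ => D) σ.symm
    have hco : ∀ x : Fin n → ℝ,
        (MeasurableEquiv.piCongrLeft (fun _ : Fin n => ℝ) σ.symm) x = fun j => x (σ j) := by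
      intro x
      funext j
      simpa using MeasurableEquiv.piCongrLeft_apply_apply (β := fun _ : Fin n => ℝ) σ.symm x (σ j)
    rw [← hmp.integral_comp' g]
    refine integral_congr_ae (ae_of_all _ fun x => ?_)
    simp only []
    rw [hco]
  have hGcomp : ∀ (σ : Equiv.Perm (Fin n)) (i : Fin n) (x : Fin n → ℝ),
      auxG n k b i (fun j => x (σ j)) = auxG n k b (σ i) x := by
    intro σ i x
    rw [auxG_apply, auxG_apply]
    congr 1
    refine Finset.sum_equiv σ (fun j => ?_) (fun j hj => rfl)
    simp [Finset.mem_erase, EmbeddingLike.apply_eq_iff_eq]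
  -- transfer of integrals
  have hkey : ∀ (g : (Fin n → ℝ) → ℝ), Measurable g → ∀ (w : Ω → ℝ),
      (∀ ω, w ω = g (fun l => X l ω)) → ∫ ω, w ω ∂μ = ∫ x, g x ∂Pm := by
    intro g hg w hw
    rw [← hmap, integral_map hΦm.aemeasurable hg.aestronglyMeasurable]
    exact integral_congr_ae (ae_of_all _ hw)
  have hEG : ∀ i, ∫ ω, V i ω ∂μ = ∫ x, auxG n k b i x ∂Pm := fun i =>
    hkey _ (hGmeas i) _ (hVG i)
  have hEGsq : ∀ i, ∫ ω, (V i ω)^2 ∂μ = ∫ x, (auxG n k b i x)^2 ∂Pm := fun i =>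
    hkey _ ((hGmeas i).pow_const 2) _ (fun ω => by rw [hVG i ω])
  have hEGp : ∀ i j, ∫ ω, V i ω * V j ω ∂μ = ∫ x, auxG n k b i x * auxG n k b j x ∂Pm :=
    fun i j => hkey _ ((hGmeas i).mul (hGmeas j)) _ (fun ω => by rw [hVG i ω, hVG j ω]; rfl)
  -- exchangeability
  have hswapE : ∀ i, ∫ ω, V i ω ∂μ = ∫ ω, V i0 ω ∂μ := by
    intro i
    rw [hEG i, hEG i0]
    calc ∫ x, auxG n k b i x ∂Pm
        = ∫ x, auxG n k b i0 (fun j => x (Equiv.swap i0 i j)) ∂Pm := by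
          refine integral_congr_ae (ae_of_all _ fun x => ?_)
          simp only []
          rw [hGcomp (Equiv.swap i0 i) i0 x, Equiv.swap_apply_left]
      _ = ∫ x, auxG n k b i0 x ∂Pm := hperm _ _
  have hswapEsq : ∀ i, ∫ ω, (V i ω)^2 ∂μ = ∫ ω, (V i0 ω)^2 ∂μ := by
    intro i
    rw [hEGsq i, hEGsq i0]
    calc ∫ x, (auxG n k b i x)^2 ∂Pm
        = ∫ x, (auxG n k b i0 (fun j => x (Equiv.swap i0 i j)))^2 ∂Pm := by
          refine integral_congr_ae (ae_of_all _ fun x => ?_)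
          simp only []
          rw [hGcomp (Equiv.swap i0 i) i0 x, Equiv.swap_apply_left]
      _ = ∫ x, (auxG n k b i0 x)^2 ∂Pm := hperm _ (fun y => (auxG n k b i0 y)^2)
  have hswapEp : ∀ i j, i ≠ j → ∫ ω, V i ω * V j ω ∂μ = ∫ ω, V i0 ω * V i1 ω ∂μ := by
    intro i j hij
    rw [hEGp i j, hEGp i0 i1]
    set c : Equiv.Perm (Fin n) := Equiv.swap i0 i with hc
    have hne2 : i0 ≠ c.symm j := by
      intro h
      apply hij
      have h2 : c i0 = j := by rw [h, Equiv.apply_symm_apply]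
      rwa [hc, Equiv.swap_apply_left] at h2
    set d : Equiv.Perm (Fin n) := Equiv.swap i1 (c.symm j) with hd
    set σ : Equiv.Perm (Fin n) := d.trans c with hσ
    have hσ0 : σ i0 = i := by
      rw [hσ, Equiv.trans_apply, hd, Equiv.swap_apply_of_ne_of_ne hi01 hne2, hc,
        Equiv.swap_apply_left]
    have hσ1 : σ i1 = j := by
      rw [hσ, Equiv.trans_apply, hd, Equiv.swap_apply_left, Equiv.apply_symm_apply]
    calc ∫ x, auxG n k b i x * auxG n k b j x ∂Pm
        = ∫ x, auxG n k b i0 (fun l => x (σ l)) * auxG n k b i1 (fun l => x (σ l)) ∂Pm := by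
          refine integral_congr_ae (ae_of_all _ fun x => ?_)
          simp only []
          rw [hGcomp σ i0 x, hGcomp σ i1 x, hσ0, hσ1]
      _ = ∫ x, auxG n k b i0 x * auxG n k b i1 x ∂Pm :=
          hperm σ (fun y => auxG n k b i0 y * auxG n k b i1 y)
  -- expectations
  have hEhalf : ∀ i, ∫ ω, V i ω ∂μ = 1/2 := by
    have h1 : ∫ ω, (∑ i, V i ω) ∂μ = (n:ℝ)/2 := by
      calc ∫ ω, (∑ i, V i ω) ∂μ = ∫ _ω, ((n:ℝ)/2) ∂μ := integral_congr_ae (ae_of_all _ hsum)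
        _ = (n:ℝ)/2 := by simp
    rw [integral_finset_sum _ (fun i _ => hVint i)] at h1
    have h2 : ∑ i : Fin n, ∫ ω, V i0 ω ∂μ = (n:ℝ)/2 := by
      rw [← h1]
      exact Finset.sum_congr rfl fun i _ => (hswapE i).symm
    rw [Finset.sum_const, Finset.card_univ, Fintype.card_fin, nsmul_eq_mul] at h2
    have hE0 : ∫ ω, V i0 ω ∂μ = 1/2 := by
      have h3 : (n:ℝ) * (∫ ω, V i0 ω ∂μ) = (n:ℝ) * (1/2) := by rw [h2]; ring
      exact mul_left_cancel₀ hn0 h3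
    intro i
    rw [hswapE i, hE0]
  -- variance
  have hvar : ∀ i, variance (V i) μ = (∫ ω, (V i0 ω)^2 ∂μ) - 1/4 := by
    intro i
    rw [variance_eq_sub (hVL2 i)]
    have h2 : μ[(V i)^2] = ∫ ω, (V i0 ω)^2 ∂μ := by
      rw [← hswapEsq i]
      exact integral_congr_ae (ae_of_all _ fun ω => by simp)
    rw [h2, hEhalf i]
    norm_num
  have hQpos : 0 < (∫ ω, (V i0 ω)^2 ∂μ) - 1/4 := by
    rw [← hvar i0]
    exact hvar_pos
  -- the key covariance identity
  have hkey2 : (∫ ω, (V i0 ω)^2 ∂μ) + ((n:ℝ) - 1) * (∫ ω, V i0 ω * V i1 ω ∂μ) = (n:ℝ)/4 := by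
    have h1 : ∫ ω, V i0 ω * (∑ j, V j ω) ∂μ = (n:ℝ)/4 := by
      have hc1 : ∀ ω, V i0 ω * (∑ j, V j ω) = V i0 ω * ((n:ℝ)/2) := fun ω => by rw [hsum ω]
      rw [integral_congr_ae (ae_of_all _ hc1), integral_mul_const, hEhalf i0]
      ring
    have h2 : ∫ ω, V i0 ω * (∑ j, V j ω) ∂μ = ∑ j, ∫ ω, V i0 ω * V j ω ∂μ := by
      simp_rw [Finset.mul_sum]
      exact integral_finset_sum _ (fun j _ => hVVint i0 j)
    have h3 : ∑ j, ∫ ω, V i0 ω * V j ω ∂μ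
        = (∫ ω, (V i0 ω)^2 ∂μ) + ((n:ℝ) - 1) * (∫ ω, V i0 ω * V i1 ω ∂μ) := by
      rw [← Finset.add_sum_erase _ _ (Finset.mem_univ i0)]
      congr 1
      · exact integral_congr_ae (ae_of_all _ fun ω => by ring)
      · rw [Finset.sum_congr rfl
          (fun j hj => hswapEp i0 j (Finset.ne_of_mem_erase hj).symm)]
        rw [Finset.sum_const, Finset.card_erase_of_mem (Finset.mem_univ i0),
          Finset.card_univ, Fintype.card_fin, nsmul_eq_mul,
          Nat.cast_sub (by omega : 1 ≤ n)]
        norm_num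
    rw [← h3, ← h2, h1]
  -- finish
  intro i j hij
  have hnum : ∫ ω, (V i ω - ∫ ω', V i ω' ∂μ) * (V j ω - ∫ ω', V j ω' ∂μ) ∂μ
      = (∫ ω, V i0 ω * V i1 ω ∂μ) - 1/4 := by
    rw [hEhalf i, hEhalf j]
    have hexp : ∀ ω, (V i ω - 1/2) * (V j ω - 1/2)
        = V i ω * V j ω - (1/2) * V i ω - (1/2) * V j ω + (1/4 : ℝ) := fun ω => by ring
    rw [integral_congr_ae (ae_of_all _ hexp)]
    have I1 := hVVint i j
    have I2 : Integrable (fun ω => (1/2 : ℝ) * V i ω) μ := (hVint i).const_mul _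
    have I3 : Integrable (fun ω => (1/2 : ℝ) * V j ω) μ := (hVint j).const_mul _
    have e1 : ∫ ω, (V i ω * V j ω - 1/2 * V i ω - 1/2 * V j ω + 1/4) ∂μ
        = (∫ ω, (V i ω * V j ω - 1/2 * V i ω - 1/2 * V j ω) ∂μ) + ∫ _ω, (1/4 : ℝ) ∂μ :=
      integral_add ((I1.sub I2).sub I3) (integrable_const _)
    have e2 : ∫ ω, (V i ω * V j ω - 1/2 * V i ω - 1/2 * V j ω) ∂μ
        = (∫ ω, (V i ω * V j ω - 1/2 * V i ω) ∂μ) - ∫ ω, 1/2 * V j ω ∂μ :=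
      integral_sub (I1.sub I2) I3
    have e3 : ∫ ω, (V i ω * V j ω - 1/2 * V i ω) ∂μ
        = (∫ ω, V i ω * V j ω ∂μ) - ∫ ω, 1/2 * V i ω ∂μ := integral_sub I1 I2
    rw [e1, e2, e3, integral_const_mul, integral_const_mul, integral_const,
      hswapEp i j hij, hEhalf i, hEhalf j]
    simp [measure_univ]
    ring
  have hden : Real.sqrt (variance (V i) μ) * Real.sqrt (variance (V j) μ)
      = (∫ ω, (V i0 ω)^2 ∂μ) - 1/4 := by
    rw [hvar i, hvar j, Real.mul_self_sqrt hQpos.le]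
  rw [hnum, hden, div_eq_iff (ne_of_gt hQpos)]
  have hrel : ((n:ℝ) - 1) * ((∫ ω, V i0 ω * V i1 ω ∂μ) - 1/4)
      = -((∫ ω, (V i0 ω)^2 ∂μ) - 1/4) := by
    linear_combination hkey2
  have h9 : ((n:ℝ)-1) * ((∫ ω, V i0 ω * V i1 ω ∂μ) - 1/4)
      = ((n:ℝ)-1) * (-(1/((n:ℝ)-1)) * ((∫ ω, (V i0 ω)^2 ∂μ) - 1/4)) := by
    rw [hrel]
    field_simp
  exact mul_left_cancel₀ hne h9
end

section
/- Let X have distribution function F with density f possessing a bounded continuous fourth derivative, and let k be a kernel with μ_4(k) = ∫ x^4 k(x) dx < ∞. Then for each integer r ≥ 1 and each fixed x ∈ ℝ, as b → 0⁺, E[K_b(x − X)^r] = F(x) − ψ_{r,1}(K) f(x) b + (1/2) ψ_{r,2}(K) f′(x) b² − (1/6) ψ_{r,3}(K) f″(x) b³ + O(b⁴), where ψ_{r,j}(K) = ∫ z^j r K(z)^{r−1} k(z) dz for j = 0, 1, 2, 3. -/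
open MeasureTheory Set Filter Topology


lemma step_bound {u v : ℝ → ℝ} (hu : ∀ t, HasDerivAt u (v t) t) (hv : Continuous v)
    (h0 : u 0 = 0) {c : ℝ} {m : ℕ}
    (hb : ∀ t : ℝ, |t| ≤ 1 → |v t| ≤ c * |t| ^ m) :
    ∀ y : ℝ, |y| ≤ 1 → |u y| ≤ c * |y| ^ (m + 1) / ((m : ℝ) + 1) := by
  intro y hy
  have key : u y = ∫ t in (0:ℝ)..y, v t := by
    rw [intervalIntegral.integral_eq_sub_of_hasDerivAt (fun t _ => hu t)
      (hv.intervalIntegrable 0 y), h0, sub_zero]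
  rcases le_total 0 y with h | h
  · have hy1 : y ≤ 1 := by rw [abs_of_nonneg h] at hy; exact hy
    have habs : |∫ t in (0:ℝ)..y, v t| ≤ ∫ t in (0:ℝ)..y, |v t| :=
      intervalIntegral.abs_integral_le_integral_abs h
    have hmono : (∫ t in (0:ℝ)..y, |v t|) ≤ ∫ t in (0:ℝ)..y, c * t ^ m := by
      apply intervalIntegral.integral_mono_on h (hv.abs.intervalIntegrable 0 y)
        ((continuous_const.mul (continuous_pow m)).intervalIntegrable 0 y)
      intro t ht
      have ht0 : 0 ≤ t := ht.1
      have ht1 : |t| ≤ 1 := by rw [abs_of_nonneg ht0]; linarith [ht.2]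
      calc |v t| ≤ c * |t| ^ m := hb t ht1
        _ = c * t ^ m := by rw [abs_of_nonneg ht0]
    have hcomp : (∫ t in (0:ℝ)..y, c * t ^ m) = c * y ^ (m+1) / ((m:ℝ)+1) := by
      rw [intervalIntegral.integral_const_mul, integral_pow]
      push_cast
      rw [zero_pow (by omega : m + 1 ≠ 0)]
      ring
    rw [key, abs_of_nonneg h]
    calc |∫ t in (0:ℝ)..y, v t| ≤ _ := habs
      _ ≤ _ := hmono
      _ = _ := hcomp
  · have hy1 : -1 ≤ y := by rw [abs_of_nonpos h] at hy; linarith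
    have hsymm : (∫ t in (0:ℝ)..y, v t) = -∫ t in y..(0:ℝ), v t :=
      (intervalIntegral.integral_symm y 0)
    have habs : |∫ t in y..(0:ℝ), v t| ≤ ∫ t in y..(0:ℝ), |v t| :=
      intervalIntegral.abs_integral_le_integral_abs h
    have hmono : (∫ t in y..(0:ℝ), |v t|) ≤ ∫ t in y..(0:ℝ), c * (-t) ^ m := by
      apply intervalIntegral.integral_mono_on h (hv.abs.intervalIntegrable y 0)
        ((continuous_const.mul ((continuous_neg).pow m)).intervalIntegrable y 0)
      intro t ht
      have ht0 : t ≤ 0 := ht.2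
      have ht1 : |t| ≤ 1 := by rw [abs_of_nonpos ht0]; linarith [ht.1]
      calc |v t| ≤ c * |t| ^ m := hb t ht1
        _ = c * (-t) ^ m := by rw [abs_of_nonpos ht0]
    have hcomp : (∫ t in y..(0:ℝ), c * (-t) ^ m) = c * (-y) ^ (m+1) / ((m:ℝ)+1) := by
      have := intervalIntegral.integral_comp_neg (a := y) (b := 0) (fun t => c * t ^ m)
      rw [this, neg_zero, intervalIntegral.integral_const_mul, integral_pow]
      push_cast
      rw [zero_pow (by omega : m + 1 ≠ 0)]
      ring
    rw [key, hsymm, abs_neg, abs_of_nonpos h]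
    calc |∫ t in y..(0:ℝ), v t| ≤ _ := habs
      _ ≤ _ := hmono
      _ = _ := hcomp

lemma taylor4_bound {F f1 f2 f3 f4 : ℝ → ℝ}
    (h1 : ∀ t, HasDerivAt F (f1 t) t) (h2 : ∀ t, HasDerivAt f1 (f2 t) t)
    (h3 : ∀ t, HasDerivAt f2 (f3 t) t) (h4 : ∀ t, HasDerivAt f3 (f4 t) t)
    (hc1 : Continuous f1) (hc2 : Continuous f2) (hc3 : Continuous f3) (hc4 : Continuous f4)
    (x B : ℝ) (hB4 : ∀ h : ℝ, |h| ≤ 1 → |f4 (x + h)| ≤ B) :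
    ∀ h : ℝ, |h| ≤ 1 →
      |F (x + h) - F x - f1 x * h - f2 x * h ^ 2 / 2 - f3 x * h ^ 3 / 6|
        ≤ B * h ^ 4 / 24 := by
  have hid : ∀ t : ℝ, HasDerivAt (fun h : ℝ => x + h) 1 t := fun t =>
    (hasDerivAt_id t).const_add x
  -- level 3
  have e3b : ∀ h : ℝ, |h| ≤ 1 → |f3 (x + h) - f3 x| ≤ B * |h| := by
    have hu : ∀ t, HasDerivAt (fun h : ℝ => f3 (x + h) - f3 x) (f4 (x + t)) t := by
      intro t
      have h' := ((h4 (x + t)).comp t (hid t)).sub_const (f3 x)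
      have heq : (fun h : ℝ => f3 (x + h) - f3 x) = fun h => (f3 ∘ (fun h : ℝ => x + h)) h - f3 x := by
        funext s; simp [Function.comp]
      rw [heq]
      simpa using h'
    have hb' : ∀ t : ℝ, |t| ≤ 1 → |f4 (x + t)| ≤ B * |t| ^ 0 := by
      intro t ht; simpa using hB4 t ht
    intro h hh
    have := step_bound hu (hc4.comp (continuous_const.add continuous_id)) (by simp) hb' h hh
    simpa using this
  -- level 2
  have e2b : ∀ h : ℝ, |h| ≤ 1 → |f2 (x + h) - f2 x - f3 x * h| ≤ B * |h| ^ 2 / 2 := by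
    have hu : ∀ t, HasDerivAt (fun h : ℝ => f2 (x + h) - f2 x - f3 x * h)
        (f3 (x + t) - f3 x) t := by
      intro t
      have hpoly : HasDerivAt (fun h : ℝ => f2 x + f3 x * h) (f3 x) t := by
        simpa using ((hasDerivAt_id t).const_mul (f3 x)).const_add (f2 x)
      have h' := ((h3 (x + t)).comp t (hid t)).sub hpoly
      have heq : (fun h : ℝ => f2 (x + h) - f2 x - f3 x * h)
          = fun h => (f2 ∘ (fun h : ℝ => x + h)) h - (f2 x + f3 x * h) := by
        funext s; simp [Function.comp]; ring
      rw [heq]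
      rw [mul_one] at h'; exact h'
    intro h hh
    have := step_bound (c := B) (m := 1) hu
      ((hc3.comp (continuous_const.add continuous_id)).sub continuous_const) (by simp)
      (fun t ht => by simpa using e3b t ht) h hh
    refine le_trans (le_of_le_of_eq this ?_) le_rfl
    norm_num
  -- level 1
  have e1b : ∀ h : ℝ, |h| ≤ 1 →
      |f1 (x + h) - f1 x - f2 x * h - f3 x * h ^ 2 / 2| ≤ B * |h| ^ 3 / 6 := by
    have hu : ∀ t, HasDerivAt (fun h : ℝ => f1 (x + h) - f1 x - f2 x * h - f3 x * h ^ 2 / 2)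
        (f2 (x + t) - f2 x - f3 x * t) t := by
      intro t
      have p2 : HasDerivAt (fun h : ℝ => f3 x * h ^ 2 / 2) (f3 x * t) t := by
        have := ((hasDerivAt_pow 2 t).const_mul (f3 x)).div_const 2
        refine this.congr_deriv ?_
        push_cast; ring
      have hpoly : HasDerivAt (fun h : ℝ => f1 x + f2 x * h + f3 x * h ^ 2 / 2)
          (f2 x + f3 x * t) t := by
        have := (((hasDerivAt_id t).const_mul (f2 x)).const_add (f1 x)).add p2
        rw [mul_one] at this; exact this
      have h' := ((h2 (x + t)).comp t (hid t)).sub hpoly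
      have heq : (fun h : ℝ => f1 (x + h) - f1 x - f2 x * h - f3 x * h ^ 2 / 2)
          = fun h => (f1 ∘ (fun h : ℝ => x + h)) h - (f1 x + f2 x * h + f3 x * h ^ 2 / 2) := by
        funext s; simp [Function.comp]; ring
      rw [heq]
      have hval : f2 (x + t) - f2 x - f3 x * t = f2 (x + t) * 1 - (f2 x + f3 x * t) := by ring
      rw [hval]
      exact h'
    intro h hh
    have := step_bound (c := B/2) (m := 2) hu
      (((hc2.comp (continuous_const.add continuous_id)).sub continuous_const).sub
        (continuous_const.mul continuous_id))
      (by simp)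
      (fun t ht => le_of_le_of_eq (e2b t ht) (by ring)) h hh
    refine le_of_le_of_eq this ?_
    norm_num
    ring
  -- level 0
  have e0b : ∀ h : ℝ, |h| ≤ 1 →
      |F (x + h) - F x - f1 x * h - f2 x * h ^ 2 / 2 - f3 x * h ^ 3 / 6|
        ≤ B * |h| ^ 4 / 24 := by
    have hu : ∀ t, HasDerivAt
        (fun h : ℝ => F (x + h) - F x - f1 x * h - f2 x * h ^ 2 / 2 - f3 x * h ^ 3 / 6)
        (f1 (x + t) - f1 x - f2 x * t - f3 x * t ^ 2 / 2) t := by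
      intro t
      have p2 : HasDerivAt (fun h : ℝ => f2 x * h ^ 2 / 2) (f2 x * t) t := by
        have := ((hasDerivAt_pow 2 t).const_mul (f2 x)).div_const 2
        refine this.congr_deriv ?_
        push_cast; ring
      have p3 : HasDerivAt (fun h : ℝ => f3 x * h ^ 3 / 6) (f3 x * t ^ 2 / 2) t := by
        have := ((hasDerivAt_pow 3 t).const_mul (f3 x)).div_const 6
        refine this.congr_deriv ?_
        push_cast; ring
      have hpoly : HasDerivAt
          (fun h : ℝ => F x + f1 x * h + f2 x * h ^ 2 / 2 + f3 x * h ^ 3 / 6)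
          (f1 x + f2 x * t + f3 x * t ^ 2 / 2) t := by
        have := ((((hasDerivAt_id t).const_mul (f1 x)).const_add (F x)).add p2).add p3
        rw [mul_one] at this; exact this
      have h' := ((h1 (x + t)).comp t (hid t)).sub hpoly
      have heq : (fun h : ℝ => F (x + h) - F x - f1 x * h - f2 x * h ^ 2 / 2 - f3 x * h ^ 3 / 6)
          = fun h => (F ∘ (fun h : ℝ => x + h)) h
              - (F x + f1 x * h + f2 x * h ^ 2 / 2 + f3 x * h ^ 3 / 6) := by
        funext s; simp [Function.comp]; ring
      rw [heq]
      have hval : f1 (x + t) - f1 x - f2 x * t - f3 x * t ^ 2 / 2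
          = f1 (x + t) * 1 - (f1 x + f2 x * t + f3 x * t ^ 2 / 2) := by ring
      rw [hval]
      exact h'
    intro h hh
    have := step_bound (c := B/6) (m := 3) hu
      ((((hc1.comp (continuous_const.add continuous_id)).sub continuous_const).sub
        (continuous_const.mul continuous_id)).sub
        ((continuous_const.mul (continuous_pow 2)).div_const 2))
      (by simp)
      (fun t ht => le_of_le_of_eq (e1b t ht) (by ring)) h hh
    refine le_of_le_of_eq this ?_
    norm_num
    ring
  intro h hh
  have := e0b h hh
  have habs : |h| ^ 4 = h ^ 4 := by
    rw [← abs_pow]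
    exact abs_of_nonneg (by positivity)
  rw [habs] at this
  exact this

section Kfacts
variable {k : ℝ → ℝ} (hkm : Measurable k) (hk0 : ∀ x, 0 ≤ k x) (hkInt : Integrable k)

include hk0 in
lemma K_nonneg (z : ℝ) : 0 ≤ ∫ t in Iio z, k t :=
  setIntegral_nonneg measurableSet_Iio fun t _ => hk0 t

include hkInt hk0 in
lemma K_mono : Monotone (fun z => ∫ t in Iio z, k t) := fun a b hab =>
  setIntegral_mono_set hkInt.integrableOn (Filter.Eventually.of_forall hk0)
    (HasSubset.Subset.eventuallyLE (Iio_subset_Iio hab))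

include hkInt hk0 in
lemma K_meas : Measurable (fun z => ∫ t in Iio z, k t) :=
  (K_mono hk0 hkInt).measurable

include hkInt hk0 in
lemma K_le_total (z : ℝ) : (∫ t in Iio z, k t) ≤ ∫ t, k t :=
  setIntegral_le_integral hkInt (Filter.Eventually.of_forall hk0)

include hkm hk0 hkInt in
lemma G_integrable (n : ℕ) :
    Integrable (fun t => ((n : ℝ) + 1) * (∫ s in Iio t, k s) ^ n * k t) := by
  have hmeas : Measurable (fun t => ((n : ℝ) + 1) * (∫ s in Iio t, k s) ^ n * k t) :=
    ((measurable_const.mul ((K_meas hk0 hkInt).pow_const n)).mul hkm)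
  refine (hkInt.const_mul (((n : ℝ) + 1) * (max 1 (∫ t, k t)) ^ n)).mono'
    hmeas.aestronglyMeasurable (Filter.Eventually.of_forall fun t => ?_)
  have h0 : 0 ≤ ∫ s in Iio t, k s := K_nonneg hk0 t
  have h1 : (∫ s in Iio t, k s) ≤ max 1 (∫ t, k t) :=
    le_trans (K_le_total hk0 hkInt t) (le_max_right _ _)
  have hn : (∫ s in Iio t, k s) ^ n ≤ (max 1 (∫ t, k t)) ^ n :=
    pow_le_pow_left₀ h0 h1 n
  rw [Real.norm_eq_abs, abs_of_nonneg
    (mul_nonneg (mul_nonneg (by positivity) (pow_nonneg h0 n)) (hk0 t))]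
  have := mul_le_mul_of_nonneg_right (mul_le_mul_of_nonneg_left hn
    (by positivity : (0:ℝ) ≤ (n : ℝ) + 1)) (hk0 t)
  linarith

include hkm hk0 hkInt in
lemma K_pow_eq (n : ℕ) : ∀ u : ℝ,
    (∫ t in Iio u, k t) ^ (n + 1)
      = ∫ t in Iio u, ((n : ℝ) + 1) * (∫ s in Iio t, k s) ^ n * k t := by
  induction n with
  | zero => intro u; simp
  | succ n IH =>
    intro u
    set K : ℝ → ℝ := fun z => ∫ t in Iio z, k t with hK
    set G : ℝ → ℝ := fun t => ((n : ℝ) + 1) * K t ^ n * k t with hGdef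
    have hGm : Measurable G := (measurable_const.mul ((K_meas hk0 hkInt).pow_const n)).mul hkm
    have hGint : Integrable G := G_integrable hkm hk0 hkInt n
    have hGnn : ∀ t, 0 ≤ G t := fun t =>
      mul_nonneg (mul_nonneg (by positivity) (pow_nonneg (K_nonneg hk0 t) n)) (hk0 t)
    -- split lemma
    have hsplit : ∀ s : ℝ, s < u →
        K u ^ (n + 1) = K s ^ (n + 1) + ∫ t in Ico s u, G t := by
      intro s hs
      rw [IH u, IH s, ← setIntegral_union
        ((Iio_disjoint_Ici le_rfl).mono_right Ico_subset_Ici_self) measurableSet_Ico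
        hGint.integrableOn hGint.integrableOn, Iio_union_Ico_eq_Iio hs.le]
    -- Fubini function
    set Φ : ℝ → ℝ → ℝ := fun s t => if s < u ∧ s ≤ t ∧ t < u then k s * G t else 0 with hΦ
    have hA : MeasurableSet {p : ℝ × ℝ | p.1 < u ∧ p.1 ≤ p.2 ∧ p.2 < u} :=
      (measurableSet_lt measurable_fst measurable_const).inter
        ((measurableSet_le measurable_fst measurable_snd).inter
          (measurableSet_lt measurable_snd measurable_const))
    have hΦm : Measurable (Function.uncurry Φ) := by
      have : Function.uncurry Φ = fun p : ℝ × ℝ =>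
          if p.1 < u ∧ p.1 ≤ p.2 ∧ p.2 < u then k p.1 * G p.2 else 0 := rfl
      rw [this]
      exact Measurable.ite hA ((hkm.comp measurable_fst).mul (hGm.comp measurable_snd))
        measurable_const
    have hΦint : Integrable (Function.uncurry Φ) (volume.prod volume) := by
      refine (hkInt.mul_prod hGint).mono' hΦm.aestronglyMeasurable
        (Filter.Eventually.of_forall fun p => ?_)
      rcases p with ⟨s, t⟩
      rw [Real.norm_eq_abs]
      by_cases hc : s < u ∧ s ≤ t ∧ t < u
      · simp only [Function.uncurry, hΦ, if_pos hc]
        rw [abs_of_nonneg (mul_nonneg (hk0 s) (hGnn t))]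
      · simp only [Function.uncurry, hΦ, if_neg hc, abs_zero]
        exact mul_nonneg (hk0 s) (hGnn t)
    have hswap : (∫ s, ∫ t, Φ s t) = ∫ t, ∫ s, Φ s t := by
      have := integral_integral_swap (f := Φ) (μ := (volume : Measure ℝ))
        (ν := (volume : Measure ℝ)) hΦint
      exact this
    -- evaluate LHS of swap
    have hL : (∫ s, ∫ t, Φ s t) = ∫ s in Iio u, k s * ∫ t in Ico s u, G t := by
      rw [← integral_indicator measurableSet_Iio]
      congr 1
      funext s
      by_cases hs : s < u
      · rw [indicator_of_mem (mem_Iio.2 hs)]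
        have : ∀ t, Φ s t = (Ico s u).indicator (fun t => k s * G t) t := by
          intro t
          simp only [hΦ, indicator_apply, mem_Ico]
          by_cases ht : s ≤ t ∧ t < u
          · rw [if_pos ⟨hs, ht⟩, if_pos ht]
          · rw [if_neg (fun hcon => ht ⟨hcon.2.1, hcon.2.2⟩), if_neg ht]
        rw [integral_congr_ae (Filter.Eventually.of_forall this),
          integral_indicator measurableSet_Ico, integral_const_mul]
      · rw [indicator_of_notMem (fun hcon => hs (mem_Iio.1 hcon))]
        have : ∀ t, Φ s t = 0 := by
          intro t; simp only [hΦ]; rw [if_neg (fun hcon => hs hcon.1)]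
        rw [integral_congr_ae (Filter.Eventually.of_forall this), integral_zero]
    -- evaluate RHS of swap
    have hR : (∫ t, ∫ s, Φ s t) = ∫ t in Iio u, K t * G t := by
      rw [← integral_indicator measurableSet_Iio]
      congr 1
      funext t
      by_cases ht : t < u
      · rw [indicator_of_mem (mem_Iio.2 ht)]
        have : ∀ s, Φ s t = (Iic t).indicator (fun s => k s * G t) s := by
          intro s
          simp only [hΦ, indicator_apply, mem_Iic]
          by_cases hst : s ≤ t
          · rw [if_pos ⟨lt_of_le_of_lt hst ht, hst, ht⟩, if_pos hst]
          · rw [if_neg (fun hcon => hst hcon.2.1), if_neg hst]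
        rw [integral_congr_ae (Filter.Eventually.of_forall this),
          integral_indicator measurableSet_Iic, integral_mul_const,
          integral_Iic_eq_integral_Iio]
      · rw [indicator_of_notMem (fun hcon => ht (mem_Iio.1 hcon))]
        have : ∀ s, Φ s t = 0 := by
          intro s; simp only [hΦ]; rw [if_neg (fun hcon => ht hcon.2.2)]
        rw [integral_congr_ae (Filter.Eventually.of_forall this), integral_zero]
    -- combine
    have hc' : ∀ t : ℝ, K t ≤ max 1 (∫ t, k t) := fun t =>
      le_trans (K_le_total hk0 hkInt t) (le_max_right _ _)
    have hKG : Integrable (fun t => K t * G t) := by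
      refine (hGint.const_mul (max 1 (∫ t, k t))).mono'
        (((K_meas hk0 hkInt).mul hGm).aestronglyMeasurable)
        (Filter.Eventually.of_forall fun t => ?_)
      rw [Real.norm_eq_abs, abs_of_nonneg (mul_nonneg (K_nonneg hk0 t) (hGnn t))]
      exact mul_le_mul_of_nonneg_right (hc' t) (hGnn t)
    have hkKpow : Integrable (fun s => k s * K s ^ (n + 1)) := by
      refine (hkInt.mul_const ((max 1 (∫ t, k t)) ^ (n+1))).mono'
        ((hkm.mul ((K_meas hk0 hkInt).pow_const (n+1))).aestronglyMeasurable)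
        (Filter.Eventually.of_forall fun s => ?_)
      rw [Real.norm_eq_abs, abs_of_nonneg (mul_nonneg (hk0 s) (pow_nonneg (K_nonneg hk0 s) _))]
      exact mul_le_mul_of_nonneg_left (pow_le_pow_left₀ (K_nonneg hk0 s) (hc' s) _) (hk0 s)
    have hmid : (∫ s in Iio u, k s * ∫ t in Ico s u, G t)
        = (∫ s in Iio u, k s * K u ^ (n+1)) - ∫ s in Iio u, k s * K s ^ (n+1) := by
      rw [← integral_sub ((hkInt.mul_const _).integrableOn) hkKpow.integrableOn]
      refine setIntegral_congr_fun measurableSet_Iio fun s hs => ?_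
      have h1 := hsplit s hs
      have h2 : (∫ t in Ico s u, G t) = K u ^ (n+1) - K s ^ (n+1) := by linarith
      rw [h2]; ring
    have hmul : (∫ s in Iio u, k s * K u ^ (n+1)) = K u * K u ^ (n+1) := by
      rw [integral_mul_const]
    have hKu : (∫ t in Iio u, k t) = K u := rfl
    calc (∫ t in Iio u, k t) ^ (n+1+1) = K u * K u ^ (n+1) := by
          rw [hKu, pow_succ']
      _ = (∫ s in Iio u, k s * K s ^ (n+1)) + ∫ t in Iio u, K t * G t := by
          have h1 := hswap
          rw [hL, hR] at h1
          rw [← hmul]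
          linarith [hmid]
      _ = ∫ t in Iio u, (k t * K t ^ (n+1) + K t * G t) :=
          (integral_add hkKpow.integrableOn hKG.integrableOn).symm
      _ = ∫ t in Iio u, ((↑(n+1) : ℝ) + 1) * K t ^ (n+1) * k t := by
          refine setIntegral_congr_fun measurableSet_Iio fun t _ => ?_
          simp only [hGdef]
          push_cast
          ring

include hkm hk0 hkInt in
lemma G_total (hk1 : ∫ t, k t = 1) (n : ℕ) :
    (∫ t, ((n : ℝ) + 1) * (∫ s in Iio t, k s) ^ n * k t) = 1 := by
  have hmono : Monotone (fun i : ℕ => Iio ((i : ℝ))) := fun i j hij =>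
    Iio_subset_Iio (by exact_mod_cast hij)
  have hunion : (⋃ i : ℕ, Iio ((i : ℝ))) = univ :=
    eq_univ_of_forall fun y => by
      obtain ⟨i, hi⟩ := exists_nat_gt y
      exact mem_iUnion.2 ⟨i, mem_Iio.2 hi⟩
  have htend := tendsto_setIntegral_of_monotone (fun i : ℕ => measurableSet_Iio) hmono
    (f := fun t => ((n : ℝ) + 1) * (∫ s in Iio t, k s) ^ n * k t)
    (μ := volume) (by rw [hunion]; exact (G_integrable hkm hk0 hkInt n).integrableOn)
  have htendK := tendsto_setIntegral_of_monotone (fun i : ℕ => measurableSet_Iio) hmono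
    (f := k) (μ := volume) (by rw [hunion]; exact hkInt.integrableOn)
  rw [hunion, setIntegral_univ] at htend htendK
  rw [hk1] at htendK
  have h2 : Tendsto (fun i : ℕ => (∫ t in Iio ((i : ℝ)), k t) ^ (n + 1)) atTop (𝓝 1) := by
    have := ((continuous_pow (n + 1)).continuousAt (x := (1:ℝ))).tendsto.comp htendK
    simpa [Function.comp_def] using this
  have heq : (fun i : ℕ => (∫ t in Iio ((i : ℝ)), k t) ^ (n + 1))
      = fun i : ℕ => ∫ t in Iio ((i : ℝ)), ((n : ℝ) + 1) * (∫ s in Iio t, k s) ^ n * k t :=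
    funext fun i => K_pow_eq hkm hk0 hkInt n (i : ℝ)
  rw [heq] at h2
  exact (tendsto_nhds_unique htend h2)

include hkm hk0 hkInt in
lemma step2 {f : ℝ → ℝ} (hfm : Measurable f) (hf0 : ∀ x, 0 ≤ f x) (hfInt : Integrable f)
    (n : ℕ) (x b : ℝ) (hb : 0 < b) :
    (∫ y, (∫ t in Iio ((x - y) / b), k t) ^ (n + 1) * f y)
      = ∫ s, (((n : ℝ) + 1) * (∫ t in Iio s, k t) ^ n * k s)
          * (∫ t in Iio (x - b * s), f t) := by
  set G : ℝ → ℝ := fun t => ((n : ℝ) + 1) * (∫ s in Iio t, k s) ^ n * k t with hGdef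
  have hGint : Integrable G := G_integrable hkm hk0 hkInt n
  have hGm : Measurable G :=
    (measurable_const.mul ((K_meas hk0 hkInt).pow_const n)).mul hkm
  have hGnn : ∀ t, 0 ≤ G t := fun t =>
    mul_nonneg (mul_nonneg (by positivity) (pow_nonneg (K_nonneg hk0 t) n)) (hk0 t)
  set Ψ : ℝ → ℝ → ℝ := fun y s => if y + b * s < x then f y * G s else 0 with hΨ
  have hΨm : Measurable (Function.uncurry Ψ) := by
    have : Function.uncurry Ψ = fun p : ℝ × ℝ =>
        if p.1 + b * p.2 < x then f p.1 * G p.2 else 0 := rfl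
    rw [this]
    exact Measurable.ite
      (measurableSet_lt (measurable_fst.add (measurable_snd.const_mul b)) measurable_const)
      ((hfm.comp measurable_fst).mul (hGm.comp measurable_snd)) measurable_const
  have hΨint : Integrable (Function.uncurry Ψ) (volume.prod volume) := by
    refine (hfInt.mul_prod hGint).mono' hΨm.aestronglyMeasurable
      (Filter.Eventually.of_forall fun p => ?_)
    rcases p with ⟨y, s⟩
    rw [Real.norm_eq_abs]
    by_cases hc : y + b * s < x
    · simp only [Function.uncurry, hΨ, if_pos hc]
      rw [abs_of_nonneg (mul_nonneg (hf0 y) (hGnn s))]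
    · simp only [Function.uncurry, hΨ, if_neg hc, abs_zero]
      exact mul_nonneg (hf0 y) (hGnn s)
  have hswap : (∫ y, ∫ s, Ψ y s) = ∫ s, ∫ y, Ψ y s :=
    integral_integral_swap (f := Ψ) (μ := (volume : Measure ℝ)) (ν := (volume : Measure ℝ))
      hΨint
  have hL : (∫ y, ∫ s, Ψ y s) = ∫ y, (∫ t in Iio ((x - y) / b), k t) ^ (n + 1) * f y := by
    congr 1
    funext y
    have hcond : ∀ s : ℝ, (y + b * s < x) ↔ s ∈ Iio ((x - y) / b) := by
      intro s
      rw [mem_Iio, lt_div_iff₀ hb]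
      constructor <;> intro h <;> nlinarith
    have : ∀ s, Ψ y s = (Iio ((x - y) / b)).indicator (fun s => f y * G s) s := by
      intro s
      simp only [hΨ, indicator_apply]
      by_cases hc : s ∈ Iio ((x - y) / b)
      · rw [if_pos ((hcond s).2 hc), if_pos hc]
      · rw [if_neg (fun hcon => hc ((hcond s).1 hcon)), if_neg hc]
    rw [integral_congr_ae (Filter.Eventually.of_forall this),
      integral_indicator measurableSet_Iio, integral_const_mul, ← K_pow_eq hkm hk0 hkInt n]
    ring
  have hR : (∫ s, ∫ y, Ψ y s) = ∫ s, G s * (∫ t in Iio (x - b * s), f t) := by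
    congr 1
    funext s
    have : ∀ y, Ψ y s = (Iio (x - b * s)).indicator (fun y => f y * G s) y := by
      intro y
      simp only [hΨ, indicator_apply, mem_Iio]
      by_cases hc : y < x - b * s
      · rw [if_pos (by linarith), if_pos hc]
      · rw [if_neg (fun hcon => hc (by linarith)), if_neg hc]
    rw [integral_congr_ae (Filter.Eventually.of_forall this),
      integral_indicator measurableSet_Iio, integral_mul_const]
    ring
  rw [← hL, hswap, hR]
end Kfacts


/-- let `X` have density `f` with a bounded continuous fourth
derivative, and let `k` be a kernel with `μ₄(k) < ∞`, `K(x) = ∫_{-∞}^x k`. Then for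
each integer `r ≥ 1` and fixed `x`, as `b → 0⁺`,
`E[K_b(x - X)^r] = F(x) - ψ_{r,1}(K) f(x) b + (1/2) ψ_{r,2}(K) f'(x) b²
  - (1/6) ψ_{r,3}(K) f''(x) b³ + O(b⁴)`,
where `ψ_{r,j}(K) = ∫ z^j r K(z)^{r-1} k(z) dz`. -/
theorem stmt5 (f : ℝ → ℝ) (hfm : Measurable f) (hf0 : ∀ x, 0 ≤ f x)
    (hfInt : Integrable f) (hf1 : ∫ x, f x = 1)
    (hfC4 : ContDiff ℝ 4 f) (hf4bd : ∃ M, ∀ x, |iteratedDeriv 4 f x| ≤ M)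
    (k : ℝ → ℝ) (hkm : Measurable k) (hk0 : ∀ x, 0 ≤ k x)
    (hkbd : ∃ M, ∀ x, k x ≤ M) (hksym : ∀ x, k (-x) = k x) (hk1 : ∫ x, k x = 1)
    (hk4 : Integrable fun x => x ^ 4 * k x)
    (r : ℕ) (hr : 1 ≤ r) (x : ℝ) :
    ∃ C > 0, ∃ δ > 0, ∀ b : ℝ, 0 < b → b ≤ δ →
      |(∫ y : ℝ, (∫ t in Set.Iio ((x - y) / b), k t) ^ r * f y)
          - ((∫ t in Set.Iio x, f t)
            - (∫ z : ℝ, z ^ 1 * ((r : ℝ) * (∫ t in Set.Iio z, k t) ^ (r - 1) * k z)) * f x * b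
            + (1 / 2) *
              (∫ z : ℝ, z ^ 2 * ((r : ℝ) * (∫ t in Set.Iio z, k t) ^ (r - 1) * k z)) *
                deriv f x * b ^ 2
            - (1 / 6) *
              (∫ z : ℝ, z ^ 3 * ((r : ℝ) * (∫ t in Set.Iio z, k t) ^ (r - 1) * k z)) *
                iteratedDeriv 2 f x * b ^ 3)|
        ≤ C * b ^ 4 := by
  obtain ⟨n, rfl⟩ : ∃ n, r = n + 1 := ⟨r - 1, (Nat.succ_pred_eq_of_pos hr).symm⟩
  simp only [Nat.add_sub_cancel, Nat.cast_add, Nat.cast_one]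
  -- integrability of k
  have hkInt : Integrable k := by
    by_contra h
    rw [integral_undef h] at hk1
    exact one_ne_zero hk1.symm
  -- the distribution function F
  set F : ℝ → ℝ := fun w => ∫ t in Iio w, f t with hFdef
  have hF0 : ∀ t, 0 ≤ F t := fun t => K_nonneg hf0 t
  have hF1 : ∀ t, F t ≤ 1 := fun t => le_of_le_of_eq (K_le_total hf0 hfInt t) hf1
  have hFmeas : Measurable F := K_meas hf0 hfInt
  have hfc : Continuous f := hfC4.continuous
  -- FTC: F has derivative f
  have hFrepr : ∀ a : ℝ, F a = F 0 + ∫ s in (0:ℝ)..a, f s := by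
    intro a
    have h := intervalIntegral.integral_Iic_sub_Iic (μ := volume) (hfInt.integrableOn) (hfInt.integrableOn) (a := (0:ℝ)) (b := a)
    have e1 : (∫ s in Iic a, f s) = F a := integral_Iic_eq_integral_Iio
    have e0 : (∫ s in Iic (0:ℝ), f s) = F 0 := integral_Iic_eq_integral_Iio
    rw [e1, e0] at h
    linarith
  have hFd : ∀ t, HasDerivAt F (f t) t := by
    intro t
    have hd : HasDerivAt (fun a => ∫ s in (0:ℝ)..a, f s) (f t) t :=
      intervalIntegral.integral_hasDerivAt_right hfInt.intervalIntegrable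
        hfm.stronglyMeasurable.stronglyMeasurableAtFilter hfc.continuousAt
    have : F = fun a => F 0 + ∫ s in (0:ℝ)..a, f s := funext hFrepr
    rw [this]
    exact hd.const_add (F 0)
  -- derivative chain for f
  have h2d : ∀ t, HasDerivAt f (deriv f t) t := fun t =>
    ((hfC4.differentiable (by norm_num)) t).hasDerivAt
  have h3d : ∀ t, HasDerivAt (deriv f) (iteratedDeriv 2 f t) t := by
    intro t
    have hdiff : DifferentiableAt ℝ (deriv f) t := by
      have := (hfC4.differentiable_iteratedDeriv 1 (by norm_num)) t
      simpa [iteratedDeriv_one] using this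
    have h := hdiff.hasDerivAt
    rwa [show deriv (deriv f) t = iteratedDeriv 2 f t from by
      rw [iteratedDeriv_succ, iteratedDeriv_one]] at h
  have h4d : ∀ t, HasDerivAt (iteratedDeriv 2 f) (iteratedDeriv 3 f t) t := by
    intro t
    have hdiff : DifferentiableAt ℝ (iteratedDeriv 2 f) t :=
      (hfC4.differentiable_iteratedDeriv 2 (by norm_num)) t
    have h := hdiff.hasDerivAt
    have h23 : iteratedDeriv 3 f = deriv (iteratedDeriv 2 f) := iteratedDeriv_succ
    rwa [show deriv (iteratedDeriv 2 f) t = iteratedDeriv 3 f t from by rw [h23]] at h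
  have hc2 : Continuous (deriv f) := by
    have := hfC4.continuous_iteratedDeriv 1 (by norm_num)
    simpa [iteratedDeriv_one] using this
  have hc3 : Continuous (iteratedDeriv 2 f) := hfC4.continuous_iteratedDeriv 2 (by norm_num)
  have hc4 : Continuous (iteratedDeriv 3 f) := hfC4.continuous_iteratedDeriv 3 (by norm_num)
  -- local bound on third derivative
  obtain ⟨z, hz, hzmax⟩ := isCompact_Icc.exists_isMaxOn
    (s := Icc (x - 1) (x + 1)) ⟨x, by constructor <;> linarith⟩
    ((hc4.abs).continuousOn (s := Icc (x - 1) (x + 1)))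
  set B := |iteratedDeriv 3 f z| with hBdef
  have hB0 : 0 ≤ B := abs_nonneg _
  have hB : ∀ h : ℝ, |h| ≤ 1 → |iteratedDeriv 3 f (x + h)| ≤ B := by
    intro h hh
    exact hzmax ⟨by linarith [(abs_le.1 hh).1], by linarith [(abs_le.1 hh).2]⟩
  -- Taylor estimate for F
  have herr := taylor4_bound hFd h2d h3d h4d hfc hc2 hc3 hc4 x B hB
  set err : ℝ → ℝ := fun h => F (x + h) - F x - f x * h - deriv f x * h ^ 2 / 2
    - iteratedDeriv 2 f x * h ^ 3 / 6 with herrdef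
  set D : ℝ := B / 24 + (1 + |F x| + |f x| + |deriv f x| / 2 + |iteratedDeriv 2 f x| / 6)
    with hDdef
  have hD0 : 0 ≤ D := by
    have := abs_nonneg (F x); have := abs_nonneg (f x); have := abs_nonneg (deriv f x)
    have := abs_nonneg (iteratedDeriv 2 f x)
    simp only [hDdef]; positivity
  have hDerr : ∀ h : ℝ, |err h| ≤ D * h ^ 4 := by
    intro h
    have hh4 : (0:ℝ) ≤ h ^ 4 := by positivity
    rcases le_total (|h|) 1 with hc | hc
    · have h1 := herr h hc
      have h2 : B * h ^ 4 / 24 ≤ D * h ^ 4 := by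
        have hcoef : B / 24 ≤ D := by
          simp only [hDdef]
          have := abs_nonneg (F x); have := abs_nonneg (f x); have := abs_nonneg (deriv f x)
          have := abs_nonneg (iteratedDeriv 2 f x)
          linarith
        calc B * h ^ 4 / 24 = (B / 24) * h ^ 4 := by ring
          _ ≤ D * h ^ 4 := mul_le_mul_of_nonneg_right hcoef hh4
      exact le_trans h1 h2
    · have ha : 1 ≤ |h| := hc
      have e4 : |h| ^ 4 = h ^ 4 := by
        rw [← abs_pow]; exact abs_of_nonneg hh4
      have p1 : |h| ≤ |h| ^ 4 := le_self_pow₀ ha (by norm_num)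
      have p2 : |h| ^ 2 ≤ |h| ^ 4 := pow_le_pow_right₀ ha (by norm_num)
      have p3 : |h| ^ 3 ≤ |h| ^ 4 := pow_le_pow_right₀ ha (by norm_num)
      have p0 : (1:ℝ) ≤ |h| ^ 4 := one_le_pow₀ ha
      have htri : |err h| ≤ |F (x + h)| + |F x| + |f x| * |h|
          + |deriv f x| * |h| ^ 2 / 2 + |iteratedDeriv 2 f x| * |h| ^ 3 / 6 := by
        simp only [herrdef]
        calc |F (x + h) - F x - f x * h - deriv f x * h ^ 2 / 2
              - iteratedDeriv 2 f x * h ^ 3 / 6|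
            ≤ |F (x + h) - F x - f x * h - deriv f x * h ^ 2 / 2|
              + |iteratedDeriv 2 f x * h ^ 3 / 6| := abs_sub _ _
          _ ≤ (|F (x + h) - F x - f x * h| + |deriv f x * h ^ 2 / 2|)
              + |iteratedDeriv 2 f x * h ^ 3 / 6| := by
                have := abs_sub (F (x + h) - F x - f x * h) (deriv f x * h ^ 2 / 2)
                linarith
          _ ≤ ((|F (x + h) - F x| + |f x * h|) + |deriv f x * h ^ 2 / 2|)
              + |iteratedDeriv 2 f x * h ^ 3 / 6| := by
                have := abs_sub (F (x + h) - F x) (f x * h)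
                linarith
          _ ≤ (((|F (x + h)| + |F x|) + |f x * h|) + |deriv f x * h ^ 2 / 2|)
              + |iteratedDeriv 2 f x * h ^ 3 / 6| := by
                have := abs_sub (F (x + h)) (F x)
                linarith
          _ = |F (x + h)| + |F x| + |f x| * |h| + |deriv f x| * |h| ^ 2 / 2
              + |iteratedDeriv 2 f x| * |h| ^ 3 / 6 := by
                rw [abs_mul, abs_div, abs_mul, abs_div, abs_mul, abs_pow, abs_pow]
                norm_num
      have hFb : |F (x + h)| ≤ 1 := by
        rw [abs_of_nonneg (hF0 _)]; exact hF1 _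
      have q1 : |f x| * |h| ≤ |f x| * |h| ^ 4 := mul_le_mul_of_nonneg_left p1 (abs_nonneg _)
      have q2 : |deriv f x| * |h| ^ 2 ≤ |deriv f x| * |h| ^ 4 :=
        mul_le_mul_of_nonneg_left p2 (abs_nonneg _)
      have q3 : |iteratedDeriv 2 f x| * |h| ^ 3 ≤ |iteratedDeriv 2 f x| * |h| ^ 4 :=
        mul_le_mul_of_nonneg_left p3 (abs_nonneg _)
      have qF : |F x| ≤ |F x| * |h| ^ 4 := by
        nlinarith [abs_nonneg (F x)]
      have qB : 0 ≤ B / 24 * |h| ^ 4 := by positivity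
      have hD' : D * h ^ 4 = B / 24 * |h| ^ 4 + |h| ^ 4 + |F x| * |h| ^ 4
          + |f x| * |h| ^ 4 + |deriv f x| * |h| ^ 4 / 2
          + |iteratedDeriv 2 f x| * |h| ^ 4 / 6 := by
        rw [← e4]; simp only [hDdef]; ring
      rw [hD']
      linarith
  -- kernel moment integrability
  have hmomj : ∀ j : ℕ, j ≤ 4 → Integrable (fun t : ℝ => |t| ^ j * k t) := by
    intro j hj
    have hdom : Integrable (fun t : ℝ => k t + t ^ 4 * k t) := hkInt.add hk4
    refine hdom.mono' (((measurable_abs.pow_const j).mul hkm).aestronglyMeasurable)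
      (Filter.Eventually.of_forall fun t => ?_)
    rw [Real.norm_eq_abs, abs_of_nonneg (mul_nonneg (pow_nonneg (abs_nonneg t) j) (hk0 t))]
    have hle : |t| ^ j ≤ 1 + t ^ 4 := by
      have e4 : |t| ^ 4 = t ^ 4 := by
        rw [← abs_pow]; exact abs_of_nonneg (by positivity)
      rcases le_total (|t|) 1 with h | h
      · have h1 : |t| ^ j ≤ 1 := pow_le_one₀ (abs_nonneg t) h
        nlinarith [pow_nonneg (abs_nonneg t) 4]
      · have h1 : |t| ^ j ≤ |t| ^ 4 := pow_le_pow_right₀ h hj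
        nlinarith
    nlinarith [hk0 t, mul_le_mul_of_nonneg_right hle (hk0 t)]
  -- G and its moments
  set G : ℝ → ℝ := fun t => ((n : ℝ) + 1) * (∫ s in Iio t, k s) ^ n * k t with hGdef
  have hGint : Integrable G := G_integrable hkm hk0 hkInt n
  have hGm : Measurable G :=
    (measurable_const.mul ((K_meas hk0 hkInt).pow_const n)).mul hkm
  have hGnn : ∀ t, 0 ≤ G t := fun t =>
    mul_nonneg (mul_nonneg (by positivity) (pow_nonneg (K_nonneg hk0 t) n)) (hk0 t)
  have hK1 : ∀ t : ℝ, (∫ s in Iio t, k s) ≤ 1 := fun t =>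
    le_of_le_of_eq (K_le_total hk0 hkInt t) hk1
  have hGlek : ∀ t, G t ≤ ((n:ℝ) + 1) * k t := by
    intro t
    have hp : (∫ s in Iio t, k s) ^ n ≤ 1 :=
      pow_le_one₀ (K_nonneg hk0 t) (hK1 t)
    simp only [hGdef]
    calc ((n : ℝ) + 1) * (∫ s in Iio t, k s) ^ n * k t
        ≤ ((n : ℝ) + 1) * 1 * k t := by
          apply mul_le_mul_of_nonneg_right _ (hk0 t)
          exact mul_le_mul_of_nonneg_left hp (by positivity)
      _ = ((n:ℝ) + 1) * k t := by ring
  have hGj : ∀ j : ℕ, j ≤ 4 → Integrable (fun s : ℝ => s ^ j * G s) := by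
    intro j hj
    refine ((hmomj j hj).const_mul ((n:ℝ) + 1)).mono'
      (((measurable_id.pow_const j).mul hGm).aestronglyMeasurable)
      (Filter.Eventually.of_forall fun t => ?_)
    rw [Real.norm_eq_abs, abs_mul, abs_pow]
    rw [abs_of_nonneg (hGnn t)]
    calc |t| ^ j * G t ≤ |t| ^ j * (((n:ℝ) + 1) * k t) :=
          mul_le_mul_of_nonneg_left (hGlek t) (pow_nonneg (abs_nonneg t) j)
      _ = ((n:ℝ) + 1) * (|t| ^ j * k t) := by ring
  have hG1 : (∫ t, G t) = 1 := G_total hkm hk0 hkInt hk1 n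
  -- the Fubini identity
  set Cψ : ℝ := ∫ s, s ^ 4 * G s with hCψdef
  have hCψ0 : 0 ≤ Cψ := integral_nonneg fun s =>
    mul_nonneg (by positivity) (hGnn s)
  refine ⟨D * Cψ + 1, by positivity, 1, one_pos, fun b hb hb1 => ?_⟩
  rw [step2 hkm hk0 hkInt hfm hf0 hfInt n x b hb]
  -- integrability of the pieces
  have P0 : Integrable (fun s => G s * F (x - b * s)) := by
    refine hGint.mono'
      ((hGm.mul (hFmeas.comp (measurable_const.sub (measurable_id.const_mul b)))).aestronglyMeasurable)
      (Filter.Eventually.of_forall fun s => ?_)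
    rw [Real.norm_eq_abs, abs_of_nonneg (mul_nonneg (hGnn s) (hF0 _))]
    calc G s * F (x - b * s) ≤ G s * 1 :=
          mul_le_mul_of_nonneg_left (hF1 _) (hGnn s)
      _ = G s := by ring
  have A2 : Integrable (fun s => F x * G s) := hGint.const_mul (F x)
  have A3 : Integrable (fun s => (f x * b) * (s ^ 1 * G s)) :=
    (hGj 1 (by norm_num)).const_mul _
  have A4 : Integrable (fun s => (deriv f x * b ^ 2 / 2) * (s ^ 2 * G s)) :=
    (hGj 2 (by norm_num)).const_mul _
  have A5 : Integrable (fun s => (iteratedDeriv 2 f x * b ^ 3 / 6) * (s ^ 3 * G s)) :=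
    (hGj 3 (by norm_num)).const_mul _
  have heq : ∀ s : ℝ, G s * err (-(b * s))
      = G s * F (x - b * s) - F x * G s
        + (f x * b) * (s ^ 1 * G s)
        - (deriv f x * b ^ 2 / 2) * (s ^ 2 * G s)
        + (iteratedDeriv 2 f x * b ^ 3 / 6) * (s ^ 3 * G s) := by
    intro s
    simp only [herrdef]
    rw [show x + -(b * s) = x - b * s from by ring]
    ring
  have W : Integrable (fun s => G s * err (-(b * s))) := by
    have h := (((P0.sub A2).add A3).sub A4).add A5
    exact h.congr (Filter.Eventually.of_forall fun s => (heq s).symm)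
  have I2 : Integrable (fun s => G s * F (x - b * s) - F x * G s) := P0.sub A2
  have I3 : Integrable (fun s => G s * F (x - b * s) - F x * G s
      + (f x * b) * (s ^ 1 * G s)) := I2.add A3
  have I4 : Integrable (fun s => G s * F (x - b * s) - F x * G s
      + (f x * b) * (s ^ 1 * G s)
      - (deriv f x * b ^ 2 / 2) * (s ^ 2 * G s)) := I3.sub A4
  have hsplit : (∫ s, G s * F (x - b * s))
      - (F x - (∫ z : ℝ, z ^ 1 * G z) * f x * b
        + 1 / 2 * (∫ z : ℝ, z ^ 2 * G z) * deriv f x * b ^ 2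
        - 1 / 6 * (∫ z : ℝ, z ^ 3 * G z) * iteratedDeriv 2 f x * b ^ 3)
      = ∫ s, G s * err (-(b * s)) := by
    rw [integral_congr_ae (Filter.Eventually.of_forall heq),
      integral_add I4 A5, integral_sub I3 A4, integral_add I2 A3, integral_sub P0 A2,
      integral_const_mul (F x) G, integral_const_mul (f x * b), integral_const_mul,
      integral_const_mul, hG1]
    ring
  show |(∫ s, G s * F (x - b * s))
      - (F x - (∫ z : ℝ, z ^ 1 * G z) * f x * b
        + 1 / 2 * (∫ z : ℝ, z ^ 2 * G z) * deriv f x * b ^ 2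
        - 1 / 6 * (∫ z : ℝ, z ^ 3 * G z) * iteratedDeriv 2 f x * b ^ 3)|
      ≤ (D * Cψ + 1) * b ^ 4
  rw [hsplit]
  have hptw : ∀ s : ℝ, |G s * err (-(b * s))| ≤ (D * b ^ 4) * (s ^ 4 * G s) := by
    intro s
    calc |G s * err (-(b * s))| = G s * |err (-(b * s))| := by
          rw [abs_mul, abs_of_nonneg (hGnn s)]
      _ ≤ G s * (D * (-(b * s)) ^ 4) := mul_le_mul_of_nonneg_left (hDerr _) (hGnn s)
      _ = (D * b ^ 4) * (s ^ 4 * G s) := by ring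
  have hb4 : (0:ℝ) ≤ b ^ 4 := by positivity
  calc |∫ s, G s * err (-(b * s))| ≤ ∫ s, |G s * err (-(b * s))| := by
        have := norm_integral_le_integral_norm (μ := (volume : Measure ℝ))
          (fun s => G s * err (-(b * s)))
        simpa only [Real.norm_eq_abs] using this
    _ ≤ ∫ s, (D * b ^ 4) * (s ^ 4 * G s) :=
        integral_mono W.abs ((hGj 4 le_rfl).const_mul _) hptw
    _ = (D * b ^ 4) * Cψ := by rw [integral_const_mul]
    _ ≤ (D * Cψ + 1) * b ^ 4 := by nlinarith
end

section
/- For every n ≥ 2, the (n−1)-dimensional volume of the scaled regular permutohedron satisfies Vol_{n−1}(Π_n) = n^{n−2}/(n−1)^{n−1}; equivalently, the Lebesgue measure in ℝ^{n−1} of the projection of Π_n obtained by deleting the last coordinate equals n^{n−2}/(n−1)^{n−1}. -/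
open MeasureTheory

namespace Stmt10

open Finset

lemma int_aux {M : ℕ} {d : ℤ} (hd : (M:ℤ) ∣ d) : (M:ℤ) * |d| ≤ d^2 := by
  rcases eq_or_ne d 0 with rfl | h
  · simp
  · have h1 : (M:ℤ) ≤ |d| := Int.le_of_dvd (abs_pos.mpr h) ((dvd_abs _ _).mpr hd)
    calc (M:ℤ) * |d| ≤ |d| * |d| := by
          apply mul_le_mul_of_nonneg_right h1 (abs_nonneg d)
      _ = d^2 := by rw [← abs_mul, ← sq, abs_sq]

/-- The key integer inequality: if `c` sums to zero on `range M` and all pairwise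
differences are divisible by `M`, then `2 ∑ k·c k ≤ ∑ c k ^ 2`. -/
lemma key_ineq (M : ℕ) (c : ℕ → ℤ)
    (h0 : ∑ k ∈ range M, c k = 0)
    (hd : ∀ j ∈ range M, ∀ k ∈ range M, (M:ℤ) ∣ c j - c k) :
    2 * ∑ k ∈ range M, (k:ℤ) * c k ≤ ∑ k ∈ range M, (c k)^2 := by
  rcases Nat.eq_zero_or_pos M with rfl | hM
  · simp
  set s : ℕ → ℕ → ℤ := fun j k => (if k < j then 1 else 0) - (if j < k then 1 else 0) with hs
  have santi : ∀ j k, s j k = - s k j := by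
    intro j k
    simp only [hs]
    ring
  have scount : ∀ j ∈ range M, ∑ k ∈ range M, s j k = 2*(j:ℤ) - M + 1 := by
    intro j hj
    rw [mem_range] at hj
    have h1 : (∑ k ∈ range M, if k < j then (1:ℤ) else 0) = (j:ℤ) := by
      rw [Finset.sum_boole]
      have : (range M).filter (fun k => k < j) = range j := by
        ext k; simp only [mem_filter, mem_range]; omega
      simp [this]
    have h2 : (∑ k ∈ range M, if j < k then (1:ℤ) else 0) = (M:ℤ) - 1 - j := by
      rw [Finset.sum_boole]
      have : (range M).filter (fun k => j < k) = Finset.Ico (j+1) M := by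
        ext k; simp only [mem_filter, mem_range, Finset.mem_Ico]; omega
      rw [this, Nat.card_Ico]
      have : j + 1 ≤ M := hj
      push_cast [Nat.cast_sub this]
      ring
    simp only [hs, Finset.sum_sub_distrib, h1, h2]
    ring
  have split : ∑ j ∈ range M, (2*(j:ℤ) - M + 1) * c j
      = 2 * ∑ j ∈ range M, (j:ℤ) * c j + (1 - M) * ∑ j ∈ range M, c j := by
    rw [Finset.mul_sum, Finset.mul_sum, ← Finset.sum_add_distrib]
    exact Finset.sum_congr rfl fun j _ => by ring
  -- linear double sum
  have S1 : ∑ j ∈ range M, ∑ k ∈ range M, (M:ℤ) * s j k * (c j - c k)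
      = 4 * M * ∑ k ∈ range M, (k:ℤ) * c k := by
    have e1 : ∀ j ∈ range M, ∑ k ∈ range M, (M:ℤ) * s j k * (c j - c k)
        = (M:ℤ) * ((2*(j:ℤ) - M + 1) * c j) - (M:ℤ) * ∑ k ∈ range M, s j k * c k := by
      intro j hj
      have h3 : ∀ k ∈ range M, (M:ℤ) * s j k * (c j - c k)
          = (M:ℤ) * (s j k * c j) - (M:ℤ) * (s j k * c k) := by intro k _; ring
      rw [Finset.sum_congr rfl h3, Finset.sum_sub_distrib, ← Finset.mul_sum, ← Finset.mul_sum,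
        ← Finset.sum_mul, scount j hj]
    have e2 : ∑ j ∈ range M, ∑ k ∈ range M, s j k * c k
        = - ∑ k ∈ range M, (2*(k:ℤ) - M + 1) * c k := by
      rw [Finset.sum_comm, ← Finset.sum_neg_distrib]
      refine Finset.sum_congr rfl fun k hk => ?_
      have h4 : ∀ j ∈ range M, s j k * c k = -(s k j * c k) := by
        intro j _; rw [santi j k]; ring
      rw [Finset.sum_congr rfl h4, Finset.sum_neg_distrib, ← Finset.sum_mul, scount k hk]
    rw [Finset.sum_congr rfl e1, Finset.sum_sub_distrib, ← Finset.mul_sum, ← Finset.mul_sum,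
      e2, split, h0]
    ring
  -- quadratic double sum
  have S2 : ∑ j ∈ range M, ∑ k ∈ range M, (c j - c k)^2
      = 2 * M * ∑ k ∈ range M, (c k)^2 := by
    have e1 : ∀ j ∈ range M, ∑ k ∈ range M, (c j - c k)^2
        = (M:ℤ) * (c j)^2 - 2 * c j * (∑ k ∈ range M, c k) + ∑ k ∈ range M, (c k)^2 := by
      intro j _
      have h3 : ∀ k ∈ range M, (c j - c k)^2 = ((c j)^2 - 2 * c j * c k) + (c k)^2 := by
        intro k _; ring
      rw [Finset.sum_congr rfl h3, Finset.sum_add_distrib, Finset.sum_sub_distrib,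
        Finset.sum_const, card_range, ← Finset.mul_sum]
      push_cast
      ring
    rw [Finset.sum_congr rfl e1]
    simp only [h0, mul_zero, sub_zero]
    rw [Finset.sum_add_distrib, ← Finset.mul_sum, Finset.sum_const, card_range, nsmul_eq_mul]
    push_cast
    ring
  -- termwise comparison
  have hterm : ∀ j ∈ range M, ∀ k ∈ range M,
      (M:ℤ) * s j k * (c j - c k) ≤ (c j - c k)^2 := by
    intro j hj k hk
    have hdvd := hd j hj k hk
    have haux := int_aux (M := M) hdvd
    have habs : (M:ℤ) * s j k * (c j - c k) ≤ (M:ℤ) * |c j - c k| := by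
      rcases lt_trichotomy j k with h | h | h
      · have : s j k = -1 := by simp [hs, h, Nat.lt_asymm h]
        rw [this]
        have : -(c j - c k) ≤ |c j - c k| := neg_le_abs _
        have hMp : (0:ℤ) < M := by exact_mod_cast hM
        nlinarith
      · simp [hs, h]
      · have : s j k = 1 := by simp [hs, h, Nat.lt_asymm h]
        rw [this]
        have : (c j - c k) ≤ |c j - c k| := le_abs_self _
        have hMp : (0:ℤ) < M := by exact_mod_cast hM
        nlinarith
    exact habs.trans haux
  have main : 4 * (M:ℤ) * ∑ k ∈ range M, (k:ℤ) * c k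
      ≤ 2 * M * ∑ k ∈ range M, (c k)^2 := by
    rw [← S1, ← S2]
    exact Finset.sum_le_sum fun j hj => Finset.sum_le_sum (hterm j hj)
  have hMp : (0:ℤ) < M := by exact_mod_cast hM
  have h2 : (2*(M:ℤ)) * (2 * ∑ k ∈ range M, (k:ℤ) * c k) ≤ (2*(M:ℤ)) * ∑ k ∈ range M, (c k)^2 := by
    linarith
  exact le_of_mul_le_mul_left h2 (by positivity)

/-- Abel-summation bound. -/
lemma abel_le (N : ℕ) (ψ : ℕ → ℝ) (hψ : ∀ k, k + 1 < N → ψ k ≤ ψ (k+1))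
    (D : ℕ → ℝ) (h0 : D 0 = 0) (hN : D N = 0) (hD : ∀ k, 0 ≤ D k) :
    ∑ k ∈ range N, ψ k * (D (k+1) - D k) ≤ 0 := by
  have hby := Finset.sum_range_by_parts ψ (fun k => D (k+1) - D k) N
  simp only [smul_eq_mul] at hby
  have htel : ∀ t : ℕ, ∑ i ∈ range t, (D (i+1) - D i) = D t := by
    intro t
    rw [Finset.sum_range_sub (fun i => D i) t, h0, sub_zero]
  rw [hby, htel, hN, mul_zero, zero_sub]
  have : ∀ i ∈ range (N-1), 0 ≤ (ψ (i+1) - ψ i) * D (i+1) := by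
    intro i hi
    rw [mem_range] at hi
    have h1 : i + 1 < N := by omega
    have := hψ i h1
    have := hD (i+1)
    nlinarith
  have hsum : 0 ≤ ∑ i ∈ range (N-1), (ψ (i+1) - ψ i) * ∑ i ∈ range (i+1), (D (i+1) - D i) := by
    apply Finset.sum_nonneg
    intro i hi
    rw [htel]
    exact this i hi
  linarith


/-- Any linear functional on a majorization-constrained point is dominated at
some "permutation vertex". -/
lemma le_vertex (N : ℕ) (φ z : Fin N → ℝ)
    (htot : ∑ j, z j = 0)
    (hub : ∀ S : Finset (Fin N), ∑ j ∈ S, z j ≤ ((S.card : ℝ) * ((N:ℝ) - S.card))/2) :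
    ∃ σ : Equiv.Perm (Fin N),
      ∑ j, φ j * z j ≤ ∑ j, φ j * (((σ j : ℕ) : ℝ) - ((N:ℝ)-1)/2) := by
  classical
  set ρ := Tuple.sort φ with hρ
  set ψ : ℕ → ℝ := fun k => if h : k < N then φ (ρ ⟨k, h⟩) else 0 with hψdef
  set ζ : ℕ → ℝ := fun k => if h : k < N then z (ρ ⟨k, h⟩) else 0 with hζdef
  set Z : ℕ → ℝ := fun t => ∑ k ∈ range t, ζ k with hZdef
  set G : ℕ → ℝ := fun t => (((min t N : ℕ) : ℝ) * (((min t N : ℕ) : ℝ) - (N:ℝ)))/2 with hGdef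
  set D : ℕ → ℝ := fun t => Z (min t N) - G t with hDdef
  have cpsi : ∀ k : Fin N, ψ (k : ℕ) = φ (ρ k) := by
    intro k; simp [hψdef, k.isLt]
  have czeta : ∀ k : Fin N, ζ (k : ℕ) = z (ρ k) := by
    intro k; simp [hζdef, k.isLt]
  -- prefix sums as sums over subsets
  have hZ : ∀ t, t ≤ N → Z t = ∑ j ∈ Finset.image (fun k => ρ k)
      (univ.filter fun k : Fin N => (k : ℕ) < t), z j := by
    intro t ht
    rw [Finset.sum_image (by intro a _ b _ hab; exact ρ.injective hab)]
    rw [Finset.sum_filter]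
    have h1 : ∑ k : Fin N, (if (k : ℕ) < t then z (ρ k) else 0)
        = ∑ k ∈ range N, (if k < t then ζ k else 0) := by
      rw [← Fin.sum_univ_eq_sum_range (fun k => if k < t then ζ k else 0) N]
      exact Finset.sum_congr rfl fun k _ => by rw [czeta]
    rw [h1, ← Finset.sum_filter]
    have h2 : (range N).filter (fun k => k < t) = range t := by
      ext k; simp only [mem_filter, mem_range]; omega
    rw [h2, hZdef]
  have hcard : ∀ t, t ≤ N → (Finset.image (fun k => ρ k)
      (univ.filter fun k : Fin N => (k : ℕ) < t)).card = t := by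
    intro t ht
    rw [Finset.card_image_of_injective _ ρ.injective]
    have h1 : (univ.filter fun k : Fin N => (k : ℕ) < t)
        = (range t).attachFin (fun m hm => lt_of_lt_of_le (mem_range.mp hm) ht) := by
      ext k
      simp [Finset.mem_attachFin]
    rw [h1, Finset.card_attachFin, card_range]
  have hlb : ∀ t, t ≤ N → G t ≤ Z t := by
    intro t ht
    set S := Finset.image (fun k => ρ k) (univ.filter fun k : Fin N => (k : ℕ) < t) with hS
    have h1 : Z t = - ∑ j ∈ Sᶜ, z j := by
      rw [hZ t ht]
      have := Finset.sum_add_sum_compl S z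
      rw [htot] at this
      linarith
    have h2 : ∑ j ∈ Sᶜ, z j ≤ (((Sᶜ).card : ℝ) * ((N:ℝ) - (Sᶜ).card))/2 := hub _
    have h3 : ((Sᶜ).card : ℝ) = (N:ℝ) - t := by
      rw [Finset.card_compl, hcard t ht]
      have : t ≤ Fintype.card (Fin N) := by rwa [Fintype.card_fin]
      push_cast [Nat.cast_sub this]
      rw [Fintype.card_fin]
    have ht' : min t N = t := min_eq_left ht
    rw [hGdef]
    simp only [ht']
    rw [h3] at h2
    nlinarith [h1, h2]
  have hD0 : D 0 = 0 := by
    simp [hDdef, hGdef, hZdef]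
  have hZN : Z N = 0 := by
    simp only [hZdef]
    have h1 : ∑ k ∈ range N, ζ k = ∑ k : Fin N, z (ρ k) := by
      rw [← Fin.sum_univ_eq_sum_range (fun k => ζ k) N]
      exact Finset.sum_congr rfl fun k _ => czeta k
    rw [h1, Equiv.sum_comp ρ z, htot]
  have hDN : D N = 0 := by
    simp only [hDdef, hGdef, min_self, hZN]
    ring
  have hDpos : ∀ k, 0 ≤ D k := by
    intro k
    have h1 : min k N ≤ N := min_le_right _ _
    have := hlb (min k N) h1
    simp only [hDdef, hGdef, min_assoc, min_self]
    have h2 : min (min k N) N = min k N := by rw [min_assoc, min_self]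
    rw [hGdef] at this
    simp only [h2] at this ⊢
    linarith
  have hψmono : ∀ k, k + 1 < N → ψ k ≤ ψ (k+1) := by
    intro k hk
    have h1 : k < N := by omega
    simp only [hψdef, dif_pos hk, dif_pos h1]
    have := Tuple.monotone_sort φ (a := ⟨k, h1⟩) (b := ⟨k+1, hk⟩) (by simp [Fin.le_def])
    simpa using this
  -- main computation
  refine ⟨ρ.symm, ?_⟩
  have e1 : ∑ j, φ j * z j = ∑ k ∈ range N, ψ k * ζ k := by
    rw [← Equiv.sum_comp ρ (fun j => φ j * z j),
      ← Fin.sum_univ_eq_sum_range (fun k => ψ k * ζ k) N]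
    exact Finset.sum_congr rfl fun k _ => by rw [cpsi, czeta]
  have e2 : ∀ k ∈ range N, ψ k * ζ k
      = ψ k * (D (k+1) - D k) + ψ k * ((k:ℝ) - ((N:ℝ)-1)/2) := by
    intro k hk
    rw [mem_range] at hk
    have hk1 : k + 1 ≤ N := hk
    have hmin1 : min (k+1) N = k + 1 := min_eq_left hk1
    have hmin2 : min k N = k := min_eq_left (le_of_lt hk)
    have hGd : G (k+1) - G k = (k:ℝ) - ((N:ℝ)-1)/2 := by
      simp only [hGdef, hmin1, hmin2]
      push_cast
      ring
    have hZd : Z (k+1) - Z k = ζ k := by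
      simp only [hZdef, Finset.sum_range_succ]
      ring
    have hDd : D (k+1) - D k = ζ k - ((k:ℝ) - ((N:ℝ)-1)/2) := by
      simp only [hDdef, hmin1, hmin2]
      rw [← hGd]
      have : Z (k+1) = Z k + ζ k := by rw [← hZd]; ring
      rw [this]
      ring
    rw [hDd]
    ring
  rw [e1, Finset.sum_congr rfl e2, Finset.sum_add_distrib]
  have e3 : ∑ k ∈ range N, ψ k * (D (k+1) - D k) ≤ 0 :=
    abel_le N ψ hψmono D hD0 hDN hDpos
  have e4 : ∑ k ∈ range N, ψ k * ((k:ℝ) - ((N:ℝ)-1)/2)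
      = ∑ j, φ j * (((ρ.symm j : ℕ) : ℝ) - ((N:ℝ)-1)/2) := by
    rw [← Fin.sum_univ_eq_sum_range (fun k => ψ k * ((k:ℝ) - ((N:ℝ)-1)/2)) N]
    rw [← Equiv.sum_comp ρ (fun j => φ j * (((ρ.symm j : ℕ) : ℝ) - ((N:ℝ)-1)/2))]
    refine Finset.sum_congr rfl fun k _ => ?_
    rw [cpsi, Equiv.symm_apply_apply]
  rw [e4] at *
  linarith


noncomputable section
variable (m : ℕ)

/-- Bilinear form on `ℝ^m` induced by the standard inner product on the
hyperplane `{sum = 0}` of `ℝ^(m+1)` via deleting the last coordinate. -/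
def Bf (y w : Fin m → ℝ) : ℝ := (∑ i, y i * w i) + (∑ i, y i) * (∑ i, w i)

def Qf (y : Fin m → ℝ) : ℝ := Bf m y y

/-- Lift a vector in `ℝ^m` to the hyperplane `{sum = 0}` of `ℝ^(m+1)`. -/
def lift (y : Fin m → ℝ) : Fin (m+1) → ℝ := Fin.snoc y (-∑ i, y i)

lemma lift_castSucc (y : Fin m → ℝ) (i : Fin m) : lift m y i.castSucc = y i :=
  Fin.snoc_castSucc _ _ _

lemma lift_last (y : Fin m → ℝ) : lift m y (Fin.last m) = -∑ i, y i :=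
  Fin.snoc_last _ _

lemma sum_lift (y : Fin m → ℝ) : ∑ j, lift m y j = 0 := by
  rw [Fin.sum_univ_castSucc]
  simp [lift_castSucc, lift_last]

lemma sum_lift_mul (y w : Fin m → ℝ) :
    ∑ j, lift m y j * lift m w j = Bf m y w := by
  rw [Fin.sum_univ_castSucc]
  simp only [lift_castSucc, lift_last, Bf]
  ring

lemma lift_sub (y w : Fin m → ℝ) : lift m (y - w) = lift m y - lift m w := by
  funext j
  induction j using Fin.lastCases with
  | last =>
    simp only [lift_last, Pi.sub_apply, Finset.sum_sub_distrib]
    ring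
  | cast i => simp [lift_castSucc]

lemma Bf_add_left (y z w : Fin m → ℝ) :
    Bf m (y + z) w = Bf m y w + Bf m z w := by
  simp only [Bf, Pi.add_apply, add_mul, Finset.sum_add_distrib]
  ring

lemma Bf_smul_left (c : ℝ) (y w : Fin m → ℝ) :
    Bf m (c • y) w = c * Bf m y w := by
  simp only [Bf, Pi.smul_apply, smul_eq_mul, mul_assoc, ← Finset.mul_sum]
  ring

lemma Bf_comm (y w : Fin m → ℝ) : Bf m y w = Bf m w y := by
  simp only [Bf]
  rw [Finset.sum_congr rfl fun i (_ : i ∈ univ) => mul_comm (y i) (w i)]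
  ring

lemma Bf_sub_right (y w v : Fin m → ℝ) :
    Bf m y (w - v) = Bf m y w - Bf m y v := by
  simp only [Bf, Pi.sub_apply, mul_sub, Finset.sum_sub_distrib]
  ring

lemma Qf_sub (y l : Fin m → ℝ) :
    Qf m (y - l) = Qf m y - 2 * Bf m y l + Qf m l := by
  simp only [Qf, Bf, Pi.sub_apply]
  rw [Finset.sum_congr rfl (fun x (_ : x ∈ univ) => (by ring :
    (y x - l x) * (y x - l x) = y x * y x - 2*(y x * l x) + l x * l x)),
    show ∑ x, (y x - l x) = ∑ x, y x - ∑ x, l x from Finset.sum_sub_distrib _ _]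
  rw [Finset.sum_add_distrib, Finset.sum_sub_distrib, ← Finset.mul_sum]
  ring

lemma Qf_nonneg (y : Fin m → ℝ) : 0 ≤ Qf m y := by
  have h1 : 0 ≤ ∑ i, y i * y i := Finset.sum_nonneg fun i _ => mul_self_nonneg _
  have h2 : 0 ≤ (∑ i, y i) * (∑ i, y i) := mul_self_nonneg _
  simp only [Qf, Bf]
  linarith

lemma Qf_pos {y : Fin m → ℝ} (hy : y ≠ 0) : 0 < Qf m y := by
  obtain ⟨i, hi⟩ : ∃ i, y i ≠ 0 := by
    by_contra h
    push_neg at h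
    exact hy (funext h)
  have h1 : y i * y i ≤ ∑ i, y i * y i :=
    Finset.single_le_sum (f := fun i => y i * y i) (fun i _ => mul_self_nonneg _) (mem_univ i)
  have h2 : 0 < y i * y i := mul_self_pos.mpr hi
  have h3 : 0 ≤ (∑ i, y i) * (∑ i, y i) := mul_self_nonneg _
  simp only [Qf, Bf]
  linarith

/-- Lattice basis vectors. -/
def bvec (i : Fin m) : Fin m → ℝ := fun j => ((m:ℝ)+1) * (if i = j then 1 else 0) - 1

/-- A generic integer combination of the `bvec`s. -/
def latvec (a : Fin m → ℤ) : Fin m → ℝ := fun j => ((m:ℝ)+1) * (a j : ℝ) - ((∑ i, a i : ℤ) : ℝ)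

lemma sum_zsmul_bvec (a : Fin m → ℤ) : ∑ i, a i • bvec m i = latvec m a := by
  funext j
  rw [Finset.sum_apply]
  have h1 : ∀ i ∈ univ, (a i • bvec m i) j
      = (if i = j then (a i:ℝ) * ((m:ℝ)+1) else 0) - (a i : ℝ) := by
    intro i _
    simp only [Pi.smul_apply, bvec, zsmul_eq_mul]
    split_ifs with h <;> ring
  rw [Finset.sum_congr rfl h1, Finset.sum_sub_distrib,
    Finset.sum_ite_eq' univ j (fun i => (a i : ℝ) * ((m:ℝ)+1))]
  simp only [mem_univ, if_true, latvec]
  push_cast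
  ring

lemma mem_lat_iff {l : Fin m → ℝ} :
    l ∈ Submodule.span ℤ (Set.range (bvec m)) ↔ ∃ a : Fin m → ℤ, l = latvec m a := by
  rw [Submodule.mem_span_range_iff_exists_fun]
  constructor
  · rintro ⟨a, ha⟩
    exact ⟨a, by rw [← ha, sum_zsmul_bvec]⟩
  · rintro ⟨a, ha⟩
    exact ⟨a, by rw [sum_zsmul_bvec, ha]⟩

/-- The integer lift of a lattice vector. -/
def cInt (a : Fin m → ℤ) : Fin (m+1) → ℤ :=
  fun j => ((m:ℤ)+1) * ((Fin.snoc a 0 : Fin (m+1) → ℤ) j) - ∑ i, a i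

lemma sum_snoc_zero (a : Fin m → ℤ) : ∑ j, (Fin.snoc a 0 : Fin (m+1) → ℤ) j = ∑ i, a i := by
  rw [Fin.sum_univ_castSucc]
  simp

lemma sum_cInt (a : Fin m → ℤ) : ∑ j, cInt m a j = 0 := by
  simp only [cInt, Finset.sum_sub_distrib, ← Finset.mul_sum, sum_snoc_zero,
    Finset.sum_const, card_univ, Fintype.card_fin, nsmul_eq_mul]
  push_cast
  ring

lemma cInt_dvd (a : Fin m → ℤ) (j k : Fin (m+1)) :
    ((m:ℤ)+1) ∣ cInt m a j - cInt m a k := by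
  simp only [cInt]
  have : ((m:ℤ)+1) * ((Fin.snoc a 0 : Fin (m+1) → ℤ) j) - (∑ i, a i)
        - (((m:ℤ)+1) * ((Fin.snoc a 0 : Fin (m+1) → ℤ) k) - ∑ i, a i)
      = ((m:ℤ)+1) * (((Fin.snoc a 0 : Fin (m+1) → ℤ) j) - ((Fin.snoc a 0 : Fin (m+1) → ℤ) k)) := by
    ring
  rw [this]
  exact Dvd.intro _ rfl

lemma lift_latvec (a : Fin m → ℤ) :
    lift m (latvec m a) = fun j => ((cInt m a j : ℤ) : ℝ) := by
  funext j
  induction j using Fin.lastCases with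
  | last =>
    rw [lift_last]
    simp only [latvec, Finset.sum_sub_distrib, ← Finset.mul_sum, Finset.sum_const, card_univ,
      Fintype.card_fin, nsmul_eq_mul, cInt, Fin.snoc_last]
    push_cast
    ring
  | cast i =>
    rw [lift_castSucc]
    simp only [latvec, cInt, Fin.snoc_castSucc]
    push_cast
    ring

/-- Permutohedron vertices (centered, scaled to integer values). -/
def vert (σ : Equiv.Perm (Fin (m+1))) : Fin m → ℝ :=
  fun i => ((σ i.castSucc : ℕ) : ℝ) - (m:ℝ)/2

def VertSet : Set (Fin m → ℝ) := Set.range (vert m)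

def P0 : Set (Fin m → ℝ) := convexHull ℝ (VertSet m)

lemma sum_val_univ : ∑ j : Fin (m+1), ((j : ℕ) : ℝ) = ((m:ℝ)+1) * m / 2 := by
  rw [Fin.sum_univ_eq_sum_range (fun k => (k:ℝ)) (m+1)]
  have h1 : ∑ k ∈ range (m+1), (k:ℝ) = ((∑ k ∈ range (m+1), k : ℕ) : ℝ) := by push_cast; rfl
  rw [h1]
  have h2 : (∑ k ∈ range (m+1), k) * 2 = (m+1) * m := by
    rw [Finset.sum_range_id_mul_two (m+1)]
    simp
  have h3 : ((∑ k ∈ range (m+1), k : ℕ) : ℝ) * 2 = ((m:ℝ)+1) * m := by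
    exact_mod_cast congrArg (fun x : ℕ => (x : ℝ)) h2
  linarith

lemma lift_vert (σ : Equiv.Perm (Fin (m+1))) :
    lift m (vert m σ) = fun j => ((σ j : ℕ) : ℝ) - (m:ℝ)/2 := by
  funext j
  induction j using Fin.lastCases with
  | last =>
    rw [lift_last]
    have h1 : ∑ i : Fin m, vert m σ i
        = (∑ j : Fin (m+1), (((σ j : ℕ) : ℝ) - (m:ℝ)/2)) - (((σ (Fin.last m) : ℕ) : ℝ) - (m:ℝ)/2) := by
      rw [Fin.sum_univ_castSucc (f := fun j => ((σ j : ℕ) : ℝ) - (m:ℝ)/2)]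
      simp [vert]
    have h2 : ∑ j : Fin (m+1), (((σ j : ℕ) : ℝ) - (m:ℝ)/2) = 0 := by
      rw [Finset.sum_sub_distrib]
      rw [Equiv.sum_comp σ (fun j => ((j : ℕ) : ℝ)), sum_val_univ]
      simp only [Finset.sum_const, card_univ, Fintype.card_fin, nsmul_eq_mul]
      push_cast
      ring
    rw [h1, h2]
    ring
  | cast i =>
    rw [lift_castSucc]
    rfl

/-- The Voronoi-type cell of the lattice. -/
def Vor : Set (Fin m → ℝ) :=
  {y | ∀ l ∈ Submodule.span ℤ (Set.range (bvec m)), 2 * Bf m y l ≤ Qf m l}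

/-- Every vertex lies in the Voronoi cell: the key geometric inequality. -/
lemma vert_mem_Vor (σ : Equiv.Perm (Fin (m+1))) : vert m σ ∈ Vor m := by
  intro l hl
  obtain ⟨a, rfl⟩ := (mem_lat_iff m).mp hl
  -- the integer vector, permuted
  set d : ℕ → ℤ := fun k => if h : k < m+1 then cInt m a (σ.symm ⟨k, h⟩) else 0 with hd
  have hdval : ∀ k : Fin (m+1), d (k : ℕ) = cInt m a (σ.symm k) := by
    intro k; simp [hd, Nat.lt_succ_iff.mp k.isLt]
  have h0 : ∑ k ∈ range (m+1), d k = 0 := by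
    rw [← Fin.sum_univ_eq_sum_range (fun k => d k) (m+1)]
    rw [Finset.sum_congr rfl fun k _ => hdval k]
    rw [Equiv.sum_comp σ.symm (fun j => cInt m a j)]
    exact sum_cInt m a
  have hdvd : ∀ j ∈ range (m+1), ∀ k ∈ range (m+1), ((m+1 : ℕ):ℤ) ∣ d j - d k := by
    intro j hj k hk
    rw [mem_range] at hj hk
    have := cInt_dvd m a (σ.symm ⟨j, hj⟩) (σ.symm ⟨k, hk⟩)
    push_cast
    simpa [hd, Nat.lt_succ_iff.mp hj, Nat.lt_succ_iff.mp hk] using this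
  have key := key_ineq (m+1) d h0 hdvd
  -- translate to the real statement
  have hBf : Bf m (vert m σ) (latvec m a) = ∑ j : Fin (m+1), ((σ j : ℕ) : ℝ) * ((cInt m a j : ℤ) : ℝ) := by
    rw [← sum_lift_mul, lift_vert, lift_latvec]
    have hsplit : ∀ j : Fin (m+1), (((σ j : ℕ) : ℝ) - (m:ℝ)/2) * ((cInt m a j : ℤ) : ℝ)
        = ((σ j : ℕ) : ℝ) * ((cInt m a j : ℤ) : ℝ) - ((m:ℝ)/2) * ((cInt m a j : ℤ) : ℝ) := by
      intro j; ring
    rw [Finset.sum_congr rfl fun j _ => hsplit j, Finset.sum_sub_distrib, ← Finset.mul_sum]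
    have : ∑ j : Fin (m+1), ((cInt m a j : ℤ) : ℝ) = 0 := by
      rw [← Int.cast_sum]
      rw [sum_cInt]
      simp
    rw [this, mul_zero, sub_zero]
  have hQf : Qf m (latvec m a) = ∑ j : Fin (m+1), (((cInt m a j : ℤ) : ℝ))^2 := by
    rw [Qf, ← sum_lift_mul, lift_latvec]
    exact Finset.sum_congr rfl fun j _ => (sq _).symm
  have hlin : ∑ j : Fin (m+1), ((σ j : ℕ) : ℝ) * ((cInt m a j : ℤ) : ℝ)
      = ((∑ k ∈ range (m+1), (k:ℤ) * d k : ℤ) : ℝ) := by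
    rw [← Equiv.sum_comp σ.symm (fun j => ((σ j : ℕ) : ℝ) * ((cInt m a j : ℤ) : ℝ))]
    push_cast
    rw [← Fin.sum_univ_eq_sum_range (fun k => (k:ℝ) * ((d k : ℤ) : ℝ)) (m+1)]
    refine Finset.sum_congr rfl fun k _ => ?_
    rw [hdval k, Equiv.apply_symm_apply]
  have hsq : ∑ j : Fin (m+1), (((cInt m a j : ℤ) : ℝ))^2
      = ((∑ k ∈ range (m+1), (d k)^2 : ℤ) : ℝ) := by
    rw [← Equiv.sum_comp σ.symm (fun j => (((cInt m a j : ℤ) : ℝ))^2)]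
    push_cast
    rw [← Fin.sum_univ_eq_sum_range (fun k => ((d k : ℤ) : ℝ)^2) (m+1)]
    refine Finset.sum_congr rfl fun k _ => ?_
    rw [hdval k]
  have keyR : 2 * ((∑ k ∈ range (m+1), (k:ℤ) * d k : ℤ) : ℝ)
      ≤ ((∑ k ∈ range (m+1), (d k)^2 : ℤ) : ℝ) := by exact_mod_cast key
  rw [hBf, hlin, hQf, hsq]
  exact keyR




lemma convex_Vor : Convex ℝ (Vor m) := by
  intro y hy z hz a b ha hb hab
  intro l hl
  have h1 := hy l hl
  have h2 := hz l hl
  have h3 : Bf m (a • y + b • z) l = a * Bf m y l + b * Bf m z l := by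
    rw [Bf_add_left, Bf_smul_left, Bf_smul_left]
  rw [h3]
  have h4 := mul_le_mul_of_nonneg_left h1 ha
  have h5 := mul_le_mul_of_nonneg_left h2 hb
  have h6 : a * Qf m l + b * Qf m l = Qf m l := by rw [← add_mul, hab, one_mul]
  linarith

lemma P0_subset_Vor : P0 m ⊆ Vor m :=
  convexHull_min (by rintro v ⟨σ, rfl⟩; exact vert_mem_Vor m σ) (convex_Vor m)

lemma snoc_indicator (T : Finset (Fin (m+1))) (hT : Fin.last m ∉ T) (e : ℤ) :
    (Fin.snoc (fun i : Fin m => if i.castSucc ∈ T then e else 0) 0 : Fin (m+1) → ℤ)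
      = fun j => if j ∈ T then e else 0 := by
  funext j
  induction j using Fin.lastCases with
  | last => simp [hT]
  | cast i => simp

lemma sum_ite_univ (A B : ℝ) (T : Finset (Fin (m+1))) :
    ∑ j : Fin (m+1), (if j ∈ T then A else B)
      = (T.card : ℝ) * A + (((m:ℝ)+1) - T.card) * B := by
  have h1 : ∀ j : Fin (m+1), (if j ∈ T then A else B)
      = (if j ∈ T then A - B else 0) + B := by
    intro j; split_ifs <;> ring
  rw [Finset.sum_congr rfl fun j _ => h1 j, Finset.sum_add_distrib]
  rw [Finset.sum_ite_mem, Finset.univ_inter, Finset.sum_const, Finset.sum_const]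
  simp only [card_univ, Fintype.card_fin, nsmul_eq_mul]
  push_cast
  ring

/-- The constraint extracted from the Voronoi condition, for subsets avoiding the
last coordinate, in both signs. -/
lemma vor_constraint {y : Fin m → ℝ} (hy : y ∈ Vor m)
    (T : Finset (Fin (m+1))) (hT : Fin.last m ∉ T) (e : ℤ) (he : e = 1 ∨ e = -1) :
    (e:ℝ) * ∑ j ∈ T, lift m y j ≤ ((T.card : ℝ) * (((m:ℝ)+1) - T.card))/2 := by
  set a : Fin m → ℤ := fun i => if i.castSucc ∈ T then e else 0 with ha
  have hmem : latvec m a ∈ Submodule.span ℤ (Set.range (bvec m)) :=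
    (mem_lat_iff m).mpr ⟨a, rfl⟩
  have hkey := hy _ hmem
  have hsnoc : (Fin.snoc a 0 : Fin (m+1) → ℤ) = fun j => if j ∈ T then e else 0 :=
    snoc_indicator m T hT e
  have hsuma : (∑ i, a i) = e * T.card := by
    have h1 : ∑ j : Fin (m+1), (Fin.snoc a 0 : Fin (m+1) → ℤ) j = ∑ i, a i :=
      sum_snoc_zero m a
    rw [hsnoc] at h1
    rw [← h1, Finset.sum_ite_mem, Finset.univ_inter, Finset.sum_const]
    simp [mul_comm]
  have hcMem : ∀ j, ((cInt m a j : ℤ) : ℝ)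
      = ((m:ℝ)+1) * (if j ∈ T then (e:ℝ) else 0) - (e:ℝ) * T.card := by
    intro j
    simp only [cInt, hsnoc, hsuma]
    push_cast [apply_ite (fun x : ℤ => (x:ℝ))]
    ring
  -- compute Bf
  have hBf : Bf m y (latvec m a) = ((m:ℝ)+1) * ((e:ℝ) * ∑ j ∈ T, lift m y j) := by
    rw [← sum_lift_mul, lift_latvec]
    simp only [hcMem]
    have h2 : ∀ j, lift m y j * (((m:ℝ)+1) * (if j ∈ T then (e:ℝ) else 0) - (e:ℝ) * T.card)
        = ((m:ℝ)+1) * (if j ∈ T then lift m y j * e else 0) - ((e:ℝ) * T.card) * lift m y j := by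
      intro j; split_ifs <;> ring
    rw [Finset.sum_congr rfl fun j _ => h2 j, Finset.sum_sub_distrib, ← Finset.mul_sum,
      ← Finset.mul_sum, sum_lift, mul_zero, sub_zero, Finset.sum_ite_mem, Finset.univ_inter,
      ← Finset.sum_mul]
    ring
  -- compute Qf
  have hQf : Qf m (latvec m a) = ((m:ℝ)+1) * ((T.card:ℝ) * (((m:ℝ)+1) - T.card)) := by
    rw [Qf, ← sum_lift_mul, lift_latvec]
    simp only [hcMem]
    have he2 : (e:ℝ)^2 = 1 := by rcases he with rfl | rfl <;> norm_num
    have h2 : ∀ j : Fin (m+1),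
        (((m:ℝ)+1) * (if j ∈ T then (e:ℝ) else 0) - (e:ℝ) * T.card)
        * (((m:ℝ)+1) * (if j ∈ T then (e:ℝ) else 0) - (e:ℝ) * T.card)
        = if j ∈ T then (e:ℝ)^2 * (((m:ℝ)+1) - T.card)^2 else (e:ℝ)^2 * (T.card:ℝ)^2 := by
      intro j; split_ifs <;> ring
    rw [Finset.sum_congr rfl fun j _ => h2 j, sum_ite_univ]
    rw [he2]
    ring
  rw [hBf, hQf] at hkey
  have hm1 : (0:ℝ) < (m:ℝ)+1 := by positivity
  nlinarith

lemma vor_sum_le {y : Fin m → ℝ} (hy : y ∈ Vor m) (S : Finset (Fin (m+1))) :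
    ∑ j ∈ S, lift m y j ≤ ((S.card : ℝ) * (((m:ℝ)+1) - S.card))/2 := by
  by_cases hS : Fin.last m ∈ S
  · have hT : Fin.last m ∉ Sᶜ := by simp [hS]
    have h1 := vor_constraint m hy Sᶜ hT (-1) (Or.inr rfl)
    have h2 : ∑ j ∈ S, lift m y j + ∑ j ∈ Sᶜ, lift m y j = 0 := by
      rw [Finset.sum_add_sum_compl]
      exact sum_lift m y
    have h3 : (Sᶜ.card : ℝ) = ((m:ℝ)+1) - S.card := by
      rw [Finset.card_compl]
      have h4 : S.card ≤ Fintype.card (Fin (m+1)) := Finset.card_le_univ S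
      rw [Nat.cast_sub h4]
      simp
    rw [h3] at h1
    push_cast at h1
    nlinarith
  · have h1 := vor_constraint m hy S hS 1 (Or.inl rfl)
    push_cast at h1
    linarith

lemma Vor_subset_P0 : Vor m ⊆ P0 m := by
  intro y hy
  by_contra hyP
  have hfin : (VertSet m).Finite := Set.finite_range _
  have hconv : Convex ℝ (P0 m) := convex_convexHull ℝ _
  have hclosed : IsClosed (P0 m) := hfin.isClosed_convexHull (𝕜 := ℝ)
  obtain ⟨f, u, hfy, hfb⟩ := geometric_hahn_banach_point_closed hconv hclosed hyP
  set φ : Fin m → ℝ := fun i => -(f (fun j => if i = j then (1:ℝ) else 0)) with hφ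
  have hrep : ∀ w : Fin m → ℝ, ∑ i, φ i * w i = -(f w) := by
    intro w
    have h1 : ∑ i, φ i * w i
        = -∑ i, f (w i • fun j => if i = j then (1:ℝ) else 0) := by
      rw [← Finset.sum_neg_distrib]
      refine Finset.sum_congr rfl fun i _ => ?_
      rw [f.map_smul, hφ]
      simp only [smul_eq_mul]
      ring
    rw [h1, ← map_sum, ← pi_eq_sum_univ w]
  set φh : Fin (m+1) → ℝ := Fin.snoc φ 0 with hφh
  have hub : ∀ S : Finset (Fin (m+1)), ∑ j ∈ S, lift m y j
      ≤ ((S.card : ℝ) * (((m+1:ℕ):ℝ) - S.card))/2 := by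
    intro S
    have := vor_sum_le m hy S
    push_cast
    push_cast at this
    linarith
  obtain ⟨σ, hσ⟩ := le_vertex (m+1) φh (lift m y) (sum_lift m y) hub
  have hL : ∑ j, φh j * lift m y j = -(f y) := by
    rw [Fin.sum_univ_castSucc (f := fun j => φh j * lift m y j)]
    simp only [hφh, Fin.snoc_castSucc, Fin.snoc_last, zero_mul, add_zero]
    rw [Finset.sum_congr rfl fun i (_ : i ∈ univ) => by rw [lift_castSucc]]
    exact hrep y
  have hR : ∑ j, φh j * (((σ j : ℕ) : ℝ) - (((m+1:ℕ):ℝ)-1)/2) = -(f (vert m σ)) := by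
    rw [Fin.sum_univ_castSucc (f := fun j => φh j * (((σ j : ℕ) : ℝ) - (((m+1:ℕ):ℝ)-1)/2))]
    simp only [hφh, Fin.snoc_castSucc, Fin.snoc_last, zero_mul, add_zero]
    have h5 : ∀ i : Fin m, ((σ i.castSucc : ℕ) : ℝ) - (((m+1:ℕ):ℝ)-1)/2 = vert m σ i := by
      intro i
      simp only [vert]
      push_cast
      ring
    rw [Finset.sum_congr rfl fun i (_ : i ∈ univ) => by rw [h5 i]]
    exact hrep (vert m σ)
  rw [hL, hR] at hσ
  have hvP : vert m σ ∈ P0 m := subset_convexHull ℝ _ ⟨σ, rfl⟩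
  have := hfb _ hvP
  linarith


def Mm : Matrix (Fin m) (Fin m) ℝ :=
  Matrix.of fun i j => ((m:ℝ)+1) * (if i = j then 1 else 0) - 1

lemma Mm_det (hm : 1 ≤ m) : (Mm m).det = ((m:ℝ)+1)^(m-1) := by
  have hne : ((m:ℝ)+1) ≠ 0 := by positivity
  have h1 : Mm m = ((m:ℝ)+1) • (1 + Matrix.replicateCol Unit (fun _ => -(((m:ℝ)+1))⁻¹)
      * Matrix.replicateRow Unit (fun _ => (1:ℝ))) := by
    ext i j
    simp only [Mm, Matrix.of_apply, Matrix.smul_apply, Matrix.add_apply, Matrix.one_apply,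
      Matrix.mul_apply, Matrix.replicateCol_apply, Matrix.replicateRow_apply, Finset.univ_unique,
      Finset.sum_singleton, smul_eq_mul]
    split_ifs <;> field_simp <;> ring
  rw [h1, Matrix.det_smul, Matrix.det_one_add_replicateCol_mul_replicateRow]
  have h2 : dotProduct (fun _ : Fin m => (1:ℝ)) (fun _ : Fin m => -((m:ℝ)+1)⁻¹)
      = -(m * (((m:ℝ)+1))⁻¹) := by
    simp [dotProduct, Finset.sum_const, card_univ]
  rw [h2, Fintype.card_fin]
  obtain ⟨m', rfl⟩ : ∃ m', m = m' + 1 := ⟨m-1, by omega⟩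
  have h3 : (1 : ℝ) + -((↑(m' + 1) : ℝ) * ((↑(m' + 1) : ℝ)+1)⁻¹) = ((↑(m' + 1) : ℝ)+1)⁻¹ := by
    field_simp
    ring
  rw [h3, pow_succ]
  simp only [Nat.add_sub_cancel]
  rw [mul_assoc, mul_inv_cancel₀ hne, mul_one]

lemma Mm_det_ne (hm : 1 ≤ m) : (Mm m).det ≠ 0 := by
  rw [Mm_det m hm]
  positivity

noncomputable def MmInv (hm : 1 ≤ m) : Invertible (Mm m) :=
  Matrix.invertibleOfIsUnitDet _ (isUnit_iff_ne_zero.mpr (Mm_det_ne m hm))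

noncomputable def bb (hm : 1 ≤ m) : Module.Basis (Fin m) ℝ (Fin m → ℝ) :=
  (Pi.basisFun ℝ (Fin m)).map ((Mm m).toLinearEquiv' (MmInv m hm))

lemma bb_apply (hm : 1 ≤ m) (i : Fin m) : bb m hm i = bvec m i := by
  rw [bb, Module.Basis.map_apply]
  have h0 := Matrix.toLinearEquiv'_apply (Mm m) (MmInv m hm)
  have h1 : ((Mm m).toLinearEquiv' (MmInv m hm)) ((Pi.basisFun ℝ (Fin m)) i)
      = Matrix.toLin' (Mm m) ((Pi.basisFun ℝ (Fin m)) i) :=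
    DFunLike.congr_fun h0 ((Pi.basisFun ℝ (Fin m)) i)
  rw [h1, Matrix.toLin'_apply]
  funext j
  rw [Pi.basisFun_apply]
  rw [Matrix.mulVec_single]
  simp only [Mm, Matrix.of_apply, bvec, mul_one]
  simp only [MulOpposite.op_one, one_smul, Matrix.col_apply, Matrix.of_apply]
  rw [show (if j = i then (1:ℝ) else 0) = (if i = j then 1 else 0) by simp [eq_comm]]

lemma bb_coe (hm : 1 ≤ m) : ⇑(bb m hm) = bvec m := funext (bb_apply m hm)

lemma hQc : Continuous (Qf m) := by
  unfold Qf Bf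
  exact ((continuous_finset_sum _ fun i _ => (continuous_apply i).mul (continuous_apply i)).add
    ((continuous_finset_sum _ fun i _ => continuous_apply i).mul
      (continuous_finset_sum _ fun i _ => continuous_apply i)))

lemma vor_isClosed : IsClosed (Vor m) := by
  have h1 : Vor m = ⋂ l ∈ (Submodule.span ℤ (Set.range (bvec m)) : Set (Fin m → ℝ)),
      {y | 2 * Bf m y l ≤ Qf m l} := by
    ext y
    simp only [Vor, Set.mem_setOf_eq, Set.mem_iInter, SetLike.mem_coe]
  rw [h1]
  refine isClosed_biInter fun l _ => isClosed_le ?_ continuous_const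
  refine continuous_const.mul ?_
  unfold Bf
  exact ((continuous_finset_sum _ fun i _ => (continuous_apply i).mul continuous_const).add
    ((continuous_finset_sum _ fun i _ => continuous_apply i).mul continuous_const))

lemma mem_vor_iff (y : Fin m → ℝ) :
    y ∈ Vor m ↔ ∀ l ∈ Submodule.span ℤ (Set.range (bvec m)), Qf m y ≤ Qf m (y - l) := by
  constructor
  · intro h l hl
    rw [Qf_sub]
    linarith [h l hl]
  · intro h l hl
    have := h l hl
    rw [Qf_sub] at this
    linarith

lemma norm_le_sqrt_Qf (w : Fin m → ℝ) : ‖w‖ ≤ Real.sqrt (Qf m w) := by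
  rw [pi_norm_le_iff_of_nonneg (Real.sqrt_nonneg _)]
  intro i
  rw [Real.norm_eq_abs]
  apply Real.abs_le_sqrt
  have h1 : w i * w i ≤ ∑ i, w i * w i :=
    Finset.single_le_sum (f := fun i => w i * w i) (fun i _ => mul_self_nonneg _) (mem_univ i)
  have h2 : 0 ≤ (∑ i, w i) * (∑ i, w i) := mul_self_nonneg _
  simp only [Qf, Bf]
  nlinarith

lemma lat_isClosed (hm : 1 ≤ m) :
    IsClosed ((Submodule.span ℤ (Set.range (bvec m)) : Submodule ℤ (Fin m → ℝ)) :
      Set (Fin m → ℝ)) := by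
  rw [← bb_coe m hm]
  have h := AddSubgroup.isClosed_of_discrete
    (H := (Submodule.span ℤ (Set.range ⇑(bb m hm))).toAddSubgroup)
  exact h

lemma vor_covers (hm : 1 ≤ m) (x : Fin m → ℝ) :
    ∃ g ∈ Submodule.span ℤ (Set.range (bvec m)), g + x ∈ Vor m := by
  classical
  set L : Set (Fin m → ℝ) := (Submodule.span ℤ (Set.range (bvec m)) : Set (Fin m → ℝ)) with hL
  set K : Set (Fin m → ℝ) := {z | Qf m (x + z) ≤ Qf m x} with hK
  have hKcl : IsClosed K := isClosed_le ((hQc m).comp (continuous_const.add continuous_id)) 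
    continuous_const
  have hKsub : K ⊆ Metric.closedBall 0 (Real.sqrt (Qf m x) + ‖x‖) := by
    intro z hz
    rw [Metric.mem_closedBall, dist_zero_right]
    have h1 : ‖z‖ ≤ ‖x + z‖ + ‖x‖ := by
      have := norm_sub_le (x + z) x
      simpa using this
    have h2 : ‖x + z‖ ≤ Real.sqrt (Qf m (x + z)) := norm_le_sqrt_Qf m _
    have h3 : Real.sqrt (Qf m (x + z)) ≤ Real.sqrt (Qf m x) := Real.sqrt_le_sqrt hz
    linarith
  have hTcl : IsClosed (L ∩ K) := (lat_isClosed m hm).inter hKcl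
  have hTcp : IsCompact (L ∩ K) := by
    refine IsCompact.of_isClosed_subset (isCompact_closedBall 0 (Real.sqrt (Qf m x) + ‖x‖))
      hTcl ?_
    exact fun z hz => hKsub hz.2
  have hTne : (L ∩ K).Nonempty := ⟨0, Submodule.zero_mem _, by simp [hK]⟩
  obtain ⟨g, hgT, hgmin⟩ := hTcp.exists_isMinOn hTne
    (((hQc m).comp (continuous_const.add continuous_id)).continuousOn)
  refine ⟨g, hgT.1, ?_⟩
  rw [mem_vor_iff]
  intro l hl
  have hgl : g - l ∈ Submodule.span ℤ (Set.range (bvec m)) := Submodule.sub_mem _ hgT.1 hl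
  have heq : g + x - l = x + (g - l) := by ring
  have heq2 : Qf m (g + x) = Qf m (x + g) := by rw [add_comm]
  rw [heq, heq2]
  by_cases h : (g - l) ∈ K
  · exact hgmin (⟨hgl, h⟩ : g - l ∈ L ∩ K)
  · have h4 : Qf m x < Qf m (x + (g - l)) := by
      rw [hK] at h
      simp only [Set.mem_setOf_eq, not_le] at h
      exact h
    have h5 : Qf m (x + g) ≤ Qf m (x + 0) := hgmin (⟨Submodule.zero_mem _, by simp [hK]⟩ :
      (0 : Fin m → ℝ) ∈ L ∩ K)
    rw [add_zero] at h5
    linarith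

/-- The linear functional `y ↦ Bf y d`. -/
def BfL (d : Fin m → ℝ) : (Fin m → ℝ) →ₗ[ℝ] ℝ where
  toFun := fun y => Bf m y d
  map_add' := fun a b => Bf_add_left m a b d
  map_smul' := by
    intro c y
    simp only [RingHom.id_apply, smul_eq_mul]
    exact Bf_smul_left m c y d

lemma bisector_null {d : Fin m → ℝ} (hd : d ≠ 0) (c : ℝ) :
    volume {y : Fin m → ℝ | Bf m y d = c} = 0 := by
  have hQd : 0 < Qf m d := Qf_pos m hd
  set y₀ : Fin m → ℝ := (c / Qf m d) • d with hy₀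
  have hFy₀ : Bf m y₀ d = c := by
    rw [hy₀, Bf_smul_left]
    have h0 : Bf m d d = Qf m d := rfl
    rw [h0]
    field_simp
  have h1 : {y : Fin m → ℝ | Bf m y d = c}
      = (AffineSubspace.mk' y₀ (LinearMap.ker (BfL m d)) : Set (Fin m → ℝ)) := by
    ext y
    rw [AffineSubspace.mem_coe, AffineSubspace.mem_mk']
    simp only [vsub_eq_sub, LinearMap.mem_ker, Set.mem_setOf_eq]
    have h2 : (BfL m d) (y - y₀) = Bf m y d - c := by
      have h3 : y - y₀ = y + (-1 : ℝ) • y₀ := by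
        funext j; simp [Pi.sub_apply]; ring
      rw [h3]
      show Bf m (y + (-1 : ℝ) • y₀) d = _
      rw [Bf_add_left, Bf_smul_left, hFy₀]
      ring
    rw [h2]
    constructor
    · intro h; linarith
    · intro h; linarith [h]
  rw [h1]
  refine Measure.addHaar_affineSubspace volume _ ?_
  intro htop
  have h4 : LinearMap.ker (BfL m d) = ⊤ := by
    rw [← AffineSubspace.direction_mk' y₀ (LinearMap.ker (BfL m d)), htop,
      AffineSubspace.direction_top]
  have h5 : (BfL m d) d = 0 := by
    rw [LinearMap.ker_eq_top] at h4
    rw [h4]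
    rfl
  have h6 : (BfL m d) d = Qf m d := rfl
  rw [h6] at h5
  linarith


lemma vor_fund (hm : 1 ≤ m) :
    IsAddFundamentalDomain ↥(Submodule.span ℤ (Set.range ⇑(bb m hm))) (Vor m) volume := by
  constructor
  · exact (vor_isClosed m).measurableSet.nullMeasurableSet
  · refine Filter.Eventually.of_forall fun x => ?_
    obtain ⟨g, hg, hgx⟩ := vor_covers m hm x
    refine ⟨⟨g, by rwa [bb_coe]⟩, ?_⟩
    exact hgx
  · intro g g' hgg'
    have hdne : ((g' : Fin m → ℝ) - (g : Fin m → ℝ)) ≠ 0 := by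
      rw [sub_ne_zero]
      exact fun h => hgg' (Subtype.ext h.symm)
    refine measure_mono_null ?_
      (bisector_null m hdne ((Qf m (g' : Fin m → ℝ) - Qf m (g : Fin m → ℝ))/2))
    rintro y ⟨hy1, hy2⟩
    have hspan : Submodule.span ℤ (Set.range ⇑(bb m hm))
        = Submodule.span ℤ (Set.range (bvec m)) := by rw [bb_coe]
    have hgmem : (g : Fin m → ℝ) ∈ Submodule.span ℤ (Set.range (bvec m)) := by
      rw [← hspan]; exact g.2
    have hg'mem : (g' : Fin m → ℝ) ∈ Submodule.span ℤ (Set.range (bvec m)) := by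
      rw [← hspan]; exact g'.2
    have hz1 : y - (g : Fin m → ℝ) ∈ Vor m := by
      rw [Set.mem_vadd_set_iff_neg_vadd_mem] at hy1
      have : (-g) +ᵥ y = y - (g : Fin m → ℝ) := by
        show -(g : Fin m → ℝ) + y = y - (g : Fin m → ℝ)
        ring
      rwa [this] at hy1
    have hz2 : y - (g' : Fin m → ℝ) ∈ Vor m := by
      rw [Set.mem_vadd_set_iff_neg_vadd_mem] at hy2
      have : (-g') +ᵥ y = y - (g' : Fin m → ℝ) := by
        show -(g' : Fin m → ℝ) + y = y - (g' : Fin m → ℝ)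
        ring
      rwa [this] at hy2
    have h1 : Qf m (y - (g : Fin m → ℝ)) ≤ Qf m (y - (g' : Fin m → ℝ)) := by
      have h := (mem_vor_iff m _).mp hz1 ((g' : Fin m → ℝ) - g) (Submodule.sub_mem _ hg'mem hgmem)
      rwa [show y - (g : Fin m → ℝ) - ((g' : Fin m → ℝ) - (g : Fin m → ℝ))
        = y - (g' : Fin m → ℝ) by ring] at h
    have h2 : Qf m (y - (g' : Fin m → ℝ)) ≤ Qf m (y - (g : Fin m → ℝ)) := by
      have h := (mem_vor_iff m _).mp hz2 ((g : Fin m → ℝ) - g') (Submodule.sub_mem _ hgmem hg'mem)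
      rwa [show y - (g' : Fin m → ℝ) - ((g : Fin m → ℝ) - (g' : Fin m → ℝ))
        = y - (g : Fin m → ℝ) by ring] at h
    have hQeq : Qf m (y - (g : Fin m → ℝ)) = Qf m (y - (g' : Fin m → ℝ)) := le_antisymm h1 h2
    rw [Qf_sub, Qf_sub] at hQeq
    show Bf m y ((g' : Fin m → ℝ) - g) = (Qf m (g' : Fin m → ℝ) - Qf m (g : Fin m → ℝ))/2
    rw [Bf_sub_right]
    linarith

lemma volume_Vor (hm : 1 ≤ m) :
    volume (Vor m) = ENNReal.ofReal (((m:ℝ)+1)^(m-1)) := by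
  classical
  have h1 := ZSpan.isAddFundamentalDomain (bb m hm) volume
  have h2 := vor_fund m hm
  haveI : MeasurableVAdd (↥(Submodule.span ℤ (Set.range ⇑(bb m hm)))) (Fin m → ℝ) :=
    (inferInstance :
      MeasurableVAdd (Submodule.span ℤ (Set.range ⇑(bb m hm))).toAddSubgroup (Fin m → ℝ))
  haveI : VAddInvariantMeasure (↥(Submodule.span ℤ (Set.range ⇑(bb m hm)))) (Fin m → ℝ) volume :=
    (inferInstance :
      VAddInvariantMeasure (Submodule.span ℤ (Set.range ⇑(bb m hm))).toAddSubgroup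
        (Fin m → ℝ) volume)
  have h3 := h2.measure_eq h1
  rw [h3, ZSpan.volume_fundamentalDomain]
  congr 1
  have h4 : Matrix.of ⇑(bb m hm) = Mm m := by
    ext i j
    rw [Matrix.of_apply]
    rw [show (bb m hm) i = bvec m i from bb_apply m hm i]
    rfl
  rw [h4, Mm_det m hm, abs_of_nonneg (by positivity)]

end
end Stmt10

open Stmt10 Pointwise in
/-- the `(n-1)`-dimensional volume of the scaled regular permutohedron
`Π_n = P_n(1, (n-2)/(n-1), …, 1/(n-1), 0)`, i.e. the Lebesgue measure in `ℝ^{n-1}`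
of its projection deleting the last coordinate, equals `n^{n-2} / (n-1)^{n-1}`. -/
theorem stmt10 (n : ℕ) (hn : 2 ≤ n) :
    (volume ((fun (y : Fin n → ℝ) (i : Fin (n - 1)) => y (Fin.castLE (Nat.sub_le n 1) i)) ''
        permutohedron n (fun i => ((n : ℝ) - 1 - (i : ℕ)) / ((n : ℝ) - 1)))).toReal
      = (n : ℝ) ^ (n - 2) / ((n : ℝ) - 1) ^ (n - 1) := by
  obtain ⟨m, rfl⟩ : ∃ m, n = m + 1 := ⟨n - 1, by omega⟩
  have hm : 1 ≤ m := by omega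
  have hm0 : (m:ℝ) ≠ 0 := by positivity
  set xfun : Fin (m+1) → ℝ := fun i => (((m+1 : ℕ) : ℝ) - 1 - (i : ℕ)) / (((m+1:ℕ) : ℝ) - 1)
    with hxfun
  show (volume ((fun (y : Fin (m+1) → ℝ) (i : Fin m) => y (Fin.castSucc i)) ''
        permutohedron (m+1) xfun)).toReal
      = ((m + 1 : ℕ) : ℝ) ^ (m + 1 - 2) / (((m+1:ℕ) : ℝ) - 1) ^ (m + 1 - 1)
  have hproj : (fun (y : Fin (m+1) → ℝ) (i : Fin m) => y (Fin.castSucc i))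
      = ⇑(LinearMap.funLeft ℝ ℝ (Fin.castSucc : Fin m → Fin (m+1))) := rfl
  have himg : (fun (y : Fin (m+1) → ℝ) (i : Fin m) => y (Fin.castSucc i)) ''
        permutohedron (m+1) xfun
      = convexHull ℝ ((LinearMap.funLeft ℝ ℝ (Fin.castSucc : Fin m → Fin (m+1))) ''
          {y | ∃ σ : Equiv.Perm (Fin (m+1)), ∀ i, y i = xfun (σ i)}) := by
    rw [hproj, permutohedron]
    exact (LinearMap.funLeft ℝ ℝ (Fin.castSucc : Fin m → Fin (m+1))).image_convexHull _
  -- identify the projected vertex set with an affine image of VertSet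
  have hgen : (LinearMap.funLeft ℝ ℝ (Fin.castSucc : Fin m → Fin (m+1))) ''
        {y | ∃ σ : Equiv.Perm (Fin (m+1)), ∀ i, y i = xfun (σ i)}
      = (fun _ : Fin m => (1/2 : ℝ)) +ᵥ (((-(1:ℝ)/(m:ℝ)) • VertSet m : Set (Fin m → ℝ))) := by
    have hxval : ∀ j : Fin (m+1), xfun j = ((m:ℝ) - (j:ℕ))/(m:ℝ) := by
      intro j
      rw [hxfun]
      push_cast
      ring_nf
    ext w
    constructor
    · rintro ⟨y, ⟨σ, hyσ⟩, rfl⟩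
      refine ⟨(-(1:ℝ)/(m:ℝ)) • vert m σ, ⟨vert m σ, ⟨σ, rfl⟩, rfl⟩, ?_⟩
      funext i
      show (1/2 : ℝ) + (-(1:ℝ)/(m:ℝ)) * vert m σ i = y (Fin.castSucc i)
      rw [hyσ, hxval, vert]
      field_simp
      ring
    · rintro ⟨v, ⟨v', ⟨σ, rfl⟩, rfl⟩, rfl⟩
      refine ⟨fun j => xfun (σ j), ⟨σ, fun i => rfl⟩, ?_⟩
      funext i
      show xfun (σ (Fin.castSucc i)) = (1/2 : ℝ) + (-(1:ℝ)/(m:ℝ)) * vert m σ i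
      rw [hxval, vert]
      field_simp
      ring
  rw [himg, hgen, convexHull_vadd, convexHull_smul]
  have hP0 : convexHull ℝ (VertSet m) = Vor m :=
    Set.Subset.antisymm (P0_subset_Vor m) (Vor_subset_P0 m)
  rw [hP0]
  rw [measure_vadd, Measure.addHaar_smul]
  rw [volume_Vor m hm]
  have hfr : Module.finrank ℝ (Fin m → ℝ) = m := by
    simp [Module.finrank_fintype_fun_eq_card]
  rw [hfr]
  rw [ENNReal.toReal_mul, ENNReal.toReal_ofReal (abs_nonneg _),
    ENNReal.toReal_ofReal (by positivity)]
  have habs : |(-(1:ℝ)/(m:ℝ)) ^ m| = ((m:ℝ)⁻¹)^m := by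
    rw [abs_pow, abs_div, abs_neg, abs_one]
    congr 1
    rw [abs_of_nonneg (by positivity : (0:ℝ) ≤ (m:ℝ))]
    rw [one_div]
  rw [habs]
  have h1 : ((m+1 : ℕ) : ℝ) - 1 = (m:ℝ) := by push_cast; ring
  have h2 : m + 1 - 2 = m - 1 := by omega
  have h3 : m + 1 - 1 = m := by omega
  rw [h1, h2, h3]
  have h4 : ((m+1 : ℕ) : ℝ) = (m:ℝ) + 1 := by push_cast; ring
  rw [h4]
  rw [div_eq_mul_inv, ← inv_pow]
  ring
end

section
/- Let n ≥ 3, let j ∈ {1, …, n−1}, and let u ∈ [(j−1)/(n−1), j/(n−1)]. Then the section of the scaled regular permutohedron by the hyperplane {x ∈ ℝ^n : x_1 = u} is itself a scaled permutohedron: { y ∈ ℝ^{n−1} : (u, y) ∈ Π_n } = (n−1)^{−1} · P_{n−1}( n−1, n−2, …, j+1, 2j−1−(n−1)u, j−2, …, 1, 0 ), where the middle entry 2j−1−(n−1)u replaces the entries j and j−1. -/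
open Pointwise Finset

namespace Stmt11

variable {m : ℕ}

/-- sum of the first `k` coordinates -/
def psum (x : Fin m → ℝ) (k : ℕ) : ℝ :=
  ∑ i ∈ univ.filter (fun i : Fin m => (i : ℕ) < k), x i

lemma psum_zero (x : Fin m → ℝ) : psum x 0 = 0 := by simp [psum]

lemma psum_succ (x : Fin m → ℝ) {k : ℕ} (h : k < m) :
    psum x (k + 1) = psum x k + x ⟨k, h⟩ := by
  have hfil : univ.filter (fun i : Fin m => (i : ℕ) < k + 1)
      = insert ⟨k, h⟩ (univ.filter (fun i : Fin m => (i : ℕ) < k)) := by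
    ext i
    simp only [mem_filter, mem_univ, true_and, mem_insert, Fin.ext_iff]
    omega
  rw [psum, hfil, Finset.sum_insert (by simp), add_comm, psum]

lemma psum_total (x : Fin m → ℝ) {k : ℕ} (h : m ≤ k) : psum x k = ∑ i, x i := by
  rw [psum]
  congr 1
  ext i
  simpa using lt_of_lt_of_le i.2 h

lemma image_castLE {k : ℕ} (h : k ≤ m) :
    Finset.image (Fin.castLE h) univ = univ.filter (fun i : Fin m => (i : ℕ) < k) := by
  ext i
  simp only [Finset.mem_image, mem_univ, true_and, mem_filter]
  constructor
  · rintro ⟨a, rfl⟩; exact a.2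
  · intro hi; exact ⟨⟨(i : ℕ), hi⟩, rfl⟩

lemma psum_eq_sum_castLE (x : Fin m → ℝ) {k : ℕ} (h : k ≤ m) :
    psum x k = ∑ i : Fin k, x (Fin.castLE h i) := by
  rw [psum, ← image_castLE h, Finset.sum_image (fun a _ b _ hab => Fin.castLE_injective h hab)]

lemma card_filter_lt {k : ℕ} (h : k ≤ m) :
    (univ.filter (fun i : Fin m => (i : ℕ) < k)).card = k := by
  rw [← image_castLE h,
    Finset.card_image_of_injective _ (Fin.castLE_injective h), card_univ, Fintype.card_fin]

lemma strictMono_le {k : ℕ} {f : Fin k → Fin m} (hf : StrictMono f) (i : Fin k) :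
    (i : ℕ) ≤ (f i : ℕ) := by
  have key : ∀ n (i : Fin k), (i : ℕ) = n → n ≤ (f i : ℕ) := by
    intro n
    induction n with
    | zero => intro i _; exact Nat.zero_le _
    | succ n ih =>
        intro i hi
        have hn : n < k := by omega
        have h1 : f ⟨n, hn⟩ < f i := hf (by simp [Fin.lt_def, hi])
        have h2 := ih ⟨n, hn⟩ rfl
        rw [Fin.lt_def] at h1
        omega
  exact key _ i rfl

/-- Key bound: for antitone `x`, a sum over any `S` is at most the sum of the
first `S.card` coordinates. -/
lemma sum_le_psum {x : Fin m → ℝ} (hx : Antitone x) (S : Finset (Fin m)) :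
    ∑ i ∈ S, x i ≤ psum x S.card := by
  classical
  obtain ⟨k, hk⟩ : ∃ k, S.card = k := ⟨_, rfl⟩
  have hkm : k ≤ m := by
    rw [← hk]
    simpa using Finset.card_le_card (Finset.subset_univ S)
  rw [hk]
  set e := S.orderEmbOfFin hk with he
  have himg : Finset.image (fun i => e i) univ = S := by
    ext a
    simp only [Finset.mem_image, mem_univ, true_and]
    constructor
    · rintro ⟨i, rfl⟩; exact Finset.orderEmbOfFin_mem S hk i
    · intro ha
      have : a ∈ Set.range e := by rw [he, Finset.range_orderEmbOfFin]; exact ha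
      obtain ⟨i, hi⟩ := this
      exact ⟨i, hi⟩
  have h1 : ∑ i ∈ S, x i = ∑ i : Fin k, x (e i) := by
    rw [← himg, Finset.sum_image (fun a _ b _ hab => e.injective hab)]
  rw [h1, psum_eq_sum_castLE x hkm]
  apply Finset.sum_le_sum
  intro i _
  apply hx
  rw [Fin.le_def]
  exact strictMono_le e.strictMono i


/-- The majorization polytope of an antitone vector `x`. -/
def majSet (x : Fin m → ℝ) : Set (Fin m → ℝ) :=
  {y | (∑ i, y i) = (∑ i, x i) ∧ ∀ S : Finset (Fin m), ∑ i ∈ S, y i ≤ psum x S.card}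

lemma convex_majSet (x : Fin m → ℝ) : Convex ℝ (majSet x) := by
  intro y hy z hz a b ha hb hab
  constructor
  · have : ∑ i, (a • y + b • z) i = a * ∑ i, y i + b * ∑ i, z i := by
      simp [Finset.sum_add_distrib, Finset.mul_sum]
    rw [this, hy.1, hz.1, ← add_mul, hab, one_mul]
  · intro S
    have : ∑ i ∈ S, (a • y + b • z) i = a * ∑ i ∈ S, y i + b * ∑ i ∈ S, z i := by
      simp [Finset.sum_add_distrib, Finset.mul_sum]
    rw [this]
    have h1 := mul_le_mul_of_nonneg_left (hy.2 S) ha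
    have h2 := mul_le_mul_of_nonneg_left (hz.2 S) hb
    have h3 : a * psum x S.card + b * psum x S.card = psum x S.card := by
      rw [← add_mul, hab, one_mul]
    linarith

lemma genSet_subset_majSet {x : Fin m → ℝ} (hx : Antitone x) :
    {y | ∃ σ : Equiv.Perm (Fin m), ∀ i, y i = x (σ i)} ⊆ majSet x := by
  rintro y ⟨σ, hσ⟩
  constructor
  · rw [Finset.sum_congr rfl (fun i _ => hσ i)]
    exact Equiv.sum_comp σ x
  · intro S
    rw [Finset.sum_congr rfl (fun i _ => hσ i)]
    have h1 : ∑ i ∈ S, x (σ i) = ∑ i ∈ S.image σ, x i :=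
      (Finset.sum_image (fun a _ b _ hab => σ.injective hab)).symm
    rw [h1]
    have h2 := sum_le_psum hx (S.image σ)
    rwa [Finset.card_image_of_injective _ σ.injective] at h2

lemma permutohedron_subset_majSet {x : Fin m → ℝ} (hx : Antitone x) :
    permutohedron m x ⊆ majSet x :=
  convexHull_min (genSet_subset_majSet hx) (convex_majSet x)

/-- composing with a permutation preserves the permutohedron -/
lemma comp_mem_permutohedron {x y : Fin m → ℝ} (hy : y ∈ permutohedron m x)
    (τ : Equiv.Perm (Fin m)) : (fun i => y (τ i)) ∈ permutohedron m x := by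
  classical
  let L : (Fin m → ℝ) →ₗ[ℝ] (Fin m → ℝ) := LinearMap.funLeft ℝ ℝ τ
  have himg : L '' permutohedron m x ⊆ permutohedron m x := by
    rw [permutohedron, LinearMap.image_convexHull]
    apply convexHull_mono
    rintro w ⟨v, ⟨σ, hσ⟩, rfl⟩
    exact ⟨τ.trans σ, fun i => hσ (τ i)⟩
  exact himg ⟨y, hy, rfl⟩

lemma smul_permutohedron {c : ℝ} (hc : c ≠ 0) (x : Fin m → ℝ) :
    c • permutohedron m x = permutohedron m (c • x) := by
  rw [permutohedron, permutohedron, ← convexHull_smul]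
  congr 1
  ext y
  constructor
  · rintro ⟨w, ⟨σ, hσ⟩, rfl⟩
    exact ⟨σ, fun i => by simp [hσ i]⟩
  · rintro ⟨σ, hσ⟩
    refine ⟨c⁻¹ • y, ⟨σ, fun i => ?_⟩, by simp [smul_smul, mul_inv_cancel₀ hc]⟩
    simp only [Pi.smul_apply, smul_eq_mul]
    rw [hσ i]
    simp [Pi.smul_apply, smul_eq_mul, ← mul_assoc, inv_mul_cancel₀ hc]


lemma psum_succ_fin (x : Fin m → ℝ) (a : Fin m) :
    psum x ((a : ℕ) + 1) = psum x (a : ℕ) + x a := by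
  have := psum_succ x a.isLt
  simpa using this

lemma psum_split (x : Fin m → ℝ) {l k : ℕ} (h : l ≤ k) :
    psum x k = psum x l
      + ∑ i ∈ univ.filter (fun i : Fin m => l ≤ (i : ℕ) ∧ (i : ℕ) < k), x i := by
  have hfil : univ.filter (fun i : Fin m => (i : ℕ) < k)
      = univ.filter (fun i : Fin m => (i : ℕ) < l)
        ∪ univ.filter (fun i : Fin m => l ≤ (i : ℕ) ∧ (i : ℕ) < k) := by
    ext i; simp only [mem_filter, mem_univ, true_and, mem_union]; omega
  rw [psum, hfil, Finset.sum_union (by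
    simp only [Finset.disjoint_left, mem_filter, mem_univ, true_and]
    omega)]
  rfl

lemma psum_shift (x : Fin m → ℝ) (a b : Fin m) (δ : ℝ) (k : ℕ) :
    psum (fun i => x i + (if i = b then δ else 0) - (if i = a then δ else 0)) k
      = psum x k + (if (b : ℕ) < k then δ else 0) - (if (a : ℕ) < k then δ else 0) := by
  unfold psum
  rw [Finset.sum_sub_distrib, Finset.sum_add_distrib,
    Finset.sum_ite_eq' _ b (fun _ => δ), Finset.sum_ite_eq' _ a (fun _ => δ)]
  simp only [mem_filter, mem_univ, true_and]

lemma sum_shift (x : Fin m → ℝ) (a b : Fin m) (δ : ℝ) :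
    ∑ i, (x i + (if i = b then δ else 0) - (if i = a then δ else 0)) = ∑ i, x i := by
  rw [Finset.sum_sub_distrib, Finset.sum_add_distrib,
    Finset.sum_ite_eq' _ b (fun _ => δ), Finset.sum_ite_eq' _ a (fun _ => δ)]
  simp

/-- The hard direction of Rado's theorem, for sorted (antitone) vectors. -/
lemma hard_sorted : ∀ (d : ℕ) (x y : Fin m → ℝ), Antitone x → Antitone y →
    (univ.filter (fun i => x i ≠ y i)).card ≤ d →
    (∑ i, y i) = (∑ i, x i) → (∀ k, k ≤ m → psum y k ≤ psum x k) →
    y ∈ permutohedron m x := by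
  intro d
  induction d with
  | zero =>
      intro x y hx hy hcard hsum hps
      have hfe : univ.filter (fun i => x i ≠ y i) = ∅ := by
        exact Finset.card_eq_zero.mp (Nat.le_zero.mp hcard)
      have hxy : ∀ i, y i = x i := by
        intro i
        by_contra h
        have : i ∈ univ.filter (fun i => x i ≠ y i) := by
          simp only [mem_filter, mem_univ, true_and]
          exact fun h' => h h'.symm
        rw [hfe] at this
        exact absurd this (Finset.notMem_empty i)
      exact subset_convexHull ℝ _ ⟨Equiv.refl _, fun i => hxy i⟩
  | succ d ih =>
      intro x y hx hy hcard hsum hps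
      by_cases hxy0 : ∀ i, y i = x i
      · exact subset_convexHull ℝ _ ⟨Equiv.refl _, fun i => hxy0 i⟩
      -- the set where x exceeds y is nonempty
      have hA : (univ.filter (fun i => y i < x i)).Nonempty := by
        by_contra hA'
        rw [Finset.not_nonempty_iff_eq_empty] at hA'
        have hle : ∀ i, x i ≤ y i := by
          intro i
          by_contra h
          have : i ∈ univ.filter (fun i => y i < x i) := by
            simp only [mem_filter, mem_univ, true_and]; linarith [lt_of_not_ge h]
          rw [hA'] at this; exact absurd this (Finset.notMem_empty i)
        obtain ⟨i₀, hi₀⟩ := not_forall.mp hxy0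
        have : ∑ i, x i < ∑ i, y i := by
          apply Finset.sum_lt_sum (fun i _ => hle i)
          exact ⟨i₀, Finset.mem_univ i₀, lt_of_le_of_ne (hle i₀) (fun h => hi₀ h.symm)⟩
        linarith
      set a := (univ.filter (fun i => y i < x i)).max' hA with ha_def
      have haA : y a < x a := by
        have := (univ.filter (fun i => y i < x i)).max'_mem hA
        rw [← ha_def] at this
        exact (Finset.mem_filter.mp this).2
      have ha_max : ∀ i, a < i → x i ≤ y i := by
        intro i hi
        by_contra h
        have hmem : i ∈ univ.filter (fun i => y i < x i) := by
          simp only [mem_filter, mem_univ, true_and]; exact lt_of_not_ge h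
        exact absurd (Finset.le_max' _ i hmem) (not_le.mpr hi)
      -- partial-sum gap at a+1
      have hgap : psum y ((a : ℕ) + 1) + (x a - y a) ≤ psum x ((a : ℕ) + 1) := by
        rw [psum_succ_fin, psum_succ_fin]
        have := hps (a : ℕ) (le_of_lt a.isLt)
        linarith
      -- the set where y exceeds x beyond a is nonempty
      have hB : (univ.filter (fun i => a < i ∧ x i < y i)).Nonempty := by
        by_contra hB'
        rw [Finset.not_nonempty_iff_eq_empty] at hB'
        have heq : ∀ i : Fin m, (a : ℕ) + 1 ≤ (i : ℕ) → x i = y i := by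
          intro i hi
          have hai : a < i := by rw [Fin.lt_def]; omega
          have h1 := ha_max i hai
          by_contra h
          have : i ∈ univ.filter (fun i => a < i ∧ x i < y i) := by
            simp only [mem_filter, mem_univ, true_and]
            exact ⟨hai, lt_of_le_of_ne h1 h⟩
          rw [hB'] at this; exact absurd this (Finset.notMem_empty i)
        have hdx := (psum_total x (le_refl m)).symm.trans
          (psum_split x (Nat.succ_le_of_lt a.isLt))
        have hdy := (psum_total y (le_refl m)).symm.trans
          (psum_split y (Nat.succ_le_of_lt a.isLt))
        have hzeq : ∑ i ∈ univ.filter (fun i : Fin m => (a:ℕ)+1 ≤ (i:ℕ) ∧ (i:ℕ) < m), x i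
            = ∑ i ∈ univ.filter (fun i : Fin m => (a:ℕ)+1 ≤ (i:ℕ) ∧ (i:ℕ) < m), y i := by
          apply Finset.sum_congr rfl
          intro i hi
          exact heq i (Finset.mem_filter.mp hi).2.1
        rw [hzeq] at hdx
        linarith
      set b := (univ.filter (fun i => a < i ∧ x i < y i)).min' hB with hb_def
      have hbB : a < b ∧ x b < y b := by
        have := (univ.filter (fun i => a < i ∧ x i < y i)).min'_mem hB
        rw [← hb_def] at this
        exact (Finset.mem_filter.mp this).2
      have hab : a < b := hbB.1
      have hxb : x b < y b := hbB.2
      have hmid : ∀ i, a < i → i < b → x i = y i := by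
        intro i hai hib
        have h1 := ha_max i hai
        by_contra h
        have hmem : i ∈ univ.filter (fun i => a < i ∧ x i < y i) := by
          simp only [mem_filter, mem_univ, true_and]
          exact ⟨hai, lt_of_le_of_ne h1 h⟩
        exact absurd (Finset.min'_le _ i hmem) (not_le.mpr hib)
      set δ := min (x a - y a) (y b - x b) with hδ_def
      have hδ : 0 < δ := lt_min (by linarith) (by linarith)
      have hda : δ ≤ x a - y a := min_le_left _ _
      have hdb : δ ≤ y b - x b := min_le_right _ _
      have hab' : a ≠ b := ne_of_lt hab
      set x' := fun i => x i + (if i = b then δ else 0) - (if i = a then δ else 0)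
        with hx'_def
      have hx'a : x' a = x a - δ := by simp [hx'_def, hab']
      have hx'b : x' b = x b + δ := by simp [hx'_def, hab'.symm]
      have hx'other : ∀ i, i ≠ a → i ≠ b → x' i = x i := by
        intro i h1 h2; simp [hx'_def, h1, h2]
      have hyab : y b ≤ y a := hy (le_of_lt hab)
      -- x' is antitone
      have hx'anti : Antitone x' := by
        intro p q hpq
        show x' q ≤ x' p
        by_cases hpa : p = a
        · by_cases hqa : q = a
          · rw [hpa, hqa]
          by_cases hqb : q = b
          · rw [hpa, hqb, hx'a, hx'b]; linarith
          · have hpq2 : a ≤ q := by rw [← hpa]; exact hpq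
            have hpq' : a < q := lt_of_le_of_ne hpq2 (fun h => hqa h.symm)
            rw [hpa, hx'a, hx'other q hqa hqb]
            rcases lt_or_gt_of_ne hqb with h | h
            · have h1 := hmid q hpq' h
              have h2 : y q ≤ y a := hy (le_of_lt hpq')
              linarith
            · have h2 : x q ≤ x b := hx (le_of_lt h)
              linarith
        by_cases hpb : p = b
        · by_cases hqb : q = b
          · rw [hpb, hqb]
          have hpq2 : b ≤ q := by rw [← hpb]; exact hpq
          have hqa : q ≠ a := by
            intro h
            rw [h] at hpq2
            exact absurd hab (not_lt.mpr hpq2)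
          have hpq' : b < q := lt_of_le_of_ne hpq2 (fun h => hqb h.symm)
          rw [hpb, hx'b, hx'other q hqa hqb]
          have := hx (le_of_lt hpq')
          linarith
        by_cases hqa : q = a
        · have hpq2 : p ≤ a := by rw [← hqa]; exact hpq
          have hpq' : p < a := lt_of_le_of_ne hpq2 hpa
          rw [hqa, hx'a, hx'other p hpa hpb]
          have := hx (le_of_lt hpq')
          linarith
        by_cases hqb : q = b
        · have hpq2 : p ≤ b := by rw [← hqb]; exact hpq
          have hpb' : p < b := lt_of_le_of_ne hpq2 hpb
          rw [hqb, hx'b, hx'other p hpa hpb]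
          rcases lt_trichotomy p a with h | h | h
          · have h1 : x a ≤ x p := hx (le_of_lt h)
            linarith
          · exact absurd h hpa
          · have h1 := hmid p h hpb'
            have h2 : y b ≤ y p := hy (le_of_lt hpb')
            linarith
        · rw [hx'other p hpa hpb, hx'other q hqa hqb]
          exact hx hpq
      -- sums agree
      have hsum' : ∑ i, y i = ∑ i, x' i := by
        rw [hx'_def, sum_shift]; exact hsum
      -- partial sums still dominate
      have hps' : ∀ k, k ≤ m → psum y k ≤ psum x' k := by
        intro k hk
        rw [hx'_def, psum_shift]
        have habv : (a : ℕ) < (b : ℕ) := hab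
        by_cases h1 : k ≤ (a : ℕ)
        · rw [if_neg (by omega), if_neg (by omega)]
          have := hps k hk; linarith
        by_cases h2 : (b : ℕ) < k
        · rw [if_pos h2, if_pos (by omega)]
          have := hps k hk; linarith
        · -- a < k ≤ b : need slack δ
          rw [if_neg h2, if_pos (by omega)]
          have hak : (a : ℕ) + 1 ≤ k := by omega
          have hdx := psum_split x hak
          have hdy := psum_split y hak
          have hzeq : ∑ i ∈ univ.filter (fun i : Fin m => (a:ℕ)+1 ≤ (i:ℕ) ∧ (i:ℕ) < k), x i
              = ∑ i ∈ univ.filter (fun i : Fin m => (a:ℕ)+1 ≤ (i:ℕ) ∧ (i:ℕ) < k), y i := by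
            apply Finset.sum_congr rfl
            intro i hi
            have hi' := (Finset.mem_filter.mp hi).2
            apply hmid i (by rw [Fin.lt_def]; omega) (by rw [Fin.lt_def]; omega)
          rw [hzeq] at hdx
          linarith
      -- the new permutohedron is inside the old one
      have hxab : x b < x a := by linarith
      have hsub : permutohedron m x' ⊆ permutohedron m x := by
        apply convexHull_min _ (convex_convexHull ℝ _)
        rintro w ⟨σ, hσ⟩
        set lam := 1 - δ / (x a - x b) with hlam_def
        have hpos : (0:ℝ) < x a - x b := by linarith
        have h1lam : (1 - lam) * (x a - x b) = δ := by
          rw [hlam_def]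
          field_simp
          ring
        have hlam0 : 0 ≤ lam := by
          rw [hlam_def, sub_nonneg, div_le_one hpos]
          linarith
        have hlam1 : lam ≤ 1 := by
          rw [hlam_def]
          have : 0 ≤ δ / (x a - x b) := div_nonneg (le_of_lt hδ) (le_of_lt hpos)
          linarith
        have hkey : w = lam • (fun i => x (σ i))
            + (1 - lam) • (fun i => x ((σ.trans (Equiv.swap a b)) i)) := by
          funext i
          simp only [Pi.add_apply, Pi.smul_apply, smul_eq_mul, Equiv.trans_apply]
          rw [hσ i]
          by_cases h1 : σ i = a
          · rw [h1, hx'a, Equiv.swap_apply_left]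
            nlinarith [h1lam]
          by_cases h2 : σ i = b
          · rw [h2, hx'b, Equiv.swap_apply_right]
            nlinarith [h1lam]
          · rw [hx'other _ h1 h2, Equiv.swap_apply_of_ne_of_ne h1 h2]
            ring
        rw [hkey]
        have hm1 : (fun i => x (σ i))
            ∈ convexHull ℝ {y : Fin m → ℝ | ∃ τ : Equiv.Perm (Fin m), ∀ i, y i = x (τ i)} :=
          subset_convexHull ℝ _ ⟨σ, fun i => rfl⟩
        have hm2 : (fun i => x ((σ.trans (Equiv.swap a b)) i))
            ∈ convexHull ℝ {y : Fin m → ℝ | ∃ τ : Equiv.Perm (Fin m), ∀ i, y i = x (τ i)} :=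
          subset_convexHull ℝ _ ⟨σ.trans (Equiv.swap a b), fun i => rfl⟩
        exact (convex_convexHull ℝ _) hm1 hm2 hlam0 (by linarith) (by ring)
      -- the measure decreases
      have hcard' : (univ.filter (fun i => x' i ≠ y i)).card ≤ d := by
        have key : ∃ c : Fin m, x' c = y c ∧ x c ≠ y c := by
          rcases min_cases (x a - y a) (y b - x b) with ⟨hmin, _⟩ | ⟨hmin, _⟩
          · exact ⟨a, by rw [hx'a, ← hδ_def] at *; rw [hmin]; ring_nf, ne_of_gt haA⟩
          · exact ⟨b, by rw [hx'b, ← hδ_def] at *; rw [hmin]; ring_nf, ne_of_lt hxb⟩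
        obtain ⟨c, hc1, hc2⟩ := key
        have hsubD : univ.filter (fun i => x' i ≠ y i)
            ⊆ (univ.filter (fun i => x i ≠ y i)).erase c := by
          intro i hi
          have hne : x' i ≠ y i := (Finset.mem_filter.mp hi).2
          have hic : i ≠ c := by rintro rfl; exact hne hc1
          rw [Finset.mem_erase]
          refine ⟨hic, ?_⟩
          simp only [mem_filter, mem_univ, true_and]
          by_cases h1 : i = a
          · subst h1; exact ne_of_gt haA
          by_cases h2 : i = b
          · subst h2; exact ne_of_lt hxb
          · rw [hx'other i h1 h2] at hne; exact hne
        have hcmem : c ∈ univ.filter (fun i => x i ≠ y i) := by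
          simp only [mem_filter, mem_univ, true_and]; exact hc2
        have h1 := Finset.card_le_card hsubD
        have h2 := Finset.card_erase_of_mem hcmem
        omega
      exact hsub (ih x' y hx'anti hy hcard' hsum' hps')


/-- Rado's theorem: for antitone `x`, the permutohedron is the majorization polytope. -/
theorem permutohedron_eq_majSet {x : Fin m → ℝ} (hx : Antitone x) :
    permutohedron m x = majSet x := by
  apply Set.Subset.antisymm (permutohedron_subset_majSet hx)
  intro y hy
  set σ := Tuple.sort (fun i => - y i) with hσ
  have hmono : Monotone ((fun i => - y i) ∘ σ) := Tuple.monotone_sort _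
  have hyσ : Antitone (fun i => y (σ i)) := by
    intro p q hpq
    have := hmono hpq
    simp only [Function.comp_apply, neg_le_neg_iff] at this
    exact this
  have hsum : ∑ i, y (σ i) = ∑ i, x i := by
    rw [Equiv.sum_comp σ y]; exact hy.1
  have hps : ∀ k, k ≤ m → psum (fun i => y (σ i)) k ≤ psum x k := by
    intro k hk
    have himg : psum (fun i => y (σ i)) k
        = ∑ i ∈ (univ.filter fun i : Fin m => (i : ℕ) < k).image σ, y i := by
      rw [psum, Finset.sum_image (fun a _ b _ h => σ.injective h)]
    rw [himg]
    have h2 := hy.2 ((univ.filter fun i : Fin m => (i : ℕ) < k).image σ)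
    rwa [Finset.card_image_of_injective _ σ.injective, card_filter_lt hk] at h2
  have hmem : (fun i => y (σ i)) ∈ permutohedron m x :=
    hard_sorted _ x _ hx hyσ le_rfl hsum hps
  have hfin := comp_mem_permutohedron hmem σ.symm
  have : (fun i => y (σ (σ.symm i))) = y := by
    funext i; rw [Equiv.apply_symm_apply]
  rwa [this] at hfin


/-- running sums of `m, m-1, m-2, …` as reals -/
def A (m k : ℕ) : ℝ := ∑ i ∈ Finset.range k, ((m : ℝ) - i)

lemma A_succ (m k : ℕ) : A m (k + 1) = A m k + ((m : ℝ) - k) :=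
  Finset.sum_range_succ _ _

section Calc

variable {m j : ℕ} {u : ℝ}

lemma X_anti (hm : 0 < m) :
    Antitone (fun i : Fin (m+1) => ((m : ℝ) - (i : ℕ)) / (m : ℝ)) := by
  intro p q hpq
  have h1 : ((p : ℕ) : ℝ) ≤ ((q : ℕ) : ℝ) := Nat.cast_le.mpr hpq
  have h2 : (0:ℝ) < (m : ℝ) := by exact_mod_cast hm
  have h3 : (m:ℝ) - (q:ℕ) ≤ (m:ℝ) - (p:ℕ) := by linarith
  exact div_le_div_of_nonneg_right h3 h2.le

lemma X_psum (hm : 0 < m) : ∀ k, k ≤ m + 1 →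
    psum (fun i : Fin (m+1) => ((m : ℝ) - (i : ℕ)) / (m : ℝ)) k = A m k / m := by
  intro k
  induction k with
  | zero => intro _; rw [psum_zero]; simp [A]
  | succ k ihk =>
      intro hk1
      have hkm : k < m + 1 := hk1
      rw [psum_succ _ hkm, ihk (by omega), A_succ, add_div]

lemma z_anti (hj1 : 1 ≤ j) (hj2 : j ≤ m) (hv1 : (j : ℝ) - 1 ≤ (m : ℝ) * u)
    (hv2 : (m : ℝ) * u ≤ (j : ℝ)) :
    Antitone (fun i : Fin m => if (i : ℕ) < m - j then (m : ℝ) - (i : ℕ)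
      else if (i : ℕ) = m - j then 2 * (j : ℝ) - 1 - (m : ℝ) * u
      else (m : ℝ) - 1 - (i : ℕ)) := by
  intro p q hpq
  have hpq' : (p : ℕ) ≤ (q : ℕ) := hpq
  have hc : ∀ a b : ℕ, a ≤ b → ((a : ℕ) : ℝ) ≤ ((b : ℕ) : ℝ) := fun a b h => Nat.cast_le.mpr h
  simp only
  split_ifs
  all_goals first
    | omega
    | exact le_rfl
    | (have h9 := hc p q hpq'; linarith)
    | (have h9 := hc ((p : ℕ) + j + 1) m (by omega); push_cast at h9; linarith)
    | (have h9 := hc (m + 1) ((q : ℕ) + j) (by omega); push_cast at h9; linarith)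

lemma z_psum (hj1 : 1 ≤ j) (hj2 : j ≤ m) : ∀ k, k ≤ m →
    psum (fun i : Fin m => if (i : ℕ) < m - j then (m : ℝ) - (i : ℕ)
      else if (i : ℕ) = m - j then 2 * (j : ℝ) - 1 - (m : ℝ) * u
      else (m : ℝ) - 1 - (i : ℕ)) k
    = if k ≤ m - j then A m k else A m (k + 1) - (m : ℝ) * u := by
  intro k
  induction k with
  | zero => intro _; rw [psum_zero, if_pos (Nat.zero_le _)]; simp [A]
  | succ k ihk =>
      intro hk1
      have hkm : k < m := hk1
      rw [psum_succ _ hkm, ihk (by omega)]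
      simp only [Fin.val_mk]
      by_cases h1 : k < m - j
      · rw [if_pos h1, if_pos (le_of_lt h1), if_pos (by omega : k + 1 ≤ m - j), A_succ]
      by_cases h2 : k = m - j
      · rw [if_neg h1, if_pos h2, if_pos (by omega : k ≤ m - j),
          if_neg (by omega : ¬(k + 1 ≤ m - j))]
        subst h2
        simp only [A_succ]
        push_cast [Nat.cast_sub hj2]
        ring
      · rw [if_neg h1, if_neg h2, if_neg (by omega : ¬(k ≤ m - j)),
          if_neg (by omega : ¬(k + 1 ≤ m - j))]
        simp only [A_succ]
        push_cast
        ring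

end Calc

end Stmt11

open Stmt11

/-- for `n = m+1 ≥ 3`, `j ∈ {1, …, n-1}` and
`u ∈ [(j-1)/(n-1), j/(n-1)]`, the section of the scaled regular permutohedron
`Π_n = P_n(1, (n-2)/(n-1), …, 1/(n-1), 0)` by the hyperplane `{x : x_1 = u}` is
`(n-1)⁻¹ · P_{n-1}(n-1, n-2, …, j+1, 2j-1-(n-1)u, j-2, …, 1, 0)`,
where the entry `2j-1-(n-1)u` replaces the entries `j` and `j-1`. -/
theorem stmt11 (m : ℕ) (hm : 2 ≤ m) (j : ℕ) (hj1 : 1 ≤ j) (hj2 : j ≤ m)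
    (u : ℝ) (hu : u ∈ Set.Icc (((j : ℝ) - 1) / (m : ℝ)) ((j : ℝ) / (m : ℝ))) :
    {y : Fin m → ℝ |
        Fin.cons u y ∈ permutohedron (m + 1) (fun i => ((m : ℝ) - (i : ℕ)) / (m : ℝ))}
      = ((m : ℝ)⁻¹) • permutohedron m (fun i =>
          if (i : ℕ) < m - j then (m : ℝ) - (i : ℕ)
          else if (i : ℕ) = m - j then 2 * (j : ℝ) - 1 - (m : ℝ) * u
          else (m : ℝ) - 1 - (i : ℕ)) := by
  classical
  have hm0 : (0:ℝ) < (m : ℝ) := by exact_mod_cast (by omega : 0 < m)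
  have hmne : (m:ℝ) ≠ 0 := ne_of_gt hm0
  obtain ⟨hu1, hu2⟩ := hu
  have hv1 : (j:ℝ) - 1 ≤ (m:ℝ) * u := by
    rw [div_le_iff₀ hm0] at hu1; linarith
  have hv2 : (m:ℝ) * u ≤ (j:ℝ) := by
    rw [le_div_iff₀ hm0] at hu2; linarith
  set X : Fin (m+1) → ℝ := fun i => ((m : ℝ) - (i : ℕ)) / (m : ℝ) with hX
  set z : Fin m → ℝ := fun i =>
      if (i : ℕ) < m - j then (m : ℝ) - (i : ℕ)
      else if (i : ℕ) = m - j then 2 * (j : ℝ) - 1 - (m : ℝ) * u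
      else (m : ℝ) - 1 - (i : ℕ) with hz
  have hz_anti : Antitone z := z_anti hj1 hj2 hv1 hv2
  set ζ : Fin m → ℝ := ((m:ℝ)⁻¹) • z with hζ
  have hζ_anti : Antitone ζ := by
    intro p q hpq
    simp only [hζ, Pi.smul_apply, smul_eq_mul]
    exact mul_le_mul_of_nonneg_left (hz_anti hpq) (by positivity)
  have hRHS : ((m : ℝ)⁻¹) • permutohedron m z = permutohedron m ζ :=
    smul_permutohedron (inv_ne_zero hmne) z
  rw [hRHS, permutohedron_eq_majSet hζ_anti,
    permutohedron_eq_majSet (X_anti (by omega))]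
  -- preliminary computations
  have hXtot : ∑ i, X i = A m (m+1) / (m:ℝ) := by
    rw [← psum_total X (le_refl (m+1)), X_psum (by omega) (m+1) le_rfl]
  have hztot : ∑ i, z i = A m (m+1) - (m:ℝ) * u := by
    have h := z_psum (u := u) hj1 hj2 m le_rfl
    rw [psum_total _ le_rfl] at h
    simp only [hz]
    rw [h, if_neg (by omega)]
  have hζtot : ∑ i, ζ i = (m:ℝ)⁻¹ * (A m (m+1) - (m:ℝ)*u) := by
    simp only [hζ, Pi.smul_apply, smul_eq_mul, ← Finset.mul_sum]
    rw [hztot]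
  have hζpsum : ∀ k, psum ζ k = (m:ℝ)⁻¹ * psum z k := by
    intro k
    simp only [psum, hζ, Pi.smul_apply, smul_eq_mul, ← Finset.mul_sum]
  have hXpsum := fun (k : ℕ) (hk : k ≤ m + 1) => X_psum (m := m) (by omega) k hk
  have hzpsum : ∀ k, k ≤ m → psum z k
      = if k ≤ m - j then A m k else A m (k + 1) - (m:ℝ) * u := by
    intro k hk
    rw [hz]
    exact z_psum (u := u) hj1 hj2 k hk
  ext y
  simp only [Set.mem_setOf_eq]
  constructor
  · rintro ⟨hsum, hsub⟩
    have hsum' : u + ∑ i, y i = A m (m+1) / (m:ℝ) := by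
      rw [← Fin.sum_cons u y, hsum, hXtot]
    refine ⟨?_, ?_⟩
    · rw [hζtot]
      field_simp at hsum' ⊢
      linarith
    · intro S
      have hk : S.card ≤ m := by
        simpa using Finset.card_le_card (Finset.subset_univ S)
      have hmap_sum : ∑ i ∈ S.map (Fin.succEmb m), Fin.cons u y i = ∑ i ∈ S, y i := by
        rw [Finset.sum_map]
        apply Finset.sum_congr rfl
        intro i _
        simp [Fin.coe_succEmb, Fin.cons_succ]
      have hb1 : ∑ i ∈ S, y i ≤ A m S.card / (m:ℝ) := by
        have h := hsub (S.map (Fin.succEmb m))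
        rw [Finset.card_map, hXpsum S.card (by omega), hmap_sum] at h
        exact h
      have h0T : (0 : Fin (m+1)) ∉ S.map (Fin.succEmb m) := by
        simp only [Finset.mem_map, not_exists]
        intro i
        rintro ⟨-, hcontra⟩
        exact Fin.succ_ne_zero i hcontra
      have hb2 : u + ∑ i ∈ S, y i ≤ A m (S.card + 1) / (m:ℝ) := by
        have h := hsub (insert 0 (S.map (Fin.succEmb m)))
        rw [Finset.card_insert_of_notMem h0T, Finset.card_map,
          hXpsum (S.card + 1) (by omega), Finset.sum_insert h0T, hmap_sum,
          Fin.cons_zero] at h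
        exact h
      rw [hζpsum, hzpsum S.card hk]
      split_ifs with hbr
      · rw [inv_mul_eq_div]
        exact hb1
      · have heq : (m:ℝ)⁻¹ * (A m (S.card+1) - (m:ℝ)*u) = A m (S.card+1)/(m:ℝ) - u := by
          field_simp
        rw [heq]
        linarith
  · rintro ⟨hsum, hsub⟩
    have hsum' : ∑ i, y i = A m (m+1) / (m:ℝ) - u := by
      rw [hsum, hζtot]
      field_simp
    refine ⟨?_, ?_⟩
    · rw [Fin.sum_cons, hXtot, hsum']
      ring
    · intro T
      set S : Finset (Fin m) := univ.filter (fun i => i.succ ∈ T) with hS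
      have hmapS : S.map (Fin.succEmb m) = T.erase 0 := by
        ext c
        simp only [Finset.mem_map, Finset.mem_erase, hS, Finset.mem_filter,
          Finset.mem_univ, true_and, Fin.coe_succEmb]
        constructor
        · rintro ⟨i, hi, rfl⟩
          exact ⟨Fin.succ_ne_zero i, hi⟩
        · rintro ⟨hc0, hcT⟩
          obtain ⟨i, rfl⟩ := Fin.exists_succ_eq.mpr hc0
          exact ⟨i, hcT, rfl⟩
      have hsum_erase : ∑ i ∈ T.erase 0, Fin.cons u y i = ∑ i ∈ S, y i := by
        rw [← hmapS, Finset.sum_map]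
        apply Finset.sum_congr rfl
        intro i _
        simp [Fin.coe_succEmb, Fin.cons_succ]
      have hScard : S.card = (T.erase 0).card := by
        rw [← hmapS, Finset.card_map]
      have hSk : S.card ≤ m := by
        simpa using Finset.card_le_card (Finset.subset_univ S)
      have hbS : ∑ i ∈ S, y i
          ≤ (m:ℝ)⁻¹ * (if S.card ≤ m - j then A m S.card else A m (S.card + 1) - (m:ℝ)*u) := by
        have h := hsub S
        rwa [hζpsum, hzpsum S.card hSk] at h
      have hTcard : T.card ≤ m + 1 := by
        simpa using Finset.card_le_card (Finset.subset_univ T)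
      rw [hXpsum T.card hTcard]
      by_cases h0 : (0 : Fin (m+1)) ∈ T
      · have hc1 : T.card = S.card + 1 := by
          have h1 : 1 ≤ T.card := Finset.card_pos.mpr ⟨0, h0⟩
          have h2 := Finset.card_erase_of_mem h0
          omega
        have hsplit : ∑ i ∈ T, Fin.cons u y i = u + ∑ i ∈ S, y i := by
          rw [← hsum_erase, ← Finset.add_sum_erase T _ h0, Fin.cons_zero]
        rw [hsplit, hc1]
        split_ifs at hbS with hbr
        · -- S.card ≤ m - j, so m*u ≤ j ≤ m - S.card
          have hcast : (S.card : ℝ) + (j:ℝ) ≤ (m:ℝ) := by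
            exact_mod_cast (show S.card + j ≤ m by omega)
          have hub : u ≤ ((m:ℝ) - S.card) / (m:ℝ) := by
            rw [le_div_iff₀ hm0]
            nlinarith
          have hAs : A m (S.card + 1) / (m:ℝ)
              = A m S.card / (m:ℝ) + ((m:ℝ) - S.card) / (m:ℝ) := by
            rw [A_succ, add_div]
          rw [hAs]
          rw [inv_mul_eq_div] at hbS
          linarith
        · have heq : (m:ℝ)⁻¹ * (A m (S.card+1) - (m:ℝ)*u) = A m (S.card+1)/(m:ℝ) - u := by
            field_simp
          rw [heq] at hbS
          linarith
      · have hTe : T.erase 0 = T := Finset.erase_eq_of_notMem h0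
        have hc1 : T.card = S.card := by rw [hScard, hTe]
        have hsplit : ∑ i ∈ T, Fin.cons u y i = ∑ i ∈ S, y i := by
          rw [← hsum_erase, hTe]
        rw [hsplit, hc1]
        split_ifs at hbS with hbr
        · rw [inv_mul_eq_div] at hbS
          exact hbS
        · -- S.card > m - j : A (k+1) - m u ≤ A k
          have hcast : (m:ℝ) + 1 ≤ (S.card:ℝ) + (j:ℝ) := by
            exact_mod_cast (show m + 1 ≤ S.card + j by omega)
          rw [A_succ] at hbS
          have h2 : (m:ℝ) - S.card ≤ (m:ℝ)*u := by linarith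
          calc ∑ i ∈ S, y i
              ≤ (m:ℝ)⁻¹ * (A m S.card + ((m:ℝ) - S.card) - (m:ℝ)*u) := hbS
            _ ≤ (m:ℝ)⁻¹ * A m S.card := by
                apply mul_le_mul_of_nonneg_left ?_ (by positivity)
                linarith
            _ = A m S.card / (m:ℝ) := inv_mul_eq_div _ _
end

section
/- For n ≥ 2, every point u ∈ Π_n satisfies ‖u − (1/2)𝟙_n‖_2 ≤ √( n(n+1) / (12(n−1)) ), where 𝟙_n is the vector of ones and ‖·‖_2 is the Euclidean norm; moreover equality holds at each vertex of Π_n, i.e., at each permutation of (1, (n−2)/(n−1), …, 1/(n−1), 0). -/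
/-- The permutohedron `P_n(x)` in Euclidean space: the convex hull of all vectors
obtained from `x` by permuting its coordinates. -/
noncomputable def permutohedronE (n : ℕ) (x : EuclideanSpace ℝ (Fin n)) :
    Set (EuclideanSpace ℝ (Fin n)) :=
  convexHull ℝ {y | ∃ σ : Equiv.Perm (Fin n), ∀ i, y i = x (σ i)}

lemma sumid' (n : ℕ) : ∑ i ∈ Finset.range n, (i : ℝ) = n * (n - 1) / 2 := by
  induction n with
  | zero => simp
  | succ m ih => rw [Finset.sum_range_succ, ih]; push_cast; ring

lemma sumsq' (n : ℕ) : ∑ i ∈ Finset.range n, (i : ℝ) ^ 2 = n * (n - 1) * (2 * n - 1) / 6 := by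
  induction n with
  | zero => simp
  | succ m ih => rw [Finset.sum_range_succ, ih]; push_cast; ring

lemma keySum (n : ℕ) (hn : 2 ≤ n) :
    ∑ i ∈ Finset.range n, (((n : ℝ) - 1 - i) / ((n : ℝ) - 1) - 1 / 2) ^ 2
      = (n : ℝ) * ((n : ℝ) + 1) / (12 * ((n : ℝ) - 1)) := by
  have hd : (n : ℝ) - 1 ≠ 0 := by
    have : (2 : ℝ) ≤ n := by exact_mod_cast hn
    nlinarith
  have h : ∀ i ∈ Finset.range n,
      (((n : ℝ) - 1 - i) / ((n : ℝ) - 1) - 1 / 2) ^ 2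
        = 1 / 4 - (i : ℝ) / ((n : ℝ) - 1) + (i : ℝ) ^ 2 / ((n : ℝ) - 1) ^ 2 := by
    intro i _
    field_simp
    ring
  rw [Finset.sum_congr rfl h, Finset.sum_add_distrib, Finset.sum_sub_distrib]
  simp only [← Finset.sum_div]
  rw [sumid', sumsq', Finset.sum_const, Finset.card_range]
  field_simp
  ring

lemma vertexNorm (n : ℕ) (hn : 2 ≤ n) (σ : Equiv.Perm (Fin n)) :
    ‖(WithLp.equiv 2 (Fin n → ℝ)).symm
          (fun i => ((n : ℝ) - 1 - ((σ i : Fin n) : ℕ)) / ((n : ℝ) - 1))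
        - (WithLp.equiv 2 (Fin n → ℝ)).symm (fun _ => 1 / 2)‖
      = Real.sqrt ((n : ℝ) * ((n : ℝ) + 1) / (12 * ((n : ℝ) - 1))) := by
  rw [EuclideanSpace.norm_eq]
  congr 1
  have : ∀ i : Fin n,
      ((WithLp.equiv 2 (Fin n → ℝ)).symm
          (fun i => ((n : ℝ) - 1 - ((σ i : Fin n) : ℕ)) / ((n : ℝ) - 1))
        - (WithLp.equiv 2 (Fin n → ℝ)).symm (fun _ => 1 / 2)) i
        = ((n : ℝ) - 1 - ((σ i : Fin n) : ℕ)) / ((n : ℝ) - 1) - 1 / 2 := fun i => rfl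
  simp only [this, Real.norm_eq_abs, sq_abs]
  rw [show (∑ i : Fin n, (((n : ℝ) - 1 - ((σ i : Fin n) : ℕ)) / ((n : ℝ) - 1) - 1 / 2) ^ 2)
      = ∑ i : Fin n, (((n : ℝ) - 1 - (i : ℕ)) / ((n : ℝ) - 1) - 1 / 2) ^ 2 from
    Equiv.sum_comp σ (fun i => (((n : ℝ) - 1 - (i : ℕ)) / ((n : ℝ) - 1) - 1 / 2) ^ 2)]
  rw [Fin.sum_univ_eq_sum_range (fun k => (((n : ℝ) - 1 - k) / ((n : ℝ) - 1) - 1 / 2) ^ 2)]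
  exact keySum n hn

/-- every `u ∈ Π_n = P_n(1, (n-2)/(n-1), …, 1/(n-1), 0)` satisfies
`‖u - (1/2)𝟙_n‖₂ ≤ √(n(n+1)/(12(n-1)))`, with equality at each vertex of `Π_n`,
i.e. at each permutation of the generating vector. -/
theorem stmt12 (n : ℕ) (hn : 2 ≤ n) :
    (∀ u ∈ permutohedronE n
        ((WithLp.equiv 2 (Fin n → ℝ)).symm fun i => ((n : ℝ) - 1 - (i : ℕ)) / ((n : ℝ) - 1)),
      ‖u - (WithLp.equiv 2 (Fin n → ℝ)).symm (fun _ => 1 / 2)‖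
        ≤ Real.sqrt ((n : ℝ) * ((n : ℝ) + 1) / (12 * ((n : ℝ) - 1)))) ∧
    (∀ σ : Equiv.Perm (Fin n),
      ‖(WithLp.equiv 2 (Fin n → ℝ)).symm
            (fun i => ((n : ℝ) - 1 - ((σ i : Fin n) : ℕ)) / ((n : ℝ) - 1))
          - (WithLp.equiv 2 (Fin n → ℝ)).symm (fun _ => 1 / 2)‖
        = Real.sqrt ((n : ℝ) * ((n : ℝ) + 1) / (12 * ((n : ℝ) - 1)))) := by
  refine ⟨?_, vertexNorm n hn⟩
  intro u hu
  set c : EuclideanSpace ℝ (Fin n) := (WithLp.equiv 2 (Fin n → ℝ)).symm (fun _ => 1 / 2)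
  set R := Real.sqrt ((n : ℝ) * ((n : ℝ) + 1) / (12 * ((n : ℝ) - 1)))
  have hsub : permutohedronE n
      ((WithLp.equiv 2 (Fin n → ℝ)).symm fun i => ((n : ℝ) - 1 - (i : ℕ)) / ((n : ℝ) - 1))
      ⊆ Metric.closedBall c R := by
    apply convexHull_min _ (convex_closedBall c R)
    rintro y ⟨σ, hy⟩
    have hy' : y = (WithLp.equiv 2 (Fin n → ℝ)).symm
        (fun i => ((n : ℝ) - 1 - ((σ i : Fin n) : ℕ)) / ((n : ℝ) - 1)) := by
      ext i
      exact hy i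
    rw [Metric.mem_closedBall, dist_eq_norm, hy']
    exact le_of_eq (vertexNorm n hn σ)
  have := hsub hu
  rwa [Metric.mem_closedBall, dist_eq_norm] at this
end

section
/- Let α > 0, β > 0, let 0 ≤ u_(1) ≤ … ≤ u_(n) ≤ 1 be the order statistics of points u_1, …, u_n in [0,1], and let G_n be their empirical distribution function. Then ∫_0^1 (G_n(t) − t)² t^{α−1} (1−t)^{β−1} dt = (1/n) Σ_{j=1}^n [ 2 B(u_(j); α+1, β) − ((2j−1)/n) B(u_(j); α, β) ] + B(α, β+2), where B(x; a, c) = ∫_0^x t^{a−1}(1−t)^{c−1} dt is the incomplete beta function and B(a, c) = B(1; a, c). -/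
open MeasureTheory Set intervalIntegral


noncomputable def incBeta (x a c : ℝ) : ℝ :=
  ∫ t in (0 : ℝ)..x, t ^ (a - 1) * (1 - t) ^ (c - 1)

open MeasureTheory Set intervalIntegral

lemma psiInt {a c : ℝ} (ha : 0 < a) (hc : 0 < c) :
    IntervalIntegrable (fun t : ℝ => t ^ (a-1) * (1-t) ^ (c-1)) volume 0 1 := by
  have h1 : IntervalIntegrable (fun t : ℝ => t ^ (a-1) * (1-t) ^ (c-1)) volume 0 (1/2) := by
    apply (intervalIntegrable_rpow' (by linarith : (-1:ℝ) < a - 1)).mul_continuousOn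
    apply ContinuousOn.rpow_const (by fun_prop)
    intro x hx
    left
    rw [uIcc_of_le (by norm_num)] at hx
    have := hx.2
    intro h; nlinarith [hx.2]
  have h2 : IntervalIntegrable (fun t : ℝ => t ^ (a-1) * (1-t) ^ (c-1)) volume (1/2) 1 := by
    have hb : IntervalIntegrable (fun t : ℝ => (1-t) ^ (c-1)) volume (1/2) 1 := by
      have := (intervalIntegrable_rpow' (by linarith : (-1:ℝ) < c - 1) (a := 0) (b := 1/2)).comp_sub_left 1
      norm_num at this
      exact this.symm
    apply hb.continuousOn_mul
    apply ContinuousOn.rpow_const (by fun_prop)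
    intro x hx
    left
    rw [uIcc_of_le (by norm_num)] at hx
    intro h; rw [h] at hx; norm_num at hx
  exact h1.trans h2

lemma indEq (x : ℝ) (ψ : ℝ → ℝ) :
    (fun t : ℝ => (if x ≤ t then (1:ℝ) else 0) * ψ t) = (Ici x).indicator ψ := by
  funext t
  by_cases h : x ≤ t <;> simp [Set.indicator_apply, Set.mem_Ici, h]

lemma indInt {a c : ℝ} (ha : 0 < a) (hc : 0 < c) (x : ℝ) :
    IntervalIntegrable
      (fun t : ℝ => (if x ≤ t then (1:ℝ) else 0) * (t ^ (a-1) * (1-t) ^ (c-1)))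
      volume 0 1 := by
  rw [indEq, intervalIntegrable_iff]
  exact ((intervalIntegrable_iff.mp (psiInt ha hc)).indicator measurableSet_Ici)

lemma indIntegral {a c : ℝ} (ha : 0 < a) (hc : 0 < c) {x : ℝ} (hx0 : 0 ≤ x) (hx1 : x ≤ 1) :
    ∫ t in (0:ℝ)..1, (if x ≤ t then (1:ℝ) else 0) * (t ^ (a-1) * (1-t) ^ (c-1))
      = incBeta 1 a c - incBeta x a c := by
  set ψ : ℝ → ℝ := fun t => t ^ (a-1) * (1-t) ^ (c-1) with hψ
  have hsub1 : IntervalIntegrable (fun t => (if x ≤ t then (1:ℝ) else 0) * ψ t) volume 0 x :=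
    (indInt ha hc x).mono_set (by rw [uIcc_of_le hx0, uIcc_of_le (by norm_num)]; exact Icc_subset_Icc le_rfl hx1)
  have hsub2 : IntervalIntegrable (fun t => (if x ≤ t then (1:ℝ) else 0) * ψ t) volume x 1 :=
    (indInt ha hc x).mono_set (by rw [uIcc_of_le hx1, uIcc_of_le (by norm_num)]; exact Icc_subset_Icc hx0 le_rfl)
  have hψ1 : IntervalIntegrable ψ volume 0 x :=
    (psiInt ha hc).mono_set (by rw [uIcc_of_le hx0, uIcc_of_le (by norm_num)]; exact Icc_subset_Icc le_rfl hx1)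
  have hψ2 : IntervalIntegrable ψ volume x 1 :=
    (psiInt ha hc).mono_set (by rw [uIcc_of_le hx1, uIcc_of_le (by norm_num)]; exact Icc_subset_Icc hx0 le_rfl)
  have h0 : ∫ t in (0:ℝ)..x, (if x ≤ t then (1:ℝ) else 0) * ψ t = 0 := by
    have key : (∫ t in (0:ℝ)..x, (if x ≤ t then (1:ℝ) else 0) * ψ t) = ∫ t in (0:ℝ)..x, (0:ℝ) := by
      apply intervalIntegral.integral_congr_ae
      have hne : ∀ᵐ t : ℝ ∂volume, t ≠ x := by
        rw [MeasureTheory.ae_iff]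
        convert Real.volume_singleton (a := x) using 2
        ext t; simp
      filter_upwards [hne] with t ht hmem
      rw [Set.uIoc_of_le hx0] at hmem
      have : ¬ x ≤ t := fun h => ht (le_antisymm hmem.2 h)
      simp [this]
    simpa using key
  have h1 : ∫ t in x..1, (if x ≤ t then (1:ℝ) else 0) * ψ t = ∫ t in x..1, ψ t := by
    apply integral_congr
    intro t ht
    rw [uIcc_of_le hx1] at ht
    simp [ht.1]
  have hadd : (∫ t in (0:ℝ)..x, ψ t) + ∫ t in x..1, ψ t = ∫ t in (0:ℝ)..1, ψ t :=
    integral_add_adjacent_intervals hψ1 hψ2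
  have hadd2 := integral_add_adjacent_intervals hsub1 hsub2
  rw [← hadd2, h0, h1, zero_add]
  have : incBeta x a c = ∫ t in (0:ℝ)..x, ψ t := rfl
  have h2 : incBeta 1 a c = ∫ t in (0:ℝ)..1, ψ t := rfl
  rw [this, h2, ← hadd]; ring

lemma sumMax (f : ℕ → ℝ) : ∀ n : ℕ,
    (∑ i ∈ Finset.range n, ∑ j ∈ Finset.range n, f (max i j))
      = ∑ k ∈ Finset.range n, (2 * (k:ℝ) + 1) * f k := by
  intro n
  induction n with
  | zero => simp
  | succ n ih =>
    rw [Finset.sum_range_succ (f := fun i => ∑ j ∈ Finset.range (n+1), f (max i j)),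
        Finset.sum_range_succ (f := fun k => (2 * (k:ℝ) + 1) * f k)]
    have hlast : ∑ j ∈ Finset.range (n+1), f (max n j) = (n+1 : ℝ) * f n := by
      rw [Finset.sum_congr rfl (fun j hj => by
        rw [max_eq_left (Nat.le_of_lt_succ (Finset.mem_range.mp hj))]),
        Finset.sum_const, Finset.card_range]
      push_cast; ring
    have hinner : ∀ i ∈ Finset.range n,
        (∑ j ∈ Finset.range (n+1), f (max i j)) = (∑ j ∈ Finset.range n, f (max i j)) + f n := by
      intro i hi
      rw [Finset.sum_range_succ]
      congr 1
      rw [max_eq_right (le_of_lt (Finset.mem_range.mp hi))]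
    rw [Finset.sum_congr rfl hinner, Finset.sum_add_distrib, ih, Finset.sum_const,
        Finset.card_range, hlast]
    push_cast; ring

lemma betaConst {a c : ℝ} (ha : 0 < a) (hc : 0 < c) :
    incBeta 1 a (c + 2)
      = incBeta 1 a c - 2 * incBeta 1 (a+1) c + incBeta 1 (a+2) c := by
  have i1 := psiInt ha hc
  have i2 := psiInt (by linarith : (0:ℝ) < a+1) hc
  have i3 := psiInt (by linarith : (0:ℝ) < a+2) hc
  have key : incBeta 1 a (c+2)
      = ∫ t in (0:ℝ)..1, (t ^ (a-1) * (1-t) ^ (c-1) - 2 * (t ^ (a+1-1) * (1-t) ^ (c-1))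
          + t ^ (a+2-1) * (1-t) ^ (c-1)) := by
    apply intervalIntegral.integral_congr_ae
    have hne : ∀ᵐ t : ℝ ∂volume, t ≠ 1 := by
      rw [MeasureTheory.ae_iff]
      convert Real.volume_singleton (a := (1:ℝ)) using 2
      ext t; simp
    filter_upwards [hne] with t ht hmem
    rw [Set.uIoc_of_le (by norm_num : (0:ℝ) ≤ 1)] at hmem
    have ht0 : (0:ℝ) < t := hmem.1
    have ht1 : t < 1 := lt_of_le_of_ne hmem.2 ht
    have h1t : (0:ℝ) < 1 - t := by linarith
    have e1 : t ^ (a+1-1) = t ^ (a-1) * t := by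
      rw [show a+1-1 = (a-1)+1 by ring, Real.rpow_add_one (ne_of_gt ht0)]
    have e2 : t ^ (a+2-1) = t ^ (a-1) * t^2 := by
      rw [show a+2-1 = (a-1)+2 by ring, Real.rpow_add ht0, Real.rpow_two]
    have e3 : (1-t) ^ (c+2-1) = (1-t) ^ (c-1) * (1-t)^2 := by
      rw [show c+2-1 = (c-1)+2 by ring, Real.rpow_add h1t, Real.rpow_two]
    rw [e1, e2, e3]; ring
  rw [key, intervalIntegral.integral_add (i1.sub (i2.const_mul 2)) i3,
      intervalIntegral.integral_sub i1 (i2.const_mul 2), intervalIntegral.integral_const_mul]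
  rfl

lemma intSum {ι : Type*} (s : Finset ι) (f : ι → ℝ → ℝ)
    (h : ∀ i ∈ s, IntervalIntegrable (f i) volume 0 1) :
    IntervalIntegrable (fun t => ∑ i ∈ s, f i t) volume 0 1 := by
  classical
  induction s using Finset.induction with
  | empty => simpa using intervalIntegrable_const (c := (0:ℝ))
  | insert _ _ hx ih =>
    simp only [Finset.sum_insert hx]
    exact (h _ (Finset.mem_insert_self _ _)).add
      (ih fun i hi => h i (Finset.mem_insert_of_mem hi))

/-- for `α, β > 0` and sorted points `0 ≤ u_(1) ≤ … ≤ u_(n) ≤ 1` with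
empirical d.f. `G_n`,
`∫₀¹ (G_n(t) - t)² t^{α-1} (1-t)^{β-1} dt
  = (1/n) ∑_j [2 B(u_(j); α+1, β) - ((2j-1)/n) B(u_(j); α, β)] + B(α, β+2)`. -/
theorem stmt17 (n : ℕ) (hn : 1 ≤ n) (α β : ℝ) (hα : 0 < α) (hβ : 0 < β)
    (u : Fin n → ℝ) (hmono : Monotone u) (hmem : ∀ i, u i ∈ Set.Icc (0 : ℝ) 1) :
    ∫ t in (0 : ℝ)..1,
        (((n : ℝ)⁻¹ * ∑ i : Fin n, (if u i ≤ t then (1 : ℝ) else 0)) - t) ^ 2 *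
          (t ^ (α - 1) * (1 - t) ^ (β - 1))
      = (n : ℝ)⁻¹ * (∑ j : Fin n,
            (2 * incBeta (u j) (α + 1) β
              - ((2 * ((j : ℕ) : ℝ) + 1) / (n : ℝ)) * incBeta (u j) α β))
        + incBeta 1 α (β + 2) := by
  have hn0 : (n:ℝ) ≠ 0 := Nat.cast_ne_zero.mpr (by omega)
  set w : ℕ → ℝ := fun k => u ⟨min k (n-1), by omega⟩ with hwdef
  have hw : ∀ i : Fin n, w i.val = u i := by
    intro i
    have : min i.val (n-1) = i.val := min_eq_left (by omega)
    simp only [hwdef]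
    congr 1
    exact Fin.ext this
  have hwmono : Monotone w := by
    intro a b hab
    exact hmono (by simp [Fin.mk_le_mk]; omega)
  have hw01 : ∀ k, 0 ≤ w k ∧ w k ≤ 1 := by
    intro k
    exact ⟨(hmem _).1, (hmem _).2⟩
  have hα1 : (0:ℝ) < α + 1 := by linarith
  have hα2 : (0:ℝ) < α + 2 := by linarith
  -- pointwise rewriting of the integrand
  have hint : (∫ t in (0:ℝ)..1,
        (((n : ℝ)⁻¹ * ∑ i : Fin n, (if u i ≤ t then (1 : ℝ) else 0)) - t) ^ 2 *
          (t ^ (α - 1) * (1 - t) ^ (β - 1)))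
      = ∫ t in (0:ℝ)..1,
          ((n:ℝ)⁻¹ * (n:ℝ)⁻¹ *
              (∑ i ∈ Finset.range n, ∑ j ∈ Finset.range n,
                (if w (max i j) ≤ t then (1:ℝ) else 0) * (t ^ (α-1) * (1-t) ^ (β-1)))
            - (2 * (n:ℝ)⁻¹) *
              (∑ k ∈ Finset.range n,
                (if w k ≤ t then (1:ℝ) else 0) * (t ^ (α+1-1) * (1-t) ^ (β-1)))
            + t ^ (α+2-1) * (1-t) ^ (β-1)) := by
    apply intervalIntegral.integral_congr_ae
    have hne : ∀ᵐ t : ℝ ∂volume, t ≠ 1 := by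
      rw [MeasureTheory.ae_iff]
      convert Real.volume_singleton (a := (1:ℝ)) using 2
      ext t; simp
    filter_upwards [hne] with t ht1 hmem'
    rw [Set.uIoc_of_le (by norm_num : (0:ℝ) ≤ 1)] at hmem'
    have ht0 : (0:ℝ) < t := hmem'.1
    have htlt : t < 1 := lt_of_le_of_ne hmem'.2 ht1
    have hfin : (∑ i : Fin n, (if u i ≤ t then (1:ℝ) else 0))
        = ∑ k ∈ Finset.range n, (if w k ≤ t then (1:ℝ) else 0) := by
      rw [← Fin.sum_univ_eq_sum_range (fun k => if w k ≤ t then (1:ℝ) else 0) n]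
      exact Finset.sum_congr rfl fun i _ => by rw [hw i]
    rw [hfin]
    have e1 : t ^ (α+1-1) * (1-t) ^ (β-1) = t * (t ^ (α-1) * (1-t) ^ (β-1)) := by
      rw [show α+1-1 = (α-1)+1 by ring, Real.rpow_add_one (ne_of_gt ht0)]; ring
    have e2 : t ^ (α+2-1) * (1-t) ^ (β-1) = t^2 * (t ^ (α-1) * (1-t) ^ (β-1)) := by
      rw [show α+2-1 = (α-1)+2 by ring, Real.rpow_add ht0, Real.rpow_two]; ring
    have hAA : (∑ k ∈ Finset.range n, (if w k ≤ t then (1:ℝ) else 0)) *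
          (∑ k ∈ Finset.range n, (if w k ≤ t then (1:ℝ) else 0))
        = ∑ i ∈ Finset.range n, ∑ j ∈ Finset.range n,
            (if w (max i j) ≤ t then (1:ℝ) else 0) := by
      rw [Finset.sum_mul_sum]
      refine Finset.sum_congr rfl fun i _ => Finset.sum_congr rfl fun j _ => ?_
      rw [hwmono.map_max]
      by_cases h1 : w i ≤ t <;> by_cases h2 : w j ≤ t <;> simp [h1, h2, max_le_iff]
    have hs1 : (∑ i ∈ Finset.range n, ∑ j ∈ Finset.range n,
          (if w (max i j) ≤ t then (1:ℝ) else 0) * (t ^ (α-1) * (1-t) ^ (β-1)))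
        = (∑ i ∈ Finset.range n, ∑ j ∈ Finset.range n,
            (if w (max i j) ≤ t then (1:ℝ) else 0)) * (t ^ (α-1) * (1-t) ^ (β-1)) := by
      simp only [Finset.sum_mul]
    have hs2 : (∑ k ∈ Finset.range n,
          (if w k ≤ t then (1:ℝ) else 0) * (t ^ (α+1-1) * (1-t) ^ (β-1)))
        = (∑ k ∈ Finset.range n, (if w k ≤ t then (1:ℝ) else 0))
            * (t ^ (α+1-1) * (1-t) ^ (β-1)) := by
      simp only [Finset.sum_mul]
    rw [hs1, hs2, ← hAA, e1, e2]
    ring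
  rw [hint]
  -- integrability of the three pieces
  have I1 : IntervalIntegrable (fun t => ∑ i ∈ Finset.range n, ∑ j ∈ Finset.range n,
      (if w (max i j) ≤ t then (1:ℝ) else 0) * (t ^ (α-1) * (1-t) ^ (β-1))) volume 0 1 :=
    intSum _ _ fun i _ => intSum _ _ fun j _ => indInt hα hβ _
  have I2 : IntervalIntegrable (fun t => ∑ k ∈ Finset.range n,
      (if w k ≤ t then (1:ℝ) else 0) * (t ^ (α+1-1) * (1-t) ^ (β-1))) volume 0 1 :=
    intSum _ _ fun k _ => indInt hα1 hβ _
  have I3 : IntervalIntegrable (fun t : ℝ => t ^ (α+2-1) * (1-t) ^ (β-1)) volume 0 1 :=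
    psiInt hα2 hβ
  rw [intervalIntegral.integral_add ((I1.const_mul _).sub (I2.const_mul _)) I3,
      intervalIntegral.integral_sub (I1.const_mul _) (I2.const_mul _),
      intervalIntegral.integral_const_mul, intervalIntegral.integral_const_mul]
  have h3 : (∫ t in (0:ℝ)..1, t ^ (α+2-1) * (1-t) ^ (β-1)) = incBeta 1 (α+2) β := rfl
  have h1 : (∫ t in (0:ℝ)..1, ∑ i ∈ Finset.range n, ∑ j ∈ Finset.range n,
        (if w (max i j) ≤ t then (1:ℝ) else 0) * (t ^ (α-1) * (1-t) ^ (β-1)))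
      = ∑ i ∈ Finset.range n, ∑ j ∈ Finset.range n,
          (incBeta 1 α β - incBeta (w (max i j)) α β) := by
    rw [intervalIntegral.integral_finset_sum
        (fun i _ => intSum _ _ fun j _ => indInt hα hβ _)]
    refine Finset.sum_congr rfl fun i _ => ?_
    rw [intervalIntegral.integral_finset_sum (fun j _ => indInt hα hβ _)]
    exact Finset.sum_congr rfl fun j _ =>
      indIntegral hα hβ (hw01 _).1 (hw01 _).2
  have h2 : (∫ t in (0:ℝ)..1, ∑ k ∈ Finset.range n,
        (if w k ≤ t then (1:ℝ) else 0) * (t ^ (α+1-1) * (1-t) ^ (β-1)))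
      = ∑ k ∈ Finset.range n, (incBeta 1 (α+1) β - incBeta (w k) (α+1) β) := by
    rw [intervalIntegral.integral_finset_sum (fun k _ => indInt hα1 hβ _)]
    exact Finset.sum_congr rfl fun k _ =>
      indIntegral hα1 hβ (hw01 _).1 (hw01 _).2
  rw [h1, h2, h3]
  -- sums algebra
  have hM : (∑ i ∈ Finset.range n, ∑ j ∈ Finset.range n,
        (incBeta 1 α β - incBeta (w (max i j)) α β))
      = (n:ℝ) * (n:ℝ) * incBeta 1 α β
        - ∑ k ∈ Finset.range n, (2 * (k:ℝ) + 1) * incBeta (w k) α β := by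
    simp only [Finset.sum_sub_distrib, Finset.sum_const, Finset.card_range, nsmul_eq_mul]
    rw [sumMax (fun m => incBeta (w m) α β) n]
    ring
  have hK : (∑ k ∈ Finset.range n, (incBeta 1 (α+1) β - incBeta (w k) (α+1) β))
      = (n:ℝ) * incBeta 1 (α+1) β - ∑ k ∈ Finset.range n, incBeta (w k) (α+1) β := by
    simp only [Finset.sum_sub_distrib, Finset.sum_const, Finset.card_range, nsmul_eq_mul]
  have hRHS : (∑ j : Fin n, (2 * incBeta (u j) (α + 1) β
        - ((2 * ((j : ℕ) : ℝ) + 1) / (n : ℝ)) * incBeta (u j) α β))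
      = 2 * (∑ k ∈ Finset.range n, incBeta (w k) (α+1) β)
        - (n:ℝ)⁻¹ * ∑ k ∈ Finset.range n, (2 * (k:ℝ) + 1) * incBeta (w k) α β := by
    have e : (∑ j : Fin n, (2 * incBeta (u j) (α + 1) β
          - ((2 * ((j : ℕ) : ℝ) + 1) / (n : ℝ)) * incBeta (u j) α β))
        = ∑ j : Fin n, (2 * incBeta (w j.val) (α + 1) β
          - ((2 * ((j.val : ℕ) : ℝ) + 1) / (n : ℝ)) * incBeta (w j.val) α β) :=
      Finset.sum_congr rfl fun i _ => by rw [hw i]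
    rw [e, Fin.sum_univ_eq_sum_range (fun k => 2 * incBeta (w k) (α+1) β
        - ((2*(k:ℝ)+1)/(n:ℝ)) * incBeta (w k) α β) n, Finset.sum_sub_distrib]
    congr 1
    · rw [Finset.mul_sum]
    · rw [Finset.mul_sum]
      exact Finset.sum_congr rfl fun k _ => by ring
  rw [hM, hK, hRHS, betaConst hα hβ]
  field_simp
  ring
end
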